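/- arXiv:1107.4532 — 7 statements merged into one kernel-verified Lean document; each statement's English description precedes it below -/
import Mathlib

section
/- Let C be a closed cone in a real Banach space X and let f : C → C be a continuous homogeneous order-preserving map. If there exist a > 0 and v ∈ C with v ≠ 0 such that a·v ≤ f(v), then a ≤ r_C(f). -/
open Filter Topology Set

noncomputable section

variable {X : Type*} [NormedAddCommGroup X] [NormedSpace ℝ X] [CompleteSpace X]

/-- `C` is a closed cone in `X`: closed, convex, invariant under nonnegative scaling,
and `C ∩ (-C) = {0}`. -/
def IsClosedCone (C : Set X) : Prop :=
  IsClosed C ∧ Convex ℝ C ∧ (∀ a : ℝ, 0 ≤ a → ∀ x ∈ C, a • x ∈ C) ∧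
    ∀ x ∈ C, -x ∈ C → x = 0

/-- The partial order induced by the cone `C`: `x ≤ y` iff `y - x ∈ C`. -/
def coneLE (C : Set X) (x y : X) : Prop := y - x ∈ C

/-- `f` is homogeneous of degree one on `C`. -/
def IsHomog (C : Set X) (f : X → X) : Prop :=
  ∀ a : ℝ, 0 ≤ a → ∀ x ∈ C, f (a • x) = a • f x

/-- `f` is order-preserving on `C` with respect to the cone order. -/
def IsOrdPres (C : Set X) (f : X → X) : Prop :=
  ∀ x ∈ C, ∀ y ∈ C, coneLE C x y → coneLE C (f x) (f y)

/-- The cone spectral radius `r_C(f) = sup_{x ∈ C} limsup_k ‖f^k(x)‖^{1/k}`. -/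
def coneSpecRad (C : Set X) (f : X → X) : ℝ :=
  sSup {r : ℝ | ∃ x ∈ C, r = Filter.limsup (fun k : ℕ => ‖f^[k] x‖ ^ ((k : ℝ)⁻¹)) Filter.atTop}

/-- `c ^ (1/k) → 1` for `c > 0`. -/
lemma aux_tendsto_rpow_inv (c : ℝ) (hc : 0 < c) :
    Tendsto (fun k : ℕ => c ^ ((k : ℝ)⁻¹)) atTop (𝓝 1) := by
  have h1 : Tendsto (fun k : ℕ => ((k : ℝ))⁻¹) atTop (𝓝 0) :=
    tendsto_inv_atTop_zero.comp tendsto_natCast_atTop_atTop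
  have h2 : Tendsto (fun k : ℕ => Real.exp (Real.log c * ((k : ℝ))⁻¹)) atTop (𝓝 1) := by
    have := (Real.continuous_exp.tendsto (Real.log c * 0)).comp (h1.const_mul (Real.log c))
    simpa [Function.comp_def] using this
  refine h2.congr (fun k => ?_)
  rw [← Real.rpow_def_of_pos hc]

/-- If `f : C → C` is a continuous homogeneous order-preserving map on a closed cone `C`
and `a • v ≤ f v` for some `a > 0` and `v ∈ C \ {0}`, then `a ≤ r_C(f)`. -/
theorem le_coneSpecRad_of_coneLE_smul
    (C : Set X) (hC : IsClosedCone C) (f : X → X)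
    (hfC : Set.MapsTo f C C) (hcont : ContinuousOn f C)
    (hhom : IsHomog C f) (hord : IsOrdPres C f)
    (a : ℝ) (ha : 0 < a) (v : X) (hv : v ∈ C) (hv0 : v ≠ 0)
    (h : coneLE C (a • v) (f v)) :
    a ≤ coneSpecRad C f := by
  obtain ⟨hCcl, hCconv, hCsmul, hCpt⟩ := hC
  have h0C : (0 : X) ∈ C := by simpa using hCsmul 0 le_rfl v hv
  -- C is closed under addition
  have hadd : ∀ x ∈ C, ∀ y ∈ C, x + y ∈ C := by
    intro x hx y hy
    have h1 : (1/2 : ℝ) • x + (1/2 : ℝ) • y ∈ C :=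
      hCconv hx hy (by norm_num) (by norm_num) (by norm_num)
    have h2 := hCsmul 2 (by norm_num) _ h1
    simpa [smul_add, smul_smul] using h2
  -- f 0 = 0
  have hf0 : f 0 = 0 := by
    have := hhom 0 le_rfl 0 h0C
    simpa using this
  -- linear bound on f from continuity at 0
  obtain ⟨δ, hδ, hδ1⟩ : ∃ δ > 0, ∀ y ∈ C, dist y 0 < δ → dist (f y) (f 0) < 1 := by
    have := (hcont 0 h0C)
    rw [Metric.continuousWithinAt_iff] at this
    obtain ⟨δ, hδ, hd⟩ := this 1 one_pos
    exact ⟨δ, hδ, fun y hy hyd => hd hy hyd⟩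
  set M : ℝ := 2 / δ with hM
  have hMpos : 0 < M := by positivity
  have hbound : ∀ x ∈ C, ‖f x‖ ≤ M * ‖x‖ := by
    intro x hx
    rcases eq_or_ne x 0 with rfl | hx0
    · simp [hf0]
    · have hxn : 0 < ‖x‖ := norm_pos_iff.2 hx0
      set y : X := (δ / (2 * ‖x‖)) • x with hy
      have hyC : y ∈ C := hCsmul _ (by positivity) x hx
      have hyn : ‖y‖ = δ / 2 := by
        rw [hy, norm_smul, Real.norm_eq_abs, abs_of_pos (by positivity)]
        field_simp
      have hfy : ‖f y‖ < 1 := by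
        have := hδ1 y hyC (by rw [dist_zero_right, hyn]; linarith)
        simpa [hf0, dist_zero_right] using this
      have hxy : x = (2 * ‖x‖ / δ) • y := by
        rw [hy, smul_smul]
        rw [show 2 * ‖x‖ / δ * (δ / (2 * ‖x‖)) = 1 by field_simp]
        simp
      have : f x = (2 * ‖x‖ / δ) • f y := by
        conv_lhs => rw [hxy]
        exact hhom _ (by positivity) y hyC
      rw [this, norm_smul, Real.norm_eq_abs, abs_of_pos (by positivity)]
      calc 2 * ‖x‖ / δ * ‖f y‖ ≤ 2 * ‖x‖ / δ * 1 := by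
            apply mul_le_mul_of_nonneg_left hfy.le (by positivity)
        _ = M * ‖x‖ := by rw [hM]; ring
  -- iterates stay in C with geometric norm bound
  have hitC : ∀ k (x : X), x ∈ C → f^[k] x ∈ C := fun k x hx => hfC.iterate k hx
  have hitbound : ∀ (x : X), x ∈ C → ∀ k, ‖f^[k] x‖ ≤ M ^ k * ‖x‖ := by
    intro x hx k
    induction k with
    | zero => simp
    | succ n ih =>
        rw [Function.iterate_succ_apply']
        calc ‖f (f^[n] x)‖ ≤ M * ‖f^[n] x‖ := hbound _ (hitC n x hx)
          _ ≤ M * (M ^ n * ‖x‖) := by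
              exact mul_le_mul_of_nonneg_left ih hMpos.le
          _ = M ^ (n + 1) * ‖x‖ := by ring
  set u : X → ℕ → ℝ := fun x k => ‖f^[k] x‖ ^ ((k : ℝ)⁻¹) with hu
  have hunonneg : ∀ x k, 0 ≤ u x k := fun x k => Real.rpow_nonneg (norm_nonneg _) _
  have hucobdd : ∀ x : X, Filter.IsCoboundedUnder (· ≤ ·) atTop (u x) :=
    fun x => Filter.isCoboundedUnder_le_of_le atTop (fun k => hunonneg x k)
  -- eventual upper bound by M * ‖x‖^(1/k)
  have hule : ∀ x ∈ C, ∀ k : ℕ, k ≠ 0 → u x k ≤ M * ‖x‖ ^ ((k : ℝ)⁻¹) := by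
    intro x hx k hk
    have h1 : u x k ≤ (M ^ k * ‖x‖) ^ ((k : ℝ)⁻¹) :=
      Real.rpow_le_rpow (norm_nonneg _) (hitbound x hx k) (by positivity)
    calc u x k ≤ (M ^ k * ‖x‖) ^ ((k : ℝ)⁻¹) := h1
      _ = (M ^ k) ^ ((k : ℝ)⁻¹) * ‖x‖ ^ ((k : ℝ)⁻¹) :=
          Real.mul_rpow (by positivity) (norm_nonneg _)
      _ = M * ‖x‖ ^ ((k : ℝ)⁻¹) := by
          rw [Real.pow_rpow_inv_natCast hMpos.le hk]
  -- each limsup is ≤ M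
  have hlimsuple : ∀ x ∈ C, Filter.limsup (u x) atTop ≤ M := by
    intro x hx
    rcases eq_or_ne x 0 with rfl | hx0
    · have hz : ∀ᶠ k : ℕ in atTop, u 0 k = 0 := by
        filter_upwards [eventually_ge_atTop 1] with k hk
        have : f^[k] (0 : X) = 0 := Function.iterate_fixed hf0 k
        rw [hu]; simp only [this, norm_zero]
        exact Real.zero_rpow (by positivity)
      have : Filter.limsup (u 0) atTop = 0 := by
        rw [Filter.limsup_congr hz]
        simp
      rw [this]; exact hMpos.le
    · have hxn : 0 < ‖x‖ := norm_pos_iff.2 hx0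
      have hW : Tendsto (fun k : ℕ => M * ‖x‖ ^ ((k : ℝ)⁻¹)) atTop (𝓝 M) := by
        have := (aux_tendsto_rpow_inv ‖x‖ hxn).const_mul M
        simpa using this
      refine le_of_forall_pos_le_add (fun ε hε => ?_)
      have hev : ∀ᶠ k : ℕ in atTop, u x k ≤ M + ε := by
        have h1 : ∀ᶠ k : ℕ in atTop, M * ‖x‖ ^ ((k : ℝ)⁻¹) < M + ε :=
          hW.eventually_lt_const (by linarith)
        filter_upwards [h1, eventually_ge_atTop 1] with k hk1 hk2
        exact le_trans (hule x hx k (by omega)) hk1.le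
      exact Filter.limsup_le_of_le (hucobdd x) hev
  -- the defining set, nonempty and bounded above
  set S : Set ℝ :=
    {r : ℝ | ∃ x ∈ C, r = Filter.limsup (fun k : ℕ => ‖f^[k] x‖ ^ ((k : ℝ)⁻¹)) Filter.atTop}
    with hS
  have hSbdd : BddAbove S := by
    refine ⟨M, fun r hr => ?_⟩
    obtain ⟨x, hx, rfl⟩ := hr
    exact hlimsuple x hx
  -- lower bound: a^k • v ≤ f^[k] v
  have hiter : ∀ k : ℕ, f^[k] v - (a ^ k) • v ∈ C := by
    intro k
    induction k with
    | zero => simpa using h0C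
    | succ n ih =>
        have h1 : f (f^[n] v) - f ((a ^ n) • v) ∈ C :=
          hord _ (hCsmul _ (by positivity) v hv) _ (hitC n v hv) ih
        have h2 : f ((a ^ n) • v) = (a ^ n) • f v := hhom _ (by positivity) v hv
        have h3 : (a ^ n) • (f v - a • v) ∈ C := hCsmul _ (by positivity) _ h
        have h4 := hadd _ h1 _ h3
        rw [Function.iterate_succ_apply']
        have : f (f^[n] v) - f (a ^ n • v) + a ^ n • (f v - a • v)
            = f (f^[n] v) - a ^ (n + 1) • v := by
          rw [h2, smul_sub, smul_smul]
          ring_nf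
          module
        rwa [this] at h4
  -- distance from -v to C is positive
  have hnv : -v ∉ C := fun hc => hv0 (hCpt v hv hc)
  have hδ0 : 0 < Metric.infDist (-v) C := by
    rw [← hCcl.notMem_iff_infDist_pos ⟨0, h0C⟩]
    exact hnv
  set δ0 : ℝ := Metric.infDist (-v) C with hδ0def
  -- norm lower bound on iterates at v
  have hlow : ∀ k : ℕ, a ^ k * δ0 ≤ ‖f^[k] v‖ := by
    intro k
    have hak : 0 < a ^ k := by positivity
    set c : X := f^[k] v - (a ^ k) • v with hc
    have hcC : c ∈ C := hiter k
    set d : X := (a ^ k)⁻¹ • c with hd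
    have hdC : d ∈ C := hCsmul _ (by positivity) _ hcC
    have hdist : δ0 ≤ dist (-v) d := Metric.infDist_le_dist_of_mem hdC
    have h1 : f^[k] v = (a ^ k) • (v + d) := by
      rw [hd, smul_add, smul_smul, mul_inv_cancel₀ hak.ne', one_smul, hc]
      abel
    rw [h1, norm_smul, Real.norm_eq_abs, abs_of_pos hak]
    have h2 : dist (-v) d = ‖v + d‖ := by
      rw [dist_eq_norm]
      rw [show -v - d = -(v + d) by abel, norm_neg]
    exact mul_le_mul_of_nonneg_left (by rw [← h2]; exact hdist) hak.le
  -- limsup at v is ≥ a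
  have hubddv : Filter.IsBoundedUnder (· ≤ ·) atTop (u v) := by
    have hW : Tendsto (fun k : ℕ => M * ‖v‖ ^ ((k : ℝ)⁻¹)) atTop (𝓝 M) := by
      have := (aux_tendsto_rpow_inv ‖v‖ (norm_pos_iff.2 hv0)).const_mul M
      simpa using this
    refine hW.isBoundedUnder_le.mono_le ?_
    filter_upwards [eventually_ge_atTop 1] with k hk
    exact hule v hv k (by omega)
  have hliminfge : a ≤ Filter.limsup (u v) atTop := by
    have hT : Tendsto (fun k : ℕ => a * δ0 ^ ((k : ℝ)⁻¹)) atTop (𝓝 a) := by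
      have := (aux_tendsto_rpow_inv δ0 hδ0).const_mul a
      simpa using this
    refine le_of_forall_pos_le_add (fun ε hε => ?_)
    have hfreq : ∃ᶠ k : ℕ in atTop, a - ε ≤ u v k := by
      apply Filter.Eventually.frequently
      have h1 : ∀ᶠ k : ℕ in atTop, a - ε < a * δ0 ^ ((k : ℝ)⁻¹) :=
        hT.eventually_const_lt (by linarith)
      filter_upwards [h1, eventually_ge_atTop 1] with k hk1 hk2
      have h3 : (a ^ k * δ0) ^ ((k : ℝ)⁻¹) ≤ u v k :=
        Real.rpow_le_rpow (by positivity) (hlow k) (by positivity)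
      have h4 : (a ^ k * δ0) ^ ((k : ℝ)⁻¹) = a * δ0 ^ ((k : ℝ)⁻¹) := by
        rw [Real.mul_rpow (by positivity) hδ0.le,
          Real.pow_rpow_inv_natCast ha.le (by omega)]
      linarith [h3, h4 ▸ h3]
    have := Filter.le_limsup_of_frequently_le hfreq hubddv
    linarith
  -- conclude
  have hmem : Filter.limsup (u v) atTop ∈ S := ⟨v, hv, rfl⟩
  calc a ≤ Filter.limsup (u v) atTop := hliminfge
    _ ≤ sSup S := le_csSup hSbdd hmem
end
end

section
/- Let C be a closed cone in a real Banach space X, let f : C → C be a continuous compact homogeneous order-preserving map, and for each k ≥ 1 let f_k : C → C be a continuous compact homogeneous order-preserving map with ‖f − f_k‖_C → 0 as k → ∞. Then limsup_{k→∞} r_C(f_k) ≤ r_C(f). -/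
open Filter Topology Set
set_option linter.unusedSectionVars false

noncomputable section

variable {X : Type*} [NormedAddCommGroup X] [NormedSpace ℝ X] [CompleteSpace X]

/-- `f` is a compact map on `C`: the image of every bounded subset of `C`
has compact closure. -/
def IsCompactMapOn (C : Set X) (f : X → X) : Prop :=
  ∀ D : Set X, D ⊆ C → Bornology.IsBounded D → IsCompact (closure (f '' D))

/-- The cone sup-norm `‖g‖_C = sup {‖g x‖ : x ∈ C, ‖x‖ ≤ 1}`. -/
def coneNorm (C : Set X) (g : X → X) : ℝ :=
  sSup {r : ℝ | ∃ x ∈ C, ‖x‖ ≤ 1 ∧ r = ‖g x‖}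

/-- The cone spectrum `σ_C(f) = {ρ ≥ 0 : f x = ρ • x for some x ∈ C, x ≠ 0}`. -/
def coneSpectrum (C : Set X) (f : X → X) : Set ℝ :=
  {ρ : ℝ | 0 ≤ ρ ∧ ∃ x ∈ C, x ≠ 0 ∧ f x = ρ • x}

/-- `f` has a continuous cone spectral radius: for every sequence of continuous compact
order-preserving homogeneous maps `f_k : C → C` with `‖f - f_k‖_C → 0`,
one has `r_C(f_k) → r_C(f)`. -/
def HasContinuousConeSpecRad (C : Set X) (f : X → X) : Prop :=
  ∀ fk : ℕ → X → X,
    (∀ k, Set.MapsTo (fk k) C C) →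
    (∀ k, ContinuousOn (fk k) C) →
    (∀ k, IsCompactMapOn C (fk k)) →
    (∀ k, IsHomog C (fk k)) →
    (∀ k, IsOrdPres C (fk k)) →
    Filter.Tendsto (fun k => coneNorm C (fun x => f x - fk k x)) Filter.atTop (nhds 0) →
    Filter.Tendsto (fun k => coneSpecRad C (fk k)) Filter.atTop (nhds (coneSpecRad C f))

namespace MPN

variable {C : Set X} {f g : X → X}

/-- the set whose sup is the cone norm -/
def NS (C : Set X) (g : X → X) : Set ℝ := {r : ℝ | ∃ x ∈ C, ‖x‖ ≤ 1 ∧ r = ‖g x‖}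

/-- the set whose sup is the cone spectral radius -/
def SS (C : Set X) (g : X → X) : Set ℝ :=
  {r : ℝ | ∃ x ∈ C, r = Filter.limsup (fun k : ℕ => ‖g^[k] x‖ ^ ((k : ℝ)⁻¹)) Filter.atTop}

lemma coneNorm_eq : coneNorm C g = sSup (NS C g) := rfl

lemma coneSpecRad_eq : coneSpecRad C g = sSup (SS C g) := rfl

lemma zero_mem (hC : IsClosedCone C) (hne : C.Nonempty) : (0 : X) ∈ C := by
  obtain ⟨x, hx⟩ := hne
  simpa using hC.2.2.1 0 le_rfl x hx

lemma homog_map_zero (hg : IsHomog C g) (h0 : (0 : X) ∈ C) : g 0 = 0 := by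
  simpa using hg 0 le_rfl 0 h0

lemma homog_iterate (hg : IsHomog C g) (hgC : Set.MapsTo g C C) (m : ℕ) :
    IsHomog C g^[m] := by
  induction m with
  | zero => intro a ha x hx; simp
  | succ n ih =>
    intro a ha x hx
    rw [Function.iterate_succ_apply', Function.iterate_succ_apply', ih a ha x hx,
      hg a ha _ (hgC.iterate n hx)]

/-- scaling: a bound on the unit ball gives a linear bound on the cone -/
lemma scale_bound (hC : IsClosedCone C) (hg : IsHomog C g) {B : ℝ} (hB : 0 ≤ B)
    (hunit : ∀ x ∈ C, ‖x‖ ≤ 1 → ‖g x‖ ≤ B) : ∀ x ∈ C, ‖g x‖ ≤ B * ‖x‖ := by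
  intro x hx
  rcases eq_or_ne x 0 with rfl | hx0
  · rw [homog_map_zero hg hx]; simp
  · have hxn : (0 : ℝ) < ‖x‖ := norm_pos_iff.2 hx0
    set u : X := ‖x‖⁻¹ • x with hu
    have huC : u ∈ C := hC.2.2.1 _ (by positivity) x hx
    have hun : ‖u‖ = 1 := by
      rw [hu, norm_smul, norm_inv, norm_norm, inv_mul_cancel₀ hxn.ne']
    have hxu : x = ‖x‖ • u := by rw [hu, smul_smul, mul_inv_cancel₀ hxn.ne', one_smul]
    have hgx : g x = ‖x‖ • g u := by
      have := hg ‖x‖ hxn.le u huC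
      rw [← hxu] at this; exact this
    rw [hgx, norm_smul, norm_norm, mul_comm]
    exact mul_le_mul_of_nonneg_right (hunit u huC hun.le) hxn.le

lemma norm_image_bounded (hgcomp : IsCompactMapOn C g) :
    ∃ R : ℝ, 0 ≤ R ∧ ∀ x ∈ C, ‖x‖ ≤ 1 → ‖g x‖ ≤ R := by
  have hb : Bornology.IsBounded (C ∩ Metric.closedBall 0 1) :=
    (Metric.isBounded_closedBall).subset inter_subset_right
  have hK : IsCompact (closure (g '' (C ∩ Metric.closedBall 0 1))) :=
    hgcomp _ inter_subset_left hb
  obtain ⟨R, hR⟩ := hK.isBounded.exists_norm_le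
  refine ⟨max R 0, le_max_right _ _, fun x hx hx1 => ?_⟩
  have : g x ∈ closure (g '' (C ∩ Metric.closedBall 0 1)) :=
    subset_closure ⟨x, ⟨hx, by simpa [Metric.mem_closedBall, dist_eq_norm] using hx1⟩, rfl⟩
  exact le_trans (hR _ this) (le_max_left _ _)

lemma NS_nonempty (h0 : (0 : X) ∈ C) : (NS C g).Nonempty :=
  ⟨‖g 0‖, 0, h0, by simp, rfl⟩

lemma NS_bddAbove {R : ℝ} (hunit : ∀ x ∈ C, ‖x‖ ≤ 1 → ‖g x‖ ≤ R) : BddAbove (NS C g) := by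
  refine ⟨R, fun r hr => ?_⟩
  obtain ⟨x, hx, hx1, rfl⟩ := hr
  exact hunit x hx hx1

lemma le_coneNorm {R : ℝ} (hunit : ∀ x ∈ C, ‖x‖ ≤ 1 → ‖g x‖ ≤ R)
    {x : X} (hx : x ∈ C) (hx1 : ‖x‖ ≤ 1) : ‖g x‖ ≤ coneNorm C g :=
  le_csSup (NS_bddAbove hunit) ⟨x, hx, hx1, rfl⟩

lemma coneNorm_nonneg (h0 : (0 : X) ∈ C) (hg : IsHomog C g)
    {R : ℝ} (hunit : ∀ x ∈ C, ‖x‖ ≤ 1 → ‖g x‖ ≤ R) : 0 ≤ coneNorm C g := by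
  have := le_coneNorm (g := g) hunit h0 (by simp)
  rw [homog_map_zero hg h0] at this
  simpa using this

lemma coneNorm_le {R : ℝ} (h0 : (0 : X) ∈ C) (hunit : ∀ x ∈ C, ‖x‖ ≤ 1 → ‖g x‖ ≤ R) :
    coneNorm C g ≤ R :=
  csSup_le (NS_nonempty h0) (fun r hr => by obtain ⟨x, hx, hx1, rfl⟩ := hr; exact hunit x hx hx1)

lemma iter_norm_bound {M : ℝ} (hM : 0 ≤ M) (hgC : Set.MapsTo g C C)
    (h : ∀ x ∈ C, ‖g x‖ ≤ M * ‖x‖) (m : ℕ) : ∀ x ∈ C, ‖g^[m] x‖ ≤ M ^ m * ‖x‖ := by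
  induction m with
  | zero => intro x hx; simp
  | succ n ih =>
    intro x hx
    rw [Function.iterate_succ_apply']
    calc ‖g (g^[n] x)‖ ≤ M * ‖g^[n] x‖ := h _ (hgC.iterate n hx)
      _ ≤ M * (M ^ n * ‖x‖) := mul_le_mul_of_nonneg_left (ih x hx) hM
      _ = M ^ (n + 1) * ‖x‖ := by ring


lemma contOn_iterate (hgcont : ContinuousOn g C) (hgC : Set.MapsTo g C C) (m : ℕ) :
    ContinuousOn g^[m] C := by
  induction m with
  | zero => simpa using continuousOn_id
  | succ n ih =>
    rw [Function.iterate_succ']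
    exact hgcont.comp ih (hgC.iterate n)

/-- uniform continuity of `f` on `C` near a compact subset of `C` -/
lemma unif_cont (hfcont : ContinuousOn f C) {K : Set X} (hK : IsCompact K) (hKC : K ⊆ C)
    {ε : ℝ} (hε : 0 < ε) :
    ∃ δ > 0, ∀ y ∈ K, ∀ z ∈ C, ‖z - y‖ ≤ δ → ‖f z - f y‖ ≤ ε := by
  by_contra hcon
  push_neg at hcon
  have h : ∀ n : ℕ, ∃ y ∈ K, ∃ z ∈ C, ‖z - y‖ ≤ 1 / (n + 1) ∧ ε < ‖f z - f y‖ := by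
    intro n
    have := hcon (1 / (n + 1)) (by positivity)
    obtain ⟨y, hy, z, hz, h1, h2⟩ := this
    exact ⟨y, hy, z, hz, h1, h2⟩
  choose y hyK z hzC hdist hfar using h
  obtain ⟨a, haK, φ, hφ, hya⟩ := hK.tendsto_subseq hyK
  have hza : Tendsto (fun n => z (φ n)) atTop (𝓝 a) := by
    have h0 : Tendsto (fun n => z (φ n) - y (φ n)) atTop (𝓝 0) := by
      apply squeeze_zero_norm (fun n => hdist (φ n))
      have : Tendsto (fun n : ℕ => 1 / ((n : ℝ) + 1)) atTop (𝓝 0) :=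
        tendsto_one_div_add_atTop_nhds_zero_nat
      exact this.comp hφ.tendsto_atTop
    have := h0.add hya
    simpa using this
  have hfa : ContinuousWithinAt f C a := hfcont a (hKC haK)
  have hfya : Tendsto (fun n => f (y (φ n))) atTop (𝓝 (f a)) := by
    apply hfa.tendsto.comp
    rw [tendsto_nhdsWithin_iff]
    exact ⟨hya, Eventually.of_forall fun n => hKC (hyK (φ n))⟩
  have hfza : Tendsto (fun n => f (z (φ n))) atTop (𝓝 (f a)) := by
    apply hfa.tendsto.comp
    rw [tendsto_nhdsWithin_iff]
    exact ⟨hza, Eventually.of_forall fun n => hzC (φ n)⟩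
  have hdiff : Tendsto (fun n => ‖f (z (φ n)) - f (y (φ n))‖) atTop (𝓝 0) := by
    have := hfza.sub hfya
    simpa using this.norm
  have : ε ≤ 0 := ge_of_tendsto hdiff (Eventually.of_forall fun n => (hfar (φ n)).le)
  exact absurd this (not_le.2 hε)

/-- core upper estimate on the local spectral radius -/
lemma limsup_iter_le {Mg A : ℝ} (hgC : Set.MapsTo g C C)
    (hMg1 : 1 ≤ Mg) (hMg : ∀ x ∈ C, ‖g x‖ ≤ Mg * ‖x‖) {m : ℕ} (hm : 1 ≤ m)
    (hA : 0 < A) (hAm : ∀ x ∈ C, ‖g^[m] x‖ ≤ A ^ m * ‖x‖)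
    {x : X} (hx : x ∈ C) :
    Filter.limsup (fun k : ℕ => ‖g^[k] x‖ ^ ((k : ℝ)⁻¹)) Filter.atTop ≤ A := by
  set D : ℝ := Mg ^ m * max 1 A⁻¹ ^ m * max ‖x‖ 1 with hD
  have hD1 : 1 ≤ D := by
    have h1 : (1:ℝ) ≤ Mg ^ m := one_le_pow₀ hMg1
    have h2 : (1:ℝ) ≤ max 1 A⁻¹ ^ m := one_le_pow₀ (le_max_left _ _)
    have h3 : (1:ℝ) ≤ max ‖x‖ 1 := le_max_right _ _
    rw [hD]
    have h12 : (1:ℝ) ≤ Mg ^ m * max 1 A⁻¹ ^ m := by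
      have := mul_le_mul h1 h2 zero_le_one (by positivity)
      simpa using this
    have := mul_le_mul h12 h3 zero_le_one (by positivity)
    simpa using this
  have hmul : ∀ q : ℕ, ‖g^[m * q] x‖ ≤ (A ^ m) ^ q * ‖x‖ := by
    intro q
    induction q with
    | zero => simp
    | succ p ih =>
      have hmq : m * (p + 1) = m + m * p := by ring
      rw [hmq, Function.iterate_add_apply]
      calc ‖g^[m] (g^[m * p] x)‖ ≤ A ^ m * ‖g^[m * p] x‖ := hAm _ (hgC.iterate _ hx)
        _ ≤ A ^ m * ((A ^ m) ^ p * ‖x‖) := by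
            apply mul_le_mul_of_nonneg_left ih (by positivity)
        _ = (A ^ m) ^ (p + 1) * ‖x‖ := by ring
  have hkey : ∀ n : ℕ, ‖g^[n] x‖ ≤ D * A ^ n := by
    intro n
    have hsd : m * (n / m) + n % m = n := Nat.div_add_mod n m
    have hslt : n % m < m := Nat.mod_lt n (by omega)
    set s := n % m
    set q := n / m
    have h1 : ‖g^[n] x‖ = ‖g^[s] (g^[m * q] x)‖ := by
      rw [← Function.iterate_add_apply, Nat.add_comm s (m*q), hsd]
    have h2 : ‖g^[s] (g^[m * q] x)‖ ≤ Mg ^ s * ‖g^[m * q] x‖ :=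
      iter_norm_bound (by linarith) hgC hMg s _ (hgC.iterate _ hx)
    have h3 : ‖g^[m * q] x‖ ≤ (A ^ m) ^ q * ‖x‖ := hmul q
    have hAmq : (A ^ m) ^ q = A ^ n * A⁻¹ ^ s := by
      rw [← pow_mul]
      rw [← hsd]
      rw [pow_add]
      field_simp
      rw [one_div, ← mul_pow, mul_inv_cancel₀ hA.ne', one_pow]
    have h4 : (A ^ m) ^ q * ‖x‖ ≤ (A ^ n * max 1 A⁻¹ ^ m) * max ‖x‖ 1 := by
      rw [hAmq]
      have hi : A⁻¹ ^ s ≤ max 1 A⁻¹ ^ m := by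
        calc A⁻¹ ^ s ≤ max 1 A⁻¹ ^ s :=
          pow_le_pow_left₀ (by positivity) (le_max_right _ _) s
        _ ≤ max 1 A⁻¹ ^ m := pow_le_pow_right₀ (le_max_left _ _) hslt.le
      exact mul_le_mul (mul_le_mul_of_nonneg_left hi (pow_nonneg hA.le n))
        (le_max_left ‖x‖ 1) (norm_nonneg x) (by positivity)
    have h5 : Mg ^ s ≤ Mg ^ m := pow_le_pow_right₀ hMg1 hslt.le
    calc ‖g^[n] x‖ = ‖g^[s] (g^[m * q] x)‖ := h1
      _ ≤ Mg ^ s * ‖g^[m * q] x‖ := h2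
      _ ≤ Mg ^ m * ((A ^ n * max 1 A⁻¹ ^ m) * max ‖x‖ 1) := by
          have hg0 : (0:ℝ) ≤ ‖g^[m*q] x‖ := norm_nonneg _
          have := mul_le_mul h5 (le_trans h3 h4) hg0 (by positivity)
          linarith [this]
      _ = D * A ^ n := by rw [hD]; ring
  -- now the limsup estimate
  have hvten : Tendsto (fun n : ℕ => D ^ ((n : ℝ)⁻¹) * A) atTop (𝓝 A) := by
    have hD0 : (0:ℝ) < D := by linarith
    have hexp : Tendsto (fun n : ℕ => Real.log D * (n : ℝ)⁻¹) atTop (𝓝 0) := by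
      have := tendsto_inv_atTop_zero.comp (tendsto_natCast_atTop_atTop (R := ℝ))
      simpa using this.const_mul (Real.log D)
    have h1 : Tendsto (fun n : ℕ => D ^ ((n : ℝ)⁻¹)) atTop (𝓝 1) := by
      have := (Real.continuous_exp.tendsto 0).comp hexp
      simp only [Real.exp_zero] at this
      refine this.congr fun n => ?_
      rw [Function.comp_apply, Real.rpow_def_of_pos hD0]
    have := h1.mul_const A
    simpa using this
  have hub : ∀ c > A, ∀ᶠ n : ℕ in atTop, ‖g^[n] x‖ ^ ((n : ℝ)⁻¹) ≤ c := by
    intro c hc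
    have hev : ∀ᶠ n : ℕ in atTop, D ^ ((n : ℝ)⁻¹) * A < c :=
      hvten.eventually_lt_const hc
    filter_upwards [hev, eventually_ge_atTop 1] with n hn hn1
    have hn0 : (0:ℝ) < n := by exact_mod_cast hn1
    have h1 : ‖g^[n] x‖ ^ ((n : ℝ)⁻¹) ≤ (D * A ^ n) ^ ((n : ℝ)⁻¹) :=
      Real.rpow_le_rpow (norm_nonneg _) (hkey n) (by positivity)
    have h2 : (D * A ^ n) ^ ((n : ℝ)⁻¹) = D ^ ((n : ℝ)⁻¹) * A := by
      rw [Real.mul_rpow (by linarith) (by positivity), ← Real.rpow_natCast A n,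
        ← Real.rpow_mul hA.le]
      rw [mul_inv_cancel₀ hn0.ne', Real.rpow_one]
    exact le_of_lt (h1.trans_lt (by rw [h2] at *; exact hn))
  by_contra hcon
  push_neg at hcon
  obtain ⟨c, hc1, hc2⟩ := exists_between hcon
  have hle : Filter.limsup (fun k : ℕ => ‖g^[k] x‖ ^ ((k : ℝ)⁻¹)) Filter.atTop ≤ c := by
    apply Filter.limsup_le_of_le _ (hub c hc1)
    exact Filter.isCoboundedUnder_le_of_le atTop (fun n => Real.rpow_nonneg (norm_nonneg _) _)
  exact absurd hle (not_le.2 hc2)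


lemma limsup_at_zero (hg0 : g 0 = 0) :
    Filter.limsup (fun k : ℕ => ‖g^[k] (0 : X)‖ ^ ((k : ℝ)⁻¹)) Filter.atTop = 0 := by
  have hev : ∀ᶠ k : ℕ in atTop, ‖g^[k] (0 : X)‖ ^ ((k : ℝ)⁻¹) = 0 := by
    filter_upwards [eventually_ge_atTop 1] with k hk
    have hz : g^[k] (0 : X) = 0 := Function.iterate_fixed hg0 k
    rw [hz, norm_zero, Real.zero_rpow]
    have : (0:ℝ) < (k:ℝ) := by exact_mod_cast hk
    positivity
  calc Filter.limsup (fun k : ℕ => ‖g^[k] (0 : X)‖ ^ ((k : ℝ)⁻¹)) Filter.atTop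
      = Filter.limsup (fun _ : ℕ => (0:ℝ)) Filter.atTop := Filter.limsup_congr hev
    _ = 0 := Filter.limsup_const 0

lemma SS_nonempty (h0 : (0 : X) ∈ C) : (SS C g).Nonempty := ⟨_, 0, h0, rfl⟩

lemma SS_bddAbove {Mg : ℝ} (hgC : Set.MapsTo g C C) (hMg1 : 1 ≤ Mg)
    (hMg : ∀ x ∈ C, ‖g x‖ ≤ Mg * ‖x‖) : BddAbove (SS C g) := by
  refine ⟨Mg, fun r hr => ?_⟩
  obtain ⟨x, hx, rfl⟩ := hr
  exact limsup_iter_le hgC hMg1 hMg le_rfl (by linarith) (by simpa using hMg) hx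

lemma coneSpecRad_nonneg (h0 : (0 : X) ∈ C) (hg0 : g 0 = 0)
    (hbdd : BddAbove (SS C g)) : 0 ≤ coneSpecRad C g :=
  le_csSup hbdd ⟨0, h0, (limsup_at_zero hg0).symm⟩

lemma coneSpecRad_le {Mg A : ℝ} (h0 : (0 : X) ∈ C) (hgC : Set.MapsTo g C C)
    (hMg1 : 1 ≤ Mg) (hMg : ∀ x ∈ C, ‖g x‖ ≤ Mg * ‖x‖) {m : ℕ} (hm : 1 ≤ m)
    (hA : 0 < A) (hAm : ∀ x ∈ C, ‖g^[m] x‖ ≤ A ^ m * ‖x‖) : coneSpecRad C g ≤ A := by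
  rw [coneSpecRad_eq]
  refine csSup_le (SS_nonempty h0) (fun r hr => ?_)
  obtain ⟨x, hx, rfl⟩ := hr
  exact limsup_iter_le hgC hMg1 hMg hm hA hAm hx


lemma iterate_approx (hC : IsClosedCone C) (hfC : Set.MapsTo f C C)
    (hfcont : ContinuousOn f C) (hfcomp : IsCompactMapOn C f)
    {Mf : ℝ} (hMf1 : 1 ≤ Mf) (hMf : ∀ x ∈ C, ‖f x‖ ≤ Mf * ‖x‖)
    {fk : ℕ → X → X} (hfkC : ∀ k, Set.MapsTo (fk k) C C)
    {e : ℕ → ℝ} (he0 : ∀ k, 0 ≤ e k) (hek : ∀ k, ∀ x ∈ C, ‖f x - fk k x‖ ≤ e k * ‖x‖)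
    (he : Filter.Tendsto e Filter.atTop (nhds 0)) (m : ℕ) :
    ∀ ε > 0, ∀ᶠ k in Filter.atTop, ∀ x ∈ C, ‖x‖ ≤ 1 →
      ‖f^[m+1] x - (fk k)^[m+1] x‖ ≤ ε := by
  induction m with
  | zero =>
    intro ε hε
    filter_upwards [he.eventually_lt_const hε] with k hk x hx hx1
    simp only [zero_add, Function.iterate_one]
    calc ‖f x - fk k x‖ ≤ e k * ‖x‖ := hek k x hx
      _ ≤ e k := mul_le_of_le_one_right (he0 k) hx1
      _ ≤ ε := hk.le
  | succ m IH =>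
    intro ε hε
    set P : ℝ := (Mf + 1) ^ (m + 2) with hP
    have hP0 : (0:ℝ) < P := by positivity
    set K : Set X := closure (f '' (C ∩ Metric.closedBall 0 (Mf ^ (m+1)))) with hK
    have hKcomp : IsCompact K :=
      hfcomp _ inter_subset_left ((Metric.isBounded_closedBall).subset inter_subset_right)
    have hKC : K ⊆ C := by
      apply closure_minimal _ hC.1
      rintro _ ⟨y, ⟨hyC, _⟩, rfl⟩
      exact hfC hyC
    obtain ⟨δ, hδ0, hδ⟩ := unif_cont hfcont hKcomp hKC (half_pos hε)
    have hev1 : ∀ᶠ k in Filter.atTop, e k ≤ 1 := by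
      filter_upwards [he.eventually_lt_const one_pos] with k hk using hk.le
    have hevc : ∀ᶠ k in Filter.atTop, e k ≤ ε / 2 / P := by
      filter_upwards [he.eventually_lt_const (by positivity : (0:ℝ) < ε / 2 / P)] with k hk
      exact hk.le
    filter_upwards [IH δ hδ0, hev1, hevc] with k h1 h2 h3
    intro x hx hx1
    set y : X := f^[m+1] x with hy
    set z : X := (fk k)^[m+1] x with hz
    have hyC : y ∈ C := hfC.iterate _ hx
    have hzC : z ∈ C := (hfkC k).iterate _ hx
    have hyK : y ∈ K := by
      have hmem : f^[m] x ∈ C ∩ Metric.closedBall 0 (Mf ^ m) := by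
        refine ⟨hfC.iterate _ hx, ?_⟩
        rw [Metric.mem_closedBall, dist_zero_right]
        calc ‖f^[m] x‖ ≤ Mf ^ m * ‖x‖ := iter_norm_bound (by linarith) hfC hMf m x hx
          _ ≤ Mf ^ m := mul_le_of_le_one_right (by positivity) hx1
      have hmem' : f^[m] x ∈ C ∩ Metric.closedBall 0 (Mf ^ (m+1)) := by
        refine ⟨hmem.1, ?_⟩
        have h2' := hmem.2
        rw [Metric.mem_closedBall, dist_zero_right] at h2' ⊢
        exact h2'.trans (pow_le_pow_right₀ hMf1 (by omega))
      rw [hy, Function.iterate_succ_apply']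
      exact subset_closure ⟨f^[m] x, hmem', rfl⟩
    have hzy : ‖z - y‖ ≤ δ := by
      rw [norm_sub_rev]
      exact h1 x hx hx1
    have hterm1 : ‖f y - f z‖ ≤ ε / 2 := by
      rw [norm_sub_rev]
      exact hδ y hyK z hzC hzy
    have hfkb : ∀ w ∈ C, ‖fk k w‖ ≤ (Mf + 1) * ‖w‖ := by
      intro w hw
      calc ‖fk k w‖ = ‖f w - (f w - fk k w)‖ := by rw [sub_sub_cancel]
        _ ≤ ‖f w‖ + ‖f w - fk k w‖ := norm_sub_le _ _
        _ ≤ Mf * ‖w‖ + e k * ‖w‖ := add_le_add (hMf w hw) (hek k w hw)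
        _ ≤ Mf * ‖w‖ + 1 * ‖w‖ := by
            have := mul_le_mul_of_nonneg_right h2 (norm_nonneg w)
            linarith
        _ = (Mf + 1) * ‖w‖ := by ring
    have hzb : ‖z‖ ≤ P := by
      calc ‖z‖ ≤ (Mf + 1) ^ (m+1) * ‖x‖ := iter_norm_bound (by linarith) (hfkC k) hfkb _ x hx
        _ ≤ (Mf + 1) ^ (m+1) := mul_le_of_le_one_right (by positivity) hx1
        _ ≤ P := by
            rw [hP]
            exact pow_le_pow_right₀ (by linarith) (by omega)
    have hterm2 : ‖f z - fk k z‖ ≤ ε / 2 := by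
      calc ‖f z - fk k z‖ ≤ e k * ‖z‖ := hek k z hzC
        _ ≤ (ε / 2 / P) * P := by
            apply mul_le_mul h3 hzb (norm_nonneg z) (by positivity)
        _ = ε / 2 := div_mul_cancel₀ (ε / 2) hP0.ne'
    have he1 : f^[m+1+1] x = f y := by rw [hy, ← Function.iterate_succ_apply' f]
    have he2 : (fk k)^[m+1+1] x = fk k z := by rw [hz, ← Function.iterate_succ_apply' (fk k)]
    calc ‖f^[m+1+1] x - (fk k)^[m+1+1] x‖ = ‖f y - fk k z‖ := by rw [he1, he2]
      _ = ‖(f y - f z) + (f z - fk k z)‖ := congrArg norm (sub_add_sub_cancel _ _ _).symm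
      _ ≤ ‖f y - f z‖ + ‖f z - fk k z‖ := norm_add_le _ _
      _ ≤ ε / 2 + ε / 2 := add_le_add hterm1 hterm2
      _ = ε := by ring


/-- the key lower bound: if the iterate norms grow like `q^n`, the cone spectral
radius is at least `q' < q`. Elementary argmin + subsequence argument. -/
lemma le_coneSpecRad (hC : IsClosedCone C) (hfC : Set.MapsTo f C C)
    (hfcont : ContinuousOn f C) (hfcomp : IsCompactMapOn C f) (hfhom : IsHomog C f)
    {Mf q q' : ℝ} (hMf1 : 1 ≤ Mf) (hMf : ∀ x ∈ C, ‖f x‖ ≤ Mf * ‖x‖)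
    (hq'0 : 0 < q') (hq'q : q' < q) (hqM : q < Mf)
    (hgrow : ∀ n : ℕ, ∃ x ∈ C, ‖x‖ ≤ 1 ∧ q ^ (n+1) < ‖f^[n+1] x‖) :
    q' ≤ coneSpecRad C f := by
  have hq0 : 0 < q := hq'0.trans hq'q
  have hMf0 : (0:ℝ) < Mf := by linarith
  set T : Set X := closure (f '' (C ∩ Metric.closedBall 0 1)) with hT
  have hTcomp : IsCompact T :=
    hfcomp _ inter_subset_left ((Metric.isBounded_closedBall).subset inter_subset_right)
  set T' : Set X := (fun v : X => q'⁻¹ • v) '' T with hT'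
  have hT'comp : IsCompact T' := hTcomp.image (continuous_const_smul _)
  -- main claim: points with long stretches of exponential growth
  have claim : ∀ m : ℕ, ∃ y, y ∈ T' ∧ y ∈ C ∧ ∀ i ≤ m, q' ^ i ≤ ‖f^[i] y‖ := by
    intro m
    set c0 : ℝ := Mf ^ m * max 1 q' ^ m / q' ^ m with hc0
    have hdivgt : 1 < q / q' := (one_lt_div hq'0).2 hq'q
    have htends := tendsto_pow_atTop_atTop_of_one_lt hdivgt
    obtain ⟨n, hnc, hnm⟩ :=
      ((htends.eventually_gt_atTop c0).and (eventually_ge_atTop (m+1))).exists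
    obtain ⟨N, rfl⟩ : ∃ N, n = N + 1 := ⟨n - 1, by omega⟩
    obtain ⟨x, hx, hx1, hxg⟩ := hgrow N
    set n := N + 1
    set a : ℕ → ℝ := fun j => ‖f^[j] x‖ with ha
    -- the argmin over the weighted orbit
    obtain ⟨j, hjmem, hjmin⟩ :=
      (Finset.range (n+1)).exists_min_image (fun j => a j * q' ^ (n - j))
        ⟨0, Finset.mem_range.2 (by omega)⟩
    have hjn : j ≤ n := by
      have := Finset.mem_range.1 hjmem; omega
    have key1 : ∀ i, j + i ≤ n → q' ^ i * a j ≤ a (j + i) := by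
      intro i hji
      have h := hjmin (j + i) (Finset.mem_range.2 (by omega))
      have hsplit : n - j = (n - (j + i)) + i := by omega
      rw [hsplit, pow_add, ← mul_assoc] at h
      have hpos : (0:ℝ) < q' ^ (n - (j + i)) := pow_pos hq'0 _
      -- h : a j * q' ^ (n - (j+i)) * q' ^ i ≤ a (j+i) * q' ^ (n - (j+i))
      nlinarith [h, hpos, norm_nonneg (f^[j] x)]
    have key2 : a j ≤ q' ^ j := by
      have h := hjmin 0 (Finset.mem_range.2 (by omega))
      simp only [Nat.sub_zero] at h
      -- h : a j * q' ^ (n - j) ≤ a 0 * q' ^ n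
      have ha0 : a 0 ≤ 1 := by simpa [ha] using hx1
      have hqn : q' ^ n = q' ^ j * q' ^ (n - j) := by
        rw [← pow_add]; congr 1; omega
      have hpos : (0:ℝ) < q' ^ (n - j) := pow_pos hq'0 _
      nlinarith [pow_pos hq'0 n, pow_pos hq'0 j]
    have key3 : a n ≤ Mf ^ (n - j) * a j := by
      have hn : n = (n - j) + j := by omega
      calc a n = ‖f^[(n - j) + j] x‖ := by rw [← hn]
        _ = ‖f^[n - j] (f^[j] x)‖ := by rw [Function.iterate_add_apply]
        _ ≤ Mf ^ (n - j) * a j := iter_norm_bound (by linarith) hfC hMf _ _ (hfC.iterate _ hx)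
    -- the window is long
    have hwindow : m + 1 ≤ n - j := by
      by_contra hd'
      push_neg at hd'
      have hd : n - j ≤ m := by omega
      have h1 : q ^ n < Mf ^ (n - j) * q' ^ j := by
        calc q ^ n < a n := hxg
          _ ≤ Mf ^ (n - j) * a j := key3
          _ ≤ Mf ^ (n - j) * q' ^ j :=
              mul_le_mul_of_nonneg_left key2 (by positivity)
      have h2 : Mf ^ (n - j) ≤ Mf ^ m := pow_le_pow_right₀ hMf1 hd
      have h3 : q' ^ j ≤ q' ^ (n - m) * max 1 q' ^ m := by
        have hj' : j = (n - m) + (j - (n - m)) := by omega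
        rw [hj', pow_add]
        apply mul_le_mul_of_nonneg_left _ (by positivity)
        calc q' ^ (j - (n - m)) ≤ max 1 q' ^ (j - (n - m)) :=
              pow_le_pow_left₀ hq'0.le (le_max_right _ _) _
          _ ≤ max 1 q' ^ m := pow_le_pow_right₀ (le_max_left _ _) (by omega)
      have h4 : q ^ n < (Mf ^ m * max 1 q' ^ m) * q' ^ (n - m) := by
        calc q ^ n < Mf ^ (n - j) * q' ^ j := h1
          _ ≤ Mf ^ m * (q' ^ (n - m) * max 1 q' ^ m) := by
              apply mul_le_mul h2 h3 (by positivity) (by positivity)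
          _ = (Mf ^ m * max 1 q' ^ m) * q' ^ (n - m) := by ring
      -- but the choice of n gives the opposite
      have h5 : (Mf ^ m * max 1 q' ^ m) * q' ^ (n - m) ≤ q ^ n := by
        have hc : c0 * q' ^ n < q ^ n := by
          have := mul_lt_mul_of_pos_right hnc (pow_pos hq'0 n)
          rwa [div_pow, div_mul_cancel₀ _ (by positivity : q' ^ n ≠ 0)] at this
        have hqn' : q' ^ n = q' ^ m * q' ^ (n - m) := by
          rw [← pow_add]; congr 1; omega
        have : c0 * q' ^ n = (Mf ^ m * max 1 q' ^ m) * q' ^ (n - m) := by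
          rw [hc0, hqn']
          field_simp
        linarith [hc, this.symm.le]
      linarith
    -- now build the point y
    have hajpos : 0 < a j := by
      by_contra hle
      push_neg at hle
      have haj0 : a j = 0 := le_antisymm hle (norm_nonneg _)
      have h1 : (0:ℝ) < a n := lt_of_le_of_lt (by positivity) hxg
      rw [haj0, mul_zero] at key3
      linarith
    set y : X := (q' * a j)⁻¹ • f^[j+1] x with hy
    have hsc : (0:ℝ) < q' * a j := mul_pos hq'0 hajpos
    have hyC : y ∈ C := hC.2.2.1 _ (by positivity) _ (hfC.iterate _ hx)
    have hyT' : y ∈ T' := by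
      set w : X := (a j)⁻¹ • f^[j] x with hw
      have hwC : w ∈ C := hC.2.2.1 _ (by positivity) _ (hfC.iterate _ hx)
      have hwn : ‖w‖ = 1 := by
        rw [hw, norm_smul, norm_inv, Real.norm_eq_abs, abs_of_pos hajpos]
        exact inv_mul_cancel₀ hajpos.ne'
      have hfw : f w = (a j)⁻¹ • f^[j+1] x := by
        rw [hw, hfhom _ (by positivity) _ (hfC.iterate _ hx), Function.iterate_succ_apply']
      have hfwT : f w ∈ T := subset_closure ⟨w, ⟨hwC, by
        rw [Metric.mem_closedBall, dist_zero_right, hwn]⟩, rfl⟩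
      refine ⟨f w, hfwT, ?_⟩
      show q'⁻¹ • f w = y
      rw [hfw, hy, smul_smul, ← mul_inv]
    refine ⟨y, hyT', hyC, fun i hi => ?_⟩
    have hiter : f^[i] y = (q' * a j)⁻¹ • f^[i + (j+1)] x := by
      rw [hy, homog_iterate hfhom hfC i _ (by positivity) _ (hfC.iterate _ hx),
        ← Function.iterate_add_apply]
    have hnorm : ‖f^[i] y‖ = (q' * a j)⁻¹ * a (i + (j+1)) := by
      rw [hiter, norm_smul, norm_inv, Real.norm_eq_abs, abs_of_pos hsc, ha]
    have hkey : q' ^ (i+1) * a j ≤ a (j + (i+1)) := key1 (i+1) (by omega)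
    have hidx : j + (i + 1) = i + (j + 1) := by omega
    rw [hidx] at hkey
    rw [hnorm]
    have : (q' * a j)⁻¹ * (q' ^ (i+1) * a j) = q' ^ i := by
      field_simp
      ring
    calc q' ^ i = (q' * a j)⁻¹ * (q' ^ (i+1) * a j) := this.symm
      _ ≤ (q' * a j)⁻¹ * a (i + (j+1)) :=
          mul_le_mul_of_nonneg_left hkey (by positivity)
  -- extract a convergent subsequence
  choose y hyT' hyC hyb using claim
  obtain ⟨z, hzT', φ, hφ, hzten⟩ := hT'comp.tendsto_subseq hyT'
  have hzC : z ∈ C := hC.1.mem_of_tendsto hzten (Eventually.of_forall fun l => hyC _)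
  have hlow : ∀ i : ℕ, q' ^ i ≤ ‖f^[i] z‖ := by
    intro i
    have hcont := (contOn_iterate hfcont hfC i) z hzC
    have htend : Filter.Tendsto (fun l => f^[i] (y (φ l))) Filter.atTop (nhds (f^[i] z)) := by
      apply hcont.tendsto.comp
      rw [tendsto_nhdsWithin_iff]
      exact ⟨hzten, Eventually.of_forall fun l => hyC _⟩
    refine ge_of_tendsto htend.norm ?_
    filter_upwards [eventually_ge_atTop i] with l hl
    exact hyb (φ l) i (hl.trans (hφ.le_apply))
  -- conclude via the limsup
  have hfreq : ∃ᶠ i : ℕ in Filter.atTop, q' ≤ ‖f^[i] z‖ ^ ((i:ℝ)⁻¹) := by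
    refine Filter.Eventually.frequently ?_
    filter_upwards [eventually_ge_atTop 1] with i hi
    have hi0 : (0:ℝ) < (i:ℝ) := by exact_mod_cast hi
    have h1 : (q' ^ i : ℝ) ^ ((i:ℝ)⁻¹) ≤ ‖f^[i] z‖ ^ ((i:ℝ)⁻¹) :=
      Real.rpow_le_rpow (by positivity) (hlow i) (by positivity)
    have h2 : (q' ^ i : ℝ) ^ ((i:ℝ)⁻¹) = q' := by
      rw [← Real.rpow_natCast q' i, ← Real.rpow_mul hq'0.le,
        mul_inv_cancel₀ hi0.ne', Real.rpow_one]
    rwa [h2] at h1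
  have hbdd : Filter.IsBoundedUnder (· ≤ ·) Filter.atTop
      (fun i : ℕ => ‖f^[i] z‖ ^ ((i:ℝ)⁻¹)) := by
    refine ⟨Mf * max ‖z‖ 1, eventually_map.2 ?_⟩
    filter_upwards [eventually_ge_atTop 1] with i hi
    have hi0 : (0:ℝ) < (i:ℝ) := by exact_mod_cast hi
    have h1 : ‖f^[i] z‖ ^ ((i:ℝ)⁻¹) ≤ (Mf ^ i * ‖z‖) ^ ((i:ℝ)⁻¹) :=
      Real.rpow_le_rpow (norm_nonneg _) (iter_norm_bound (by linarith) hfC hMf i z hzC)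
        (by positivity)
    have h2 : (Mf ^ i * ‖z‖) ^ ((i:ℝ)⁻¹) = Mf * ‖z‖ ^ ((i:ℝ)⁻¹) := by
      rw [Real.mul_rpow (by positivity) (norm_nonneg _), ← Real.rpow_natCast Mf i,
        ← Real.rpow_mul hMf0.le, mul_inv_cancel₀ hi0.ne', Real.rpow_one]
    have h3 : ‖z‖ ^ ((i:ℝ)⁻¹) ≤ max ‖z‖ 1 := by
      rcases le_or_gt ‖z‖ 1 with hz1 | hz1
      · exact le_trans (Real.rpow_le_one (norm_nonneg _) hz1 (by positivity)) (le_max_right _ _)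
      · have : ‖z‖ ^ ((i:ℝ)⁻¹) ≤ ‖z‖ ^ (1:ℝ) := by
          apply Real.rpow_le_rpow_of_exponent_le hz1.le
          rw [inv_le_one_iff₀]; right; exact_mod_cast hi
        rw [Real.rpow_one] at this
        exact this.trans (le_max_left _ _)
    calc ‖f^[i] z‖ ^ ((i:ℝ)⁻¹) ≤ (Mf ^ i * ‖z‖) ^ ((i:ℝ)⁻¹) := h1
      _ = Mf * ‖z‖ ^ ((i:ℝ)⁻¹) := h2
      _ ≤ Mf * max ‖z‖ 1 := mul_le_mul_of_nonneg_left h3 hMf0.le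
  have hlimsup : q' ≤ Filter.limsup (fun i : ℕ => ‖f^[i] z‖ ^ ((i:ℝ)⁻¹)) Filter.atTop :=
    Filter.le_limsup_of_frequently_le hfreq hbdd
  exact hlimsup.trans (le_csSup (SS_bddAbove hfC hMf1 hMf) ⟨z, hzC, rfl⟩)

end MPN

/-- Upper semicontinuity of the cone spectral radius: if `f` and the `f_k` are continuous
compact homogeneous order-preserving maps of the closed cone `C` into itself and
`‖f - f_k‖_C → 0`, then `limsup_k r_C(f_k) ≤ r_C(f)`. -/
theorem limsup_coneSpecRad_le
    (C : Set X) (hC : IsClosedCone C) (f : X → X)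
    (hfC : Set.MapsTo f C C) (hfcont : ContinuousOn f C)
    (hfcomp : IsCompactMapOn C f) (hfhom : IsHomog C f) (hford : IsOrdPres C f)
    (fk : ℕ → X → X)
    (hfkC : ∀ k, Set.MapsTo (fk k) C C)
    (hfkcont : ∀ k, ContinuousOn (fk k) C)
    (hfkcomp : ∀ k, IsCompactMapOn C (fk k))
    (hfkhom : ∀ k, IsHomog C (fk k))
    (hfkord : ∀ k, IsOrdPres C (fk k))
    (hconv : Filter.Tendsto (fun k => coneNorm C (fun x => f x - fk k x))
      Filter.atTop (nhds 0)) :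
    Filter.limsup (fun k => coneSpecRad C (fk k)) Filter.atTop ≤ coneSpecRad C f := by
  rcases C.eq_empty_or_nonempty with rfl | hne
  · have hz : ∀ g : X → X, coneSpecRad (∅ : Set X) g = 0 := by
      intro g
      have : {r : ℝ | ∃ x ∈ (∅ : Set X), r =
          Filter.limsup (fun k : ℕ => ‖g^[k] x‖ ^ ((k : ℝ)⁻¹)) Filter.atTop} = ∅ := by
        ext r; simp
      rw [coneSpecRad, this, Real.sSup_empty]
    simp only [hz]
    rw [Filter.limsup_const]
  · have h0 : (0 : X) ∈ C := MPN.zero_mem hC hne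
    obtain ⟨R, hR0, hRb⟩ := MPN.norm_image_bounded (C := C) (g := f) hfcomp
    set e : ℕ → ℝ := fun k => coneNorm C (fun x => f x - fk k x) with he_def
    have hdiffhom : ∀ k, IsHomog C (fun x => f x - fk k x) := by
      intro k a ha x hx
      simp only
      rw [hfhom a ha x hx, hfkhom k a ha x hx, smul_sub]
    have hdiffb : ∀ k, ∃ Rk, 0 ≤ Rk ∧ ∀ x ∈ C, ‖x‖ ≤ 1 → ‖f x - fk k x‖ ≤ Rk := by
      intro k
      obtain ⟨Rk, hRk0, hRkb⟩ := MPN.norm_image_bounded (hfkcomp k)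
      exact ⟨R + Rk, by linarith, fun x hx hx1 =>
        le_trans (norm_sub_le _ _) (add_le_add (hRb x hx hx1) (hRkb x hx hx1))⟩
    have hek : ∀ k, ∀ x ∈ C, ‖f x - fk k x‖ ≤ e k * ‖x‖ := by
      intro k
      obtain ⟨Rk, hRk0, hRkb⟩ := hdiffb k
      exact MPN.scale_bound hC (hdiffhom k)
        (MPN.coneNorm_nonneg h0 (hdiffhom k) hRkb)
        (fun x hx hx1 => MPN.le_coneNorm hRkb hx hx1)
    have he0 : ∀ k, 0 ≤ e k := by
      intro k
      obtain ⟨Rk, hRk0, hRkb⟩ := hdiffb k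
      exact MPN.coneNorm_nonneg h0 (hdiffhom k) hRkb
    have hMfb : ∀ Mf : ℝ, R ≤ Mf → ∀ x ∈ C, ‖f x‖ ≤ Mf * ‖x‖ := fun Mf hMf x hx =>
      le_trans (MPN.scale_bound hC hfhom hR0 hRb x hx)
        (mul_le_mul_of_nonneg_right hMf (norm_nonneg _))
    set Mf₀ : ℝ := max R 1 with hMf₀_def
    have hMf₀1 : 1 ≤ Mf₀ := le_max_right _ _
    have hMf₀ : ∀ x ∈ C, ‖f x‖ ≤ Mf₀ * ‖x‖ := hMfb Mf₀ (le_max_left _ _)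
    have hr0 : 0 ≤ coneSpecRad C f :=
      MPN.coneSpecRad_nonneg h0 (MPN.homog_map_zero hfhom h0)
        (MPN.SS_bddAbove hfC hMf₀1 hMf₀)
    have hfkb : ∀ k, ∀ x ∈ C, ‖fk k x‖ ≤ (Mf₀ + e k) * ‖x‖ := by
      intro k x hx
      calc ‖fk k x‖ = ‖f x - (f x - fk k x)‖ := by rw [sub_sub_cancel]
        _ ≤ ‖f x‖ + ‖f x - fk k x‖ := norm_sub_le _ _
        _ ≤ Mf₀ * ‖x‖ + e k * ‖x‖ := add_le_add (hMf₀ x hx) (hek k x hx)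
        _ = (Mf₀ + e k) * ‖x‖ := by ring
    have hrk0 : ∀ k, 0 ≤ coneSpecRad C (fk k) := by
      intro k
      exact MPN.coneSpecRad_nonneg h0 (MPN.homog_map_zero (hfkhom k) h0)
        (MPN.SS_bddAbove (hfkC k) (by linarith [he0 k]) (hfkb k))
    by_contra hcon
    push_neg at hcon
    obtain ⟨q1, hrq1, hq1L⟩ := exists_between hcon
    obtain ⟨q2, hq12, hq2L⟩ := exists_between hq1L
    obtain ⟨q3, hq23, hq3L⟩ := exists_between hq2L
    have hq10 : 0 < q1 := lt_of_le_of_lt hr0 hrq1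
    have hq20 : 0 < q2 := hq10.trans hq12
    have hq30 : 0 < q3 := hq20.trans hq23
    -- Step 1: q3 ^ (m+1) ≤ coneNorm C (f^[m+1]) for all m
    have hNm : ∀ m : ℕ, q3 ^ (m+1) ≤ coneNorm C f^[m+1] := by
      intro m
      have hNb : ∀ x ∈ C, ‖x‖ ≤ 1 → ‖f^[m+1] x‖ ≤ Mf₀ ^ (m+1) := fun x hx hx1 =>
        le_trans (MPN.iter_norm_bound (by linarith) hfC hMf₀ (m+1) x hx)
          (mul_le_of_le_one_right (by positivity) hx1)
      refine le_of_forall_pos_le_add ?_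
      intro ε hε
      set N : ℝ := coneNorm C f^[m+1] with hN_def
      have hA0 : (0:ℝ) < N + ε := by
        have : 0 ≤ N := MPN.coneNorm_nonneg h0 (MPN.homog_iterate hfhom hfC (m+1)) hNb
        linarith
      set A : ℝ := (N + ε) ^ (((m+1 : ℕ) : ℝ)⁻¹) with hA_def
      have hApos : 0 < A := Real.rpow_pos_of_pos hA0 _
      have hm1ne : ((m+1 : ℕ) : ℝ) ≠ 0 := by positivity
      have hApow : A ^ (m+1) = N + ε := by
        rw [hA_def, ← Real.rpow_natCast ((N + ε) ^ (((m+1 : ℕ) : ℝ)⁻¹)) (m+1),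
          ← Real.rpow_mul hA0.le, inv_mul_cancel₀ hm1ne, Real.rpow_one]
      have hev : ∀ᶠ k in Filter.atTop, coneSpecRad C (fk k) ≤ A := by
        have happrox := MPN.iterate_approx hC hfC hfcont hfcomp hMf₀1 hMf₀ hfkC he0 hek
          hconv m ε hε
        have hev1 : ∀ᶠ k in Filter.atTop, e k ≤ 1 := by
          filter_upwards [hconv.eventually_lt_const one_pos] with k hk using hk.le
        filter_upwards [happrox, hev1] with k hk hk1
        have hub : ∀ x ∈ C, ‖x‖ ≤ 1 → ‖(fk k)^[m+1] x‖ ≤ N + ε := by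
          intro x hx hx1
          calc ‖(fk k)^[m+1] x‖
              = ‖f^[m+1] x - (f^[m+1] x - (fk k)^[m+1] x)‖ := by rw [sub_sub_cancel]
            _ ≤ ‖f^[m+1] x‖ + ‖f^[m+1] x - (fk k)^[m+1] x‖ := norm_sub_le _ _
            _ ≤ N + ε := add_le_add (MPN.le_coneNorm hNb hx hx1) (hk x hx hx1)
        have hub' : ∀ x ∈ C, ‖(fk k)^[m+1] x‖ ≤ (N + ε) * ‖x‖ :=
          MPN.scale_bound hC (MPN.homog_iterate (hfkhom k) (hfkC k) (m+1)) hA0.le hub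
        have hgb : ∀ x ∈ C, ‖fk k x‖ ≤ (Mf₀ + 1) * ‖x‖ := by
          intro x hx
          calc ‖fk k x‖ ≤ (Mf₀ + e k) * ‖x‖ := hfkb k x hx
            _ ≤ (Mf₀ + 1) * ‖x‖ :=
                mul_le_mul_of_nonneg_right (by linarith) (norm_nonneg _)
        refine MPN.coneSpecRad_le h0 (hfkC k) (by linarith) hgb
          (Nat.succ_le_succ (Nat.zero_le m)) hApos ?_
        intro x hx
        rw [hApow]
        exact hub' x hx
      have hq3A : q3 ≤ A := by
        by_contra hq3A
        push_neg at hq3A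
        have hls : Filter.limsup (fun k => coneSpecRad C (fk k)) Filter.atTop ≤ A :=
          Filter.limsup_le_of_le
            (Filter.isCoboundedUnder_le_of_le Filter.atTop (fun k => hrk0 k)) hev
        linarith
      have := pow_le_pow_left₀ hq30.le hq3A (m+1)
      rw [hApow] at this
      exact this
    -- Step 2: growth witnesses for f
    set Mf : ℝ := max Mf₀ (q2 + 1) with hMf_def
    have hMf1 : 1 ≤ Mf := le_trans hMf₀1 (le_max_left _ _)
    have hMfB : ∀ x ∈ C, ‖f x‖ ≤ Mf * ‖x‖ :=
      hMfb Mf (le_trans (le_trans (le_max_left R 1) (le_max_left _ _)) le_rfl)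
    have hq2M : q2 < Mf := lt_of_lt_of_le (lt_add_one q2) (le_max_right _ _)
    have hgrow : ∀ n : ℕ, ∃ x ∈ C, ‖x‖ ≤ 1 ∧ q2 ^ (n+1) < ‖f^[n+1] x‖ := by
      intro n
      have h1 : q2 ^ (n+1) < q3 ^ (n+1) :=
        pow_lt_pow_left₀ hq23 hq20.le (by omega)
      have h2 : q2 ^ (n+1) < sSup (MPN.NS C f^[n+1]) := by
        rw [← MPN.coneNorm_eq]
        exact h1.trans_le (hNm n)
      obtain ⟨s, hs, hlt⟩ := exists_lt_of_lt_csSup (MPN.NS_nonempty h0) h2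
      obtain ⟨x, hx, hx1, rfl⟩ := hs
      exact ⟨x, hx, hx1, hlt⟩
    have hq1r : q1 ≤ coneSpecRad C f :=
      MPN.le_coneSpecRad hC hfC hfcont hfcomp hfhom hMf1 hMfB hq10 hq12 hq2M hgrow
    linarith
end
end

section
/- For each integer k ≥ 3, let ε_k = (1/2)(1 − 1/(2^k − 1)) and define φ_k : [0,1] → [0,1] by φ_k(t) = t² for 0 ≤ t ≤ (1/2)^k and φ_k(t) = (1/2)^{2k} + ε_k(t − (1/2)^k) for (1/2)^k ≤ t ≤ 1; let T_k : K → K be defined by (T_k f)(t) = f(φ_k(t)), and let T : K → K be defined by (Tf)(t) = f(t/2). Then each T_k is a continuous compact map of K into K, ‖T − T_k‖_K → 0 as k → ∞, r_K(T_k) = 0 for every k ≥ 3, while r_K(T) = 1/2; in particular lim_{k→∞} r_K(T_k) ≠ r_K(T). -/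
open Filter Topology Set

noncomputable section

/-- The unit interval `[0,1]` as a subset of `ℝ`. -/
abbrev I01 : Set ℝ := Set.Icc (0 : ℝ) 1

/-- The point `0 ∈ [0,1]`. -/
def pt0 : I01 := ⟨0, by norm_num⟩

/-- `Y`: the Banach space of continuous functions `f` on `[0,1]` with `f(0) = 0`,
realized as the subset `{f ∈ C([0,1], ℝ) : f 0 = 0}` of the sup-norm space `C([0,1], ℝ)`. -/
def Yset : Set C(I01, ℝ) := {f | f pt0 = 0}

/-- `f` is convex on `[0,1]`. -/
def ConvexOn01 (f : C(I01, ℝ)) : Prop :=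
  ∀ a b : ℝ, 0 ≤ a → 0 ≤ b → a + b = 1 → ∀ s t u : I01,
    (u : ℝ) = a * (s : ℝ) + b * (t : ℝ) → f u ≤ a * f s + b * f t

/-- The cone `K = {f ∈ Y : f is nonnegative and convex on [0,1]}`. -/
def Kset : Set C(I01, ℝ) := {f | f pt0 = 0 ∧ (∀ t, 0 ≤ f t) ∧ ConvexOn01 f}

/-- The map `t ↦ t/2` on `[0,1]`. -/
def halfCM : C(I01, I01) :=
  ⟨fun t => ⟨(t : ℝ) / 2, ⟨by have := t.2.1; linarith, by have := t.2.2; linarith⟩⟩,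
    by exact Continuous.subtype_mk (continuous_subtype_val.div_const 2) _⟩

/-- The map `T : (Tf)(t) = f(t/2)` on continuous functions on `[0,1]`. -/
def Thalf (f : C(I01, ℝ)) : C(I01, ℝ) := f.comp halfCM

/-- The cone spectrum of a map `S : K → K`:
`σ_K(S) = {ρ ≥ 0 : S f = ρ f for some f ∈ K, f ≠ 0}`. -/
def coneSpectrumK (S : C(I01, ℝ) → C(I01, ℝ)) : Set ℝ :=
  {ρ : ℝ | 0 ≤ ρ ∧ ∃ f ∈ Kset, f ≠ 0 ∧ S f = ρ • f}

/-- The cone spectral radius `r_K(S) = sup_{f ∈ K} limsup_m ‖S^m f‖^{1/m}`. -/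
def coneSpecRadK (S : C(I01, ℝ) → C(I01, ℝ)) : ℝ :=
  sSup {r : ℝ | ∃ f ∈ Kset,
    r = Filter.limsup (fun m : ℕ => ‖S^[m] f‖ ^ ((m : ℝ)⁻¹)) Filter.atTop}

/-- The cone sup-norm `‖S‖_K = sup {‖S f‖ : f ∈ K, ‖f‖ ≤ 1}` of a map `S : K → K`. -/
def coneNormK (S : C(I01, ℝ) → C(I01, ℝ)) : ℝ :=
  sSup {r : ℝ | ∃ f ∈ Kset, ‖f‖ ≤ 1 ∧ r = ‖S f‖}

/-- `ε_k = (1/2)(1 - 1/(2^k - 1))`. -/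
def epsK (k : ℕ) : ℝ := (1 / 2) * (1 - 1 / (2 ^ k - 1))

/-- `φ_k(t) = t²` for `0 ≤ t ≤ (1/2)^k` and
`φ_k(t) = (1/2)^{2k} + ε_k (t - (1/2)^k)` for `(1/2)^k ≤ t ≤ 1`. -/
def phiK (k : ℕ) (t : ℝ) : ℝ :=
  if t ≤ (1 / 2 : ℝ) ^ k then t ^ 2
  else (1 / 2 : ℝ) ^ (2 * k) + epsK k * (t - (1 / 2 : ℝ) ^ k)


namespace TkAux
open BoundedContinuousFunction


def cK (k : ℕ) : ℝ := (1/2 : ℝ)^k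

lemma cK_pos (k : ℕ) : 0 < cK k := by rw [cK]; positivity

lemma cK_le_one (k : ℕ) : cK k ≤ 1 := pow_le_one₀ (by norm_num) (by norm_num)

lemma cK_le (k : ℕ) (hk : 3 ≤ k) : cK k ≤ 1/8 := by
  calc cK k ≤ (1/2:ℝ)^3 := pow_le_pow_of_le_one (by norm_num) (by norm_num) hk
  _ = 1/8 := by norm_num

lemma two_pow_big (k : ℕ) (hk : 3 ≤ k) : (8:ℝ) ≤ 2^k := by
  calc (8:ℝ) = 2^3 := by norm_num
  _ ≤ 2^k := by exact pow_le_pow_right₀ (by norm_num) hk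

lemma cK_eq (k : ℕ) : cK k = 1 / (2^k : ℝ) := by
  rw [cK, div_pow, one_pow]

lemma epsK_facts (k : ℕ) (hk : 3 ≤ k) :
    2 * cK k ≤ epsK k ∧ epsK k < 1/2 ∧ 1/2 - epsK k ≤ cK k ∧ 0 < epsK k := by
  have hx := two_pow_big k hk
  have hck := cK_eq k
  have hc8 := cK_le k hk
  have hcpos := cK_pos k
  set x : ℝ := 2^k with hxdef
  have hx1 : (0:ℝ) < x - 1 := by linarith
  have he : epsK k = 1/2 * (1 - 1/(x-1)) := by rw [epsK]
  have hy0 : (0:ℝ) < 1/(x-1) := by positivity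
  have hy7 : 1/(x-1) ≤ 1/7 := by
    apply div_le_div_of_nonneg_left (by norm_num) (by norm_num) (by linarith)
  refine ⟨by rw [he]; linarith, by rw [he]; linarith, ?_, by rw [he]; linarith⟩
  have h1 : 1/2 - epsK k = 1/(2*(x-1)) := by rw [he]; field_simp; ring
  rw [h1, hck, div_le_div_iff₀ (by linarith) (by linarith)]
  linarith


lemma phiK_eq (k : ℕ) (t : ℝ) :
    phiK k t = if t ≤ cK k then t^2 else (cK k)^2 + epsK k * (t - cK k) := by
  rw [phiK, cK, ← pow_mul, mul_comm k 2]

def slopeK (k : ℕ) (u : ℝ) : ℝ := if u ≤ cK k then 2*u else epsK k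

lemma slopeK_nonneg (k : ℕ) (hk : 3 ≤ k) {u : ℝ} (hu : 0 ≤ u) : 0 ≤ slopeK k u := by
  rw [slopeK]; split
  · linarith
  · linarith [(epsK_facts k hk).2.2.2]

lemma slopeK_le_half (k : ℕ) (hk : 3 ≤ k) (u : ℝ) : slopeK k u ≤ 1/2 := by
  obtain ⟨h1, h2, h3, h4⟩ := epsK_facts k hk
  have := cK_le k hk
  rw [slopeK]; split
  · linarith
  · linarith

/-- supporting line at u -/
lemma phiK_supp (k : ℕ) (hk : 3 ≤ k) {u : ℝ} (hu : 0 ≤ u) (t : ℝ) :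
    phiK k u + slopeK k u * (t - u) ≤ phiK k t := by
  obtain ⟨h1, h2, h3, h4⟩ := epsK_facts k hk
  have hc := cK_pos k
  rw [phiK_eq, phiK_eq, slopeK]
  rcases le_or_gt u (cK k) with hut | hut <;> rcases le_or_gt t (cK k) with htt | htt <;>
    simp only [hut, htt, if_pos, if_neg, not_le, if_true, if_false]
  · nlinarith [sq_nonneg (t - u)]
  · nlinarith [sq_nonneg (cK k - u)]
  · nlinarith [sq_nonneg (t - cK k)]
  · nlinarith

lemma phiK_mono (k : ℕ) (hk : 3 ≤ k) {s t : ℝ} (hs : 0 ≤ s) (hst : s ≤ t) :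
    phiK k s ≤ phiK k t := by
  have h := phiK_supp k hk hs t
  nlinarith [slopeK_nonneg k hk hs]

lemma phiK_nonneg (k : ℕ) (hk : 3 ≤ k) {t : ℝ} (ht : 0 ≤ t) : 0 ≤ phiK k t := by
  have h0 : phiK k 0 = 0 := by rw [phiK_eq, if_pos (le_of_lt (cK_pos k))]; ring
  have := phiK_mono k hk le_rfl ht
  linarith

lemma phiK_le (k : ℕ) (hk : 3 ≤ k) {t : ℝ} (ht0 : 0 ≤ t) (ht1 : t ≤ 1) :
    phiK k t ≤ 3/4 * t := by
  obtain ⟨h1, h2, h3, h4⟩ := epsK_facts k hk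
  have hc := cK_pos k
  have hc8 := cK_le k hk
  rw [phiK_eq]; split
  · nlinarith
  · push_neg at *; nlinarith

lemma phiK_lip (k : ℕ) (hk : 3 ≤ k) {s t : ℝ} (hs : 0 ≤ s) (ht : 0 ≤ t) :
    |phiK k s - phiK k t| ≤ 1/2 * |s - t| := by
  have key : ∀ a b : ℝ, 0 ≤ a → 0 ≤ b → a ≤ b → phiK k b - phiK k a ≤ 1/2 * (b - a) := by
    intro a b ha hb hab
    have h := phiK_supp k hk hb a
    have h2 := slopeK_le_half k hk b
    have h3 := slopeK_nonneg k hk hb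
    nlinarith
  rcases le_total s t with h | h
  · rw [abs_of_nonpos (by nlinarith [phiK_mono k hk hs h]), abs_of_nonpos (by linarith)]
    have := key s t hs ht h; linarith
  · rw [abs_of_nonneg (by nlinarith [phiK_mono k hk ht h]), abs_of_nonneg (by linarith)]
    have := key t s ht hs h; linarith

lemma phiK_convex (k : ℕ) (hk : 3 ≤ k) {a b s t : ℝ} (ha : 0 ≤ a) (hb : 0 ≤ b)
    (hab : a + b = 1) (hs : 0 ≤ s) (ht : 0 ≤ t) :
    phiK k (a*s + b*t) ≤ a * phiK k s + b * phiK k t := by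
  have hu : 0 ≤ a*s + b*t := by positivity
  set u := a*s + b*t with hudef
  have h1 := mul_le_mul_of_nonneg_left (phiK_supp k hk hu s) ha
  have h2 := mul_le_mul_of_nonneg_left (phiK_supp k hk hu t) hb
  have hsum : a * (phiK k u + slopeK k u * (s - u)) + b * (phiK k u + slopeK k u * (t - u))
      = phiK k u := by
    linear_combination (phiK k u - slopeK k u * u) * hab - slopeK k u * hudef
  linarith

lemma phiK_mem (k : ℕ) (hk : 3 ≤ k) {t : ℝ} (ht : t ∈ I01) : phiK k t ∈ I01 := by
  obtain ⟨h0, h1⟩ := ht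
  exact ⟨phiK_nonneg k hk h0, by nlinarith [phiK_le k hk h0 h1]⟩

lemma phiK_zero (k : ℕ) : phiK k 0 = 0 := by
  rw [phiK_eq, if_pos (le_of_lt (cK_pos k))]; ring

lemma phiK_sq (k : ℕ) {t : ℝ} (ht : t ≤ cK k) : phiK k t = t^2 := by
  rw [phiK_eq, if_pos ht]

lemma phiK_continuous (k : ℕ) : Continuous (phiK k) := by
  have : phiK k = fun t => if t ≤ cK k then t^2 else (cK k)^2 + epsK k * (t - cK k) := by
    funext t; exact phiK_eq k t
  rw [this]
  apply Continuous.if_le (by continuity) (by continuity) continuous_id continuous_const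
  intro x hx; simp only [id_eq] at hx; rw [hx]; ring

/-- half minus phi bound -/
lemma half_sub_phiK (k : ℕ) (hk : 3 ≤ k) {t : ℝ} (ht0 : 0 ≤ t) (ht1 : t ≤ 1) :
    0 ≤ t/2 - phiK k t ∧ t/2 - phiK k t ≤ 2 * cK k := by
  obtain ⟨h1, h2, h3, h4⟩ := epsK_facts k hk
  have hc := cK_pos k
  have hc8 := cK_le k hk
  rw [phiK_eq]; split
  · constructor <;> nlinarith
  · push_neg at *; constructor <;> nlinarith


def pt1 : I01 := ⟨1, by norm_num⟩

lemma norm_apply_le (f : C(I01, ℝ)) (t : I01) : |f t| ≤ ‖f‖ := by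
  have := f.norm_coe_le_norm t
  rwa [Real.norm_eq_abs] at this

lemma Kmono {f : C(I01, ℝ)} (hf : f ∈ Kset) {s t : I01} (h : (s:ℝ) ≤ (t:ℝ)) :
    f s ≤ f t := by
  obtain ⟨h0, hnn, hcx⟩ := hf
  rcases eq_or_lt_of_le t.2.1 with ht0 | ht0
  · have hs : s = t := Subtype.ext (le_antisymm (h.trans (by rw [← ht0])) (by
      have := s.2.1; rw [← ht0] at h ⊢; linarith))
    rw [hs]
  · have hb0 : 0 ≤ (s:ℝ)/(t:ℝ) := div_nonneg s.2.1 (le_of_lt ht0)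
    have hb1 : (s:ℝ)/(t:ℝ) ≤ 1 := (div_le_one ht0).mpr h
    have := hcx (1 - (s:ℝ)/(t:ℝ)) ((s:ℝ)/(t:ℝ)) (by linarith) hb0 (by ring)
      pt0 t s (by field_simp [pt0]; rw [show ((pt0 : I01) : ℝ) = 0 from rfl]; ring)
    rw [h0, mul_zero, zero_add] at this
    calc f s ≤ (s:ℝ)/(t:ℝ) * f t := this
    _ ≤ 1 * f t := by apply mul_le_mul_of_nonneg_right hb1 (hnn t)
    _ = f t := one_mul _

lemma Kval_le {f : C(I01, ℝ)} (hf : f ∈ Kset) (s : I01) : f s ≤ (s:ℝ) * ‖f‖ := by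
  obtain ⟨h0, hnn, hcx⟩ := hf
  have := hcx (1 - (s:ℝ)) (s:ℝ) (by linarith [s.2.2]) s.2.1 (by ring) pt0 pt1 s
    (by simp [pt0, pt1])
  rw [h0, mul_zero, zero_add] at this
  calc f s ≤ (s:ℝ) * f pt1 := this
  _ ≤ (s:ℝ) * ‖f‖ := by
      apply mul_le_mul_of_nonneg_left _ s.2.1
      exact le_trans (le_abs_self _) (norm_apply_le f pt1)

lemma Klip {f : C(I01, ℝ)} (hf : f ∈ Kset) {s t : I01}
    (hs : (s:ℝ) ≤ 3/4) (ht : (t:ℝ) ≤ 3/4) :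
    |f s - f t| ≤ 4 * ‖f‖ * |(s:ℝ) - (t:ℝ)| := by
  have hnorm : 0 ≤ ‖f‖ := norm_nonneg f
  have key : ∀ a b : I01, (a:ℝ) ≤ 3/4 → (b:ℝ) ≤ 3/4 → (a:ℝ) ≤ (b:ℝ) →
      f b - f a ≤ 4 * ‖f‖ * ((b:ℝ) - (a:ℝ)) := by
    intro a b ha hb hab
    obtain ⟨h0, hnn, hcx⟩ := hf
    have h1a : (0:ℝ) < 1 - (a:ℝ) := by linarith
    set lb := ((b:ℝ) - (a:ℝ))/(1 - (a:ℝ)) with hlb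
    have hlb0 : 0 ≤ lb := div_nonneg (by linarith) (by linarith)
    have hcvx := hcx (1 - lb) lb (by
      rw [hlb, sub_nonneg, div_le_one h1a]; linarith [b.2.2]) hlb0 (by ring) a pt1 b (by
      rw [hlb]; field_simp [pt1]; rw [show ((pt1 : I01) : ℝ) = 1 from rfl]; ring)
    have hfa := hnn a
    have hf1 : f pt1 ≤ ‖f‖ := le_trans (le_abs_self _) (norm_apply_le f pt1)
    have hlbb : lb ≤ 4 * ((b:ℝ) - (a:ℝ)) := by
      rw [hlb, div_le_iff₀ h1a]; nlinarith
    nlinarith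
  rcases le_total (s:ℝ) (t:ℝ) with h | h
  · rw [abs_of_nonpos (by linarith [Kmono hf h]), abs_of_nonpos (by linarith)]
    have := key s t hs ht h; linarith
  · rw [abs_of_nonneg (by linarith [Kmono hf h]), abs_of_nonneg (by linarith)]
    have := key t s ht hs h; linarith

lemma zero_mem_Kset : (0 : C(I01, ℝ)) ∈ Kset := by
  refine ⟨rfl, fun t => le_refl _, fun a b ha hb hab s t u hu => ?_⟩
  simp

def idCM : C(I01, ℝ) := ⟨fun t => (t:ℝ), continuous_subtype_val⟩

lemma idCM_mem_Kset : idCM ∈ Kset := by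
  refine ⟨rfl, fun t => t.2.1, fun a b ha hb hab s t u hu => le_of_eq ?_⟩
  exact hu

lemma norm_idCM_le : ‖idCM‖ ≤ 1 := by
  apply ContinuousMap.norm_le idCM (by norm_num) |>.mpr
  intro t
  show ‖(t:ℝ)‖ ≤ 1
  rw [Real.norm_eq_abs, abs_of_nonneg t.2.1]
  exact t.2.2


def PhiCM (k : ℕ) : C(I01, I01) :=
  ⟨fun t => Set.projIcc (0:ℝ) 1 zero_le_one (phiK k (t:ℝ)),
   (continuous_projIcc.comp ((phiK_continuous k).comp continuous_subtype_val))⟩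

lemma PhiCM_coe (k : ℕ) (hk : 3 ≤ k) (t : I01) : ((PhiCM k t : I01) : ℝ) = phiK k (t:ℝ) := by
  show ((Set.projIcc (0:ℝ) 1 zero_le_one (phiK k (t:ℝ)) : I01) : ℝ) = phiK k (t:ℝ)
  rw [Set.projIcc_of_mem zero_le_one (phiK_mem k hk t.2)]


lemma nat_sq_le (j : ℕ) : j^2 ≤ 2^(j+4) := by
  induction j with
  | zero => norm_num
  | succ j ih =>
    rcases Nat.lt_or_ge j 3 with h | h
    · interval_cases j <;> norm_num
    · have h2 : (j+1)^2 ≤ 2 * j^2 := by nlinarith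
      calc (j+1)^2 ≤ 2 * j^2 := h2
      _ ≤ 2 * 2^(j+4) := by omega
      _ = 2^(j+1+4) := by ring

lemma nat_key (k m : ℕ) (hk : 3 ≤ k) (hm : 6*k ≤ m) : m^2 ≤ 64 * (k * 2^(m - 3*k)) := by
  set j := m - 3*k with hj
  have h2j : m ≤ 2*j := by omega
  have h1 : m^2 ≤ 4 * j^2 := by nlinarith
  have h2 := nat_sq_le j
  have h3 : (2:ℕ)^(j+4) = 16 * 2^j := by rw [pow_add]; ring
  have hk1 : 1 ≤ k := by omega
  calc m^2 ≤ 4 * j^2 := h1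
  _ ≤ 4 * (16 * 2^j) := by omega
  _ = 64 * (1 * 2^j) := by ring
  _ ≤ 64 * (k * 2^j) := by
      have := Nat.mul_le_mul_right (2^j) hk1
      omega

-- iterate bound for Phi
lemma Phi_iter_le34 (k : ℕ) (hk : 3 ≤ k) (m : ℕ) (t : I01) :
    (((fun x => PhiCM k x)^[m] t : I01) : ℝ) ≤ (3/4:ℝ)^m := by
  induction m with
  | zero => simpa using t.2.2
  | succ m ih =>
    rw [Function.iterate_succ_apply']
    set s := (fun x => PhiCM k x)^[m] t with hs
    rw [PhiCM_coe k hk s]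
    calc phiK k (s:ℝ) ≤ 3/4 * (s:ℝ) := phiK_le k hk s.2.1 s.2.2
    _ ≤ 3/4 * (3/4:ℝ)^m := by linarith
    _ = (3/4:ℝ)^(m+1) := by rw [pow_succ]; ring

lemma Phi_iter_sq (k : ℕ) (hk : 3 ≤ k) (j : ℕ) (t : I01) :
    (((fun x => PhiCM k x)^[3*k + j] t : I01) : ℝ) ≤ cK k ^ (2^j) := by
  induction j with
  | zero =>
    have h := Phi_iter_le34 k hk (3*k) t
    have : ((3:ℝ)/4)^(3*k) ≤ cK k := by
      rw [show (3:ℝ)/4 = (3/4 : ℝ) from rfl, cK]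
      calc ((3:ℝ)/4)^(3*k) = (((3:ℝ)/4)^3)^k := by rw [← pow_mul]
      _ ≤ ((1:ℝ)/2)^k := by
          apply pow_le_pow_left₀ (by norm_num) (by norm_num)
    simpa using h.trans this
  | succ j ih =>
    have hseq : 3*k + (j+1) = (3*k + j) + 1 := by omega
    rw [hseq, Function.iterate_succ_apply']
    set s := (fun x => PhiCM k x)^[3*k + j] t with hs
    rw [PhiCM_coe k hk s]
    have hsc : (s:ℝ) ≤ cK k := ih.trans (by
      apply pow_le_of_le_one (le_of_lt (cK_pos k)) (cK_le_one k)
      positivity)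
    rw [phiK_sq k hsc]
    have e1 : (s:ℝ)^2 ≤ (cK k ^ (2^j))^2 := pow_le_pow_left₀ s.2.1 ih 2
    have e2 : (cK k ^ (2^j))^2 = cK k ^ (2^(j+1)) := by
      rw [← pow_mul, pow_succ]
    rw [← e2]; exact e1


section S
variable {k : ℕ} (hk : 3 ≤ k) (S : C(I01, ℝ) → C(I01, ℝ))
  (hS : ∀ f : C(I01, ℝ), ∀ t s : I01, (s : ℝ) = phiK k (t : ℝ) → S f t = f s)

include hk hS

lemma S_apply (f : C(I01, ℝ)) (t : I01) : S f t = f (PhiCM k t) :=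
  hS f t (PhiCM k t) (PhiCM_coe k hk t)

lemma S_eq : S = fun f => f.comp (PhiCM k) := by
  funext f
  exact ContinuousMap.ext fun t => S_apply hk S hS f t

lemma S_mapsTo : Set.MapsTo S Kset Kset := by
  intro f hf
  obtain ⟨h0, hnn, hcx⟩ := hf
  have hf' : f ∈ Kset := ⟨h0, hnn, hcx⟩
  refine ⟨?_, ?_, ?_⟩
  · rw [S_apply hk S hS f pt0]
    have : PhiCM k pt0 = pt0 := Subtype.ext (by
      rw [PhiCM_coe k hk pt0]; show phiK k 0 = 0; exact phiK_zero k)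
    rw [this, h0]
  · intro t; rw [S_apply hk S hS f t]; exact hnn _
  · intro a b ha hb hab s t u hu
    rw [S_apply hk S hS f s, S_apply hk S hS f t, S_apply hk S hS f u]
    set ps := PhiCM k s with hps
    set pt := PhiCM k t with hpt
    have hps' := PhiCM_coe k hk s
    have hpt' := PhiCM_coe k hk t
    have hpu' := PhiCM_coe k hk u
    have hwmem : a * (ps:ℝ) + b * (pt:ℝ) ∈ I01 := by
      constructor
      · have := ps.2.1; have := pt.2.1; positivity
      · have h1 := ps.2.2; have h2 := pt.2.2
        nlinarith
    set w : I01 := ⟨a * (ps:ℝ) + b * (pt:ℝ), hwmem⟩ with hw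
    have step1 : f (PhiCM k u) ≤ f w := by
      apply Kmono hf'
      rw [hpu', hu]
      show phiK k (a * (s:ℝ) + b * (t:ℝ)) ≤ a * (ps:ℝ) + b * (pt:ℝ)
      rw [hps', hpt']
      exact phiK_convex k hk ha hb hab s.2.1 t.2.1
    have step2 : f w ≤ a * f ps + b * f pt := hcx a b ha hb hab ps pt w rfl
    linarith

lemma S_continuousOn : ContinuousOn S Kset := by
  rw [S_eq hk S hS]
  exact (ContinuousMap.continuous_precomp (PhiCM k)).continuousOn

lemma S_iterate (f : C(I01, ℝ)) (m : ℕ) (t : I01) :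
    (S^[m] f) t = f ((fun x => PhiCM k x)^[m] t) := by
  induction m generalizing f t with
  | zero => simp
  | succ m ih =>
    rw [Function.iterate_succ_apply, Function.iterate_succ_apply]
    rw [ih (S f) t, S_apply hk S hS f]
    rw [← Function.iterate_succ_apply, Function.iterate_succ_apply']


lemma S_compact (D : Set C(I01, ℝ)) (hD : D ⊆ Kset) (hbd : Bornology.IsBounded D) :
    IsCompact (closure (S '' D)) := by
  obtain ⟨M0, hM0⟩ := isBounded_iff_forall_norm_le.mp hbd
  set M : ℝ := max M0 0 with hM
  have hMnn : 0 ≤ M := le_max_right _ _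
  have hMb : ∀ f ∈ D, ‖f‖ ≤ M := fun f hf => (hM0 f hf).trans (le_max_left _ _)
  -- uniform bounds on images
  have himgval : ∀ g ∈ S '' D, ∀ x : I01, g x ∈ Set.Icc (-M) M := by
    rintro g ⟨f, hfD, rfl⟩ x
    rw [S_apply hk S hS f x]
    have h1 : |f (PhiCM k x)| ≤ ‖f‖ := by
      have := f.norm_coe_le_norm (PhiCM k x); rwa [Real.norm_eq_abs] at this
    have h2 := abs_le.mp (h1.trans (hMb f hfD))
    exact ⟨h2.1, h2.2⟩
  have himglip : ∀ g ∈ S '' D, ∀ x y : I01, |g x - g y| ≤ (2*M) * |(x:ℝ) - (y:ℝ)| := by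
    rintro g ⟨f, hfD, rfl⟩ x y
    rw [S_apply hk S hS f x, S_apply hk S hS f y]
    have hx34 : ((PhiCM k x : I01):ℝ) ≤ 3/4 := by
      rw [PhiCM_coe k hk x]
      have := phiK_le k hk x.2.1 x.2.2
      nlinarith [x.2.2]
    have hy34 : ((PhiCM k y : I01):ℝ) ≤ 3/4 := by
      rw [PhiCM_coe k hk y]
      have := phiK_le k hk y.2.1 y.2.2
      nlinarith [y.2.2]
    refine le_trans (Klip (hD hfD) hx34 hy34) ?_
    have hstep : 4 * ‖f‖ * |((PhiCM k x : I01):ℝ) - ((PhiCM k y : I01):ℝ)|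
        ≤ 4 * M * (1/2 * |(x:ℝ) - (y:ℝ)|) := by
      rw [PhiCM_coe k hk x, PhiCM_coe k hk y]
      apply mul_le_mul
      · exact mul_le_mul_of_nonneg_left (hMb f hfD) (by norm_num)
      · exact phiK_lip k hk x.2.1 y.2.1
      · positivity
      · positivity
    refine hstep.trans (le_of_eq (by ring))
  -- move to bounded continuous functions
  set E := ContinuousMap.isometryEquivBoundedOfCompact I01 ℝ with hE
  set A : Set (I01 →ᵇ ℝ) := E '' (S '' D) with hA
  have hcmpA : IsCompact (closure A) := by
    apply BoundedContinuousFunction.arzela_ascoli (Set.Icc (-M) M) isCompact_Icc A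
    · rintro g x ⟨g0, hg0, rfl⟩
      exact himgval g0 hg0 x
    · apply Metric.equicontinuous_of_continuity_modulus (fun d => (2*M) * d)
      · have : Tendsto (fun d : ℝ => (2*M) * d) (nhds 0) (nhds ((2*M) * 0)) :=
          (continuous_const.mul continuous_id).tendsto 0
        simpa using this
      · rintro x y ⟨g, hgA⟩
        obtain ⟨g0, hg0, rfl⟩ := hgA
        show dist (g0 x) (g0 y) ≤ (2*M) * dist x y
        rw [Real.dist_eq, Subtype.dist_eq, Real.dist_eq]
        exact himglip g0 hg0 x y
  -- transfer back
  have hcl : closure (S '' D) = E.symm '' closure A := by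
    rw [hA, show closure (⇑E '' (S '' D)) = ⇑E.toHomeomorph '' closure (S '' D) from
      (E.toHomeomorph.image_closure (S '' D)).symm, ← Set.image_comp]
    simp
  rw [hcl]
  exact hcmpA.image E.symm.continuous


lemma S_pow_norm_tendsto {f : C(I01, ℝ)} (hf : f ∈ Kset) :
    Tendsto (fun m : ℕ => ‖S^[m] f‖ ^ ((m : ℝ)⁻¹)) atTop (nhds 0) := by
  set B : ℝ := max 1 ‖f‖ with hB
  have hB1 : (1:ℝ) ≤ B := le_max_left _ _
  have hB0 : (0:ℝ) ≤ B := by linarith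
  -- norm bound
  have hnorm : ∀ m, 3*k ≤ m → ‖S^[m] f‖ ≤ (1/2:ℝ)^(k * 2^(m - 3*k)) * B := by
    intro m hm
    apply (ContinuousMap.norm_le _ (mul_nonneg (by positivity) hB0)).mpr
    intro t
    rw [S_iterate hk S hS f m t]
    set s := (fun x => PhiCM k x)^[m] t with hs
    have hfs0 : 0 ≤ f s := hf.2.1 s
    rw [Real.norm_eq_abs, abs_of_nonneg hfs0]
    have h1 : f s ≤ (s:ℝ) * ‖f‖ := Kval_le hf s
    have h2 : (s:ℝ) ≤ cK k ^ (2^(m - 3*k)) := by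
      have := Phi_iter_sq k hk (m - 3*k) t
      rwa [Nat.add_sub_cancel' hm] at this
    have h3 : cK k ^ (2^(m-3*k)) = (1/2:ℝ)^(k * 2^(m-3*k)) := by
      rw [cK, ← pow_mul]
    have hfn : ‖f‖ ≤ B := le_max_right _ _
    have hs0 : (0:ℝ) ≤ (s:ℝ) := s.2.1
    calc f s ≤ (s:ℝ) * ‖f‖ := h1
    _ ≤ (1/2:ℝ)^(k * 2^(m-3*k)) * B := by
        rw [← h3]
        apply mul_le_mul h2 hfn (norm_nonneg f) (pow_nonneg (le_of_lt (cK_pos k)) _)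
  -- the comparison sequence
  set q : ℝ := (1/2:ℝ) ^ ((64:ℝ)⁻¹) with hq
  have hq0 : 0 ≤ q := Real.rpow_nonneg (by norm_num) _
  have hq1 : q < 1 := Real.rpow_lt_one (by norm_num) (by norm_num) (by norm_num)
  have hbound : ∀ m, max (6*k) 1 ≤ m → ‖S^[m] f‖ ^ ((m:ℝ)⁻¹) ≤ q^m * B := by
    intro m hm
    have hm6 : 6*k ≤ m := le_trans (le_max_left _ _) hm
    have hm1 : 1 ≤ m := le_trans (le_max_right _ _) hm
    have hm0 : (0:ℝ) < m := by exact_mod_cast hm1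
    have hm3 : 3*k ≤ m := by omega
    set N : ℕ := k * 2^(m - 3*k) with hN
    have step1 : ‖S^[m] f‖ ^ ((m:ℝ)⁻¹) ≤ ((1/2:ℝ)^N * B) ^ ((m:ℝ)⁻¹) :=
      Real.rpow_le_rpow (norm_nonneg _) (hnorm m hm3) (by positivity)
    have step2 : ((1/2:ℝ)^N * B) ^ ((m:ℝ)⁻¹)
        = ((1/2:ℝ) ^ ((N:ℝ) * (m:ℝ)⁻¹)) * B ^ ((m:ℝ)⁻¹) := by
      rw [Real.mul_rpow (by positivity) hB0, ← Real.rpow_natCast (1/2:ℝ) N,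
        ← Real.rpow_mul (by norm_num)]
    have hexp : (64:ℝ)⁻¹ * m ≤ (N:ℝ) * (m:ℝ)⁻¹ := by
      have hcast : (m:ℝ) * (m:ℝ) ≤ 64 * (N:ℝ) := by
        have := nat_key k m hk hm6
        rw [pow_two] at this
        exact_mod_cast this
      rw [← div_eq_mul_inv, le_div_iff₀ hm0]
      linarith
    have step3 : (1/2:ℝ) ^ ((N:ℝ) * (m:ℝ)⁻¹) ≤ (1/2:ℝ) ^ ((64:ℝ)⁻¹ * (m:ℝ)) :=
      Real.rpow_le_rpow_of_exponent_ge (by norm_num) (by norm_num) hexp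
    have hminv : (m:ℝ)⁻¹ ≤ 1 := by
      rw [← one_div, div_le_one hm0]; exact_mod_cast hm1
    have step4 : B ^ ((m:ℝ)⁻¹) ≤ B := by
      have := Real.rpow_le_rpow_of_exponent_le hB1 hminv
      rwa [Real.rpow_one] at this
    have step5 : (1/2:ℝ) ^ ((64:ℝ)⁻¹ * (m:ℝ)) = q^m := by
      rw [Real.rpow_mul (by norm_num : (0:ℝ) ≤ 1/2), Real.rpow_natCast]
    calc ‖S^[m] f‖ ^ ((m:ℝ)⁻¹) ≤ ((1/2:ℝ)^N * B) ^ ((m:ℝ)⁻¹) := step1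
    _ = ((1/2:ℝ) ^ ((N:ℝ) * (m:ℝ)⁻¹)) * B ^ ((m:ℝ)⁻¹) := step2
    _ ≤ ((1/2:ℝ) ^ ((64:ℝ)⁻¹ * (m:ℝ))) * B := by
        apply mul_le_mul step3 step4 (Real.rpow_nonneg hB0 _) (Real.rpow_nonneg (by norm_num) _)
    _ = q^m * B := by rw [step5]
  apply squeeze_zero' (Filter.Eventually.of_forall (fun m => Real.rpow_nonneg (norm_nonneg _) _))
    (Filter.eventually_atTop.mpr ⟨max (6*k) 1, hbound⟩)
  have h := (tendsto_pow_atTop_nhds_zero_of_lt_one hq0 hq1).mul_const B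
  simpa using h

lemma S_specRad_zero (hzK : (0 : C(I01, ℝ)) ∈ Kset) : coneSpecRadK S = 0 := by
  set R := {r : ℝ | ∃ f ∈ Kset,
    r = Filter.limsup (fun m : ℕ => ‖S^[m] f‖ ^ ((m : ℝ)⁻¹)) Filter.atTop} with hR
  have hall : ∀ r ∈ R, r = 0 := by
    rintro r ⟨f, hf, rfl⟩
    exact (S_pow_norm_tendsto hk S hS hf).limsup_eq
  have h0mem : (0:ℝ) ∈ R :=
    ⟨0, hzK, ((S_pow_norm_tendsto hk S hS hzK).limsup_eq).symm⟩
  exact le_antisymm (csSup_le ⟨0, h0mem⟩ (fun r hr => le_of_eq (hall r hr)))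
    (le_csSup ⟨0, fun r hr => le_of_eq (hall r hr)⟩ h0mem)


lemma S_coneNorm_bounds :
    0 ≤ coneNormK (fun f => Thalf f - S f) ∧
      coneNormK (fun f => Thalf f - S f) ≤ 8 * cK k := by
  set NS := {r : ℝ | ∃ f ∈ Kset, ‖f‖ ≤ 1 ∧ r = ‖Thalf f - S f‖} with hNS
  have hzero : (0:ℝ) ∈ NS := by
    refine ⟨0, zero_mem_Kset, by simp, ?_⟩
    have hz : Thalf 0 - S 0 = 0 := by
      ext t
      have h1 : Thalf (0 : C(I01,ℝ)) t = 0 := rfl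
      have h2 : S (0 : C(I01,ℝ)) t = 0 := by rw [S_apply hk S hS]; rfl
      show Thalf 0 t - S 0 t = 0
      rw [h1, h2]; ring
    rw [hz, norm_zero]
  have hub : ∀ r ∈ NS, r ≤ 8 * cK k := by
    rintro r ⟨f, hf, hf1, rfl⟩
    have hc := cK_pos k
    apply (ContinuousMap.norm_le _ (by linarith)).mpr
    intro t
    show ‖Thalf f t - S f t‖ ≤ 8 * cK k
    rw [S_apply hk S hS]
    have hh : Thalf f t = f (halfCM t) := rfl
    rw [hh]
    have hhc : ((halfCM t : I01) : ℝ) = (t:ℝ)/2 := rfl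
    have h34a : ((halfCM t : I01) : ℝ) ≤ 3/4 := by rw [hhc]; have := t.2.2; linarith
    have h34b : ((PhiCM k t : I01) : ℝ) ≤ 3/4 := by
      rw [PhiCM_coe k hk t]
      have := phiK_le k hk t.2.1 t.2.2
      have := t.2.2
      linarith
    have hlip := Klip hf h34a h34b
    have hdist : |((halfCM t : I01) : ℝ) - ((PhiCM k t : I01) : ℝ)| ≤ 2 * cK k := by
      rw [hhc, PhiCM_coe k hk t]
      obtain ⟨hd0, hd1⟩ := half_sub_phiK k hk t.2.1 t.2.2
      rw [abs_of_nonneg hd0]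
      exact hd1
    rw [Real.norm_eq_abs]
    calc |f (halfCM t) - f (PhiCM k t)|
        ≤ 4 * ‖f‖ * |((halfCM t : I01) : ℝ) - ((PhiCM k t : I01) : ℝ)| := hlip
    _ ≤ 4 * 1 * (2 * cK k) := by
        apply mul_le_mul
        · have := norm_nonneg f; linarith
        · exact hdist
        · exact abs_nonneg _
        · norm_num
    _ = 8 * cK k := by ring
  constructor
  · exact le_csSup ⟨8 * cK k, hub⟩ hzero
  · exact csSup_le ⟨0, hzero⟩ hub

end S

lemma Thalf_iterate (f : C(I01, ℝ)) (m : ℕ) (t : I01) :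
    (Thalf^[m] f) t = f ((fun x => halfCM x)^[m] t) := by
  induction m generalizing f t with
  | zero => simp
  | succ m ih =>
    rw [Function.iterate_succ_apply, ih (Thalf f) t]
    show (Thalf f) _ = _
    show f (halfCM _) = _
    rw [Function.iterate_succ_apply']

lemma half_iter_coe (m : ℕ) (t : I01) :
    (((fun x => halfCM x)^[m] t : I01) : ℝ) = (t:ℝ) / 2^m := by
  induction m with
  | zero => simp
  | succ m ih =>
    rw [Function.iterate_succ_apply']
    show ((((fun x => halfCM x)^[m] t : I01) : ℝ)) / 2 = _
    rw [ih, pow_succ]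
    ring

lemma Thalf_norm_le {f : C(I01, ℝ)} (hf : f ∈ Kset) (m : ℕ) :
    ‖Thalf^[m] f‖ ≤ (1/2:ℝ)^m * ‖f‖ := by
  apply (ContinuousMap.norm_le _ (by positivity)).mpr
  intro t
  rw [Thalf_iterate f m t]
  set s := (fun x => halfCM x)^[m] t with hs
  have h0 : 0 ≤ f s := hf.2.1 s
  rw [Real.norm_eq_abs, abs_of_nonneg h0]
  have h1 := Kval_le hf s
  have h2 : (s:ℝ) ≤ (1/2:ℝ)^m := by
    rw [hs, half_iter_coe m t, div_pow, one_pow]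
    gcongr
    exact t.2.2
  calc f s ≤ (s:ℝ) * ‖f‖ := h1
  _ ≤ (1/2:ℝ)^m * ‖f‖ := mul_le_mul_of_nonneg_right h2 (norm_nonneg f)

lemma Thalf_rad : coneSpecRadK Thalf = 1/2 := by
  set R := {r : ℝ | ∃ f ∈ Kset,
    r = Filter.limsup (fun m : ℕ => ‖Thalf^[m] f‖ ^ ((m : ℝ)⁻¹)) Filter.atTop} with hR
  -- upper bound on every element
  have hub : ∀ r ∈ R, r ≤ 1/2 := by
    rintro r ⟨f, hf, rfl⟩
    set B : ℝ := max 1 ‖f‖ with hB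
    have hB1 : (1:ℝ) ≤ B := le_max_left _ _
    have hBpos : (0:ℝ) < B := by linarith
    -- comparison sequence
    set g : ℕ → ℝ := fun m => (1/2:ℝ) * B ^ ((m:ℝ)⁻¹) with hg
    have hgt : Tendsto g atTop (nhds (1/2)) := by
      have h1 : Tendsto (fun m : ℕ => B ^ ((m:ℝ)⁻¹)) atTop (nhds 1) := by
        have heq : (fun m : ℕ => B ^ ((m:ℝ)⁻¹))
            = fun m : ℕ => Real.exp (Real.log B * (m:ℝ)⁻¹) := by
          funext m; rw [Real.rpow_def_of_pos hBpos]
        rw [heq]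
        have h2 : Tendsto (fun m : ℕ => Real.log B * (m:ℝ)⁻¹) atTop (nhds 0) := by
          simpa using tendsto_const_nhds.mul (tendsto_inv_atTop_nhds_zero_nat (𝕜 := ℝ))
        have := (Real.continuous_exp.tendsto 0).comp h2
        simpa [Function.comp_def] using this
      have h3 := (tendsto_const_nhds : Tendsto (fun _ : ℕ => (1/2:ℝ)) atTop (nhds (1/2))).mul h1
      rw [hg]
      simpa using h3
    have hle : ∀ m : ℕ, 1 ≤ m → ‖Thalf^[m] f‖ ^ ((m:ℝ)⁻¹) ≤ g m := by
      intro m hm1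
      have hm0 : (0:ℝ) < m := by exact_mod_cast hm1
      have hfn : ‖f‖ ≤ B := le_max_right _ _
      have hnorm : ‖Thalf^[m] f‖ ≤ (1/2:ℝ)^m * B :=
        (Thalf_norm_le hf m).trans (mul_le_mul_of_nonneg_left hfn (by positivity))
      have step1 : ‖Thalf^[m] f‖ ^ ((m:ℝ)⁻¹) ≤ ((1/2:ℝ)^m * B) ^ ((m:ℝ)⁻¹) :=
        Real.rpow_le_rpow (norm_nonneg _) hnorm (by positivity)
      have step2 : ((1/2:ℝ)^m * B) ^ ((m:ℝ)⁻¹)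
          = (1/2:ℝ) * B ^ ((m:ℝ)⁻¹) := by
        rw [Real.mul_rpow (by positivity) (le_of_lt hBpos), ← Real.rpow_natCast (1/2:ℝ) m,
          ← Real.rpow_mul (by norm_num), mul_inv_cancel₀ (ne_of_gt hm0), Real.rpow_one]
      rw [step2] at step1
      exact step1
    have hev : (fun m : ℕ => ‖Thalf^[m] f‖ ^ ((m:ℝ)⁻¹)) ≤ᶠ[atTop] g :=
      Filter.eventually_atTop.mpr ⟨1, hle⟩
    have hcb : IsCoboundedUnder (· ≤ ·) atTop (fun m : ℕ => ‖Thalf^[m] f‖ ^ ((m:ℝ)⁻¹)) :=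
      isCoboundedUnder_le_of_eventually_le atTop (x := 0)
        (Filter.Eventually.of_forall fun m => Real.rpow_nonneg (norm_nonneg _) _)
    have hbd : IsBoundedUnder (· ≤ ·) atTop g := hgt.isBoundedUnder_le
    calc Filter.limsup (fun m : ℕ => ‖Thalf^[m] f‖ ^ ((m:ℝ)⁻¹)) atTop
        ≤ Filter.limsup g atTop := Filter.limsup_le_limsup hev hcb hbd
    _ = 1/2 := hgt.limsup_eq
  -- membership of 1/2
  have hmem : (1/2:ℝ) ∈ R := by
    refine ⟨idCM, idCM_mem_Kset, ?_⟩
    have hconst : ∀ m : ℕ, 1 ≤ m → ‖Thalf^[m] idCM‖ ^ ((m:ℝ)⁻¹) = 1/2 := by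
      intro m hm1
      have hm0 : (0:ℝ) < m := by exact_mod_cast hm1
      have hn : ‖Thalf^[m] idCM‖ = (1/2:ℝ)^m := by
        apply le_antisymm
        · have := Thalf_norm_le idCM_mem_Kset m
          calc ‖Thalf^[m] idCM‖ ≤ (1/2:ℝ)^m * ‖idCM‖ := this
          _ ≤ (1/2:ℝ)^m * 1 := mul_le_mul_of_nonneg_left norm_idCM_le (by positivity)
          _ = (1/2:ℝ)^m := mul_one _
        · have h := (Thalf^[m] idCM).norm_coe_le_norm pt1
          rw [Thalf_iterate idCM m pt1] at h
          have hval : idCM ((fun x => halfCM x)^[m] pt1) = (1/2:ℝ)^m := by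
            show (((fun x => halfCM x)^[m] pt1 : I01) : ℝ) = _
            rw [half_iter_coe m pt1]
            show (1:ℝ) / 2^m = _
            rw [div_pow, one_pow]
          rw [hval, Real.norm_eq_abs, abs_of_nonneg (by positivity)] at h
          exact h
      rw [hn, ← Real.rpow_natCast (1/2:ℝ) m, ← Real.rpow_mul (by norm_num),
        mul_inv_cancel₀ (ne_of_gt hm0), Real.rpow_one]
    have htends : Tendsto (fun m : ℕ => ‖Thalf^[m] idCM‖ ^ ((m:ℝ)⁻¹)) atTop (nhds (1/2)) := by
      have hev2 : (fun _ : ℕ => (1/2:ℝ)) =ᶠ[atTop]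
          (fun m : ℕ => ‖Thalf^[m] idCM‖ ^ ((m:ℝ)⁻¹)) :=
        Filter.eventually_atTop.mpr ⟨1, fun m hm => (hconst m hm).symm⟩
      exact Tendsto.congr' hev2 tendsto_const_nhds
    exact htends.limsup_eq.symm
  exact le_antisymm (csSup_le ⟨1/2, hmem⟩ hub) (le_csSup ⟨1/2, hub⟩ hmem)


end TkAux

/-- Suppose that for each `k ≥ 3` the map `T_k : K → K` is given by `(T_k f)(t) = f(φ_k(t))`.
Then each `T_k` is a continuous compact map of `K` into itself, `‖T - T_k‖_K → 0` as
`k → ∞`, `r_K(T_k) = 0` for every `k ≥ 3`, while `r_K(T) = 1/2`; in particular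
`r_K(T_k)` does not converge to `r_K(T)`. -/
theorem Tk_discontinuity
    (Tk : ℕ → C(I01, ℝ) → C(I01, ℝ))
    (hTk : ∀ k, 3 ≤ k → ∀ f : C(I01, ℝ), ∀ t s : I01,
      (s : ℝ) = phiK k (t : ℝ) → Tk k f t = f s) :
    (∀ k, 3 ≤ k → Set.MapsTo (Tk k) Kset Kset ∧ ContinuousOn (Tk k) Kset ∧
        ∀ D ⊆ Kset, Bornology.IsBounded D → IsCompact (closure (Tk k '' D))) ∧
      Filter.Tendsto (fun k => coneNormK (fun f => Thalf f - Tk k f))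
        Filter.atTop (nhds 0) ∧
      (∀ k, 3 ≤ k → coneSpecRadK (Tk k) = 0) ∧
      coneSpecRadK Thalf = 1 / 2 ∧
      ¬Filter.Tendsto (fun k => coneSpecRadK (Tk k)) Filter.atTop
        (nhds (coneSpecRadK Thalf)) := by
  have hrad0 : ∀ k, 3 ≤ k → coneSpecRadK (Tk k) = 0 := fun k hk =>
    TkAux.S_specRad_zero hk (Tk k) (hTk k hk) TkAux.zero_mem_Kset
  refine ⟨?_, ?_, hrad0, TkAux.Thalf_rad, ?_⟩
  · intro k hk
    exact ⟨TkAux.S_mapsTo hk (Tk k) (hTk k hk), TkAux.S_continuousOn hk (Tk k) (hTk k hk),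
      fun D hD hbd => TkAux.S_compact hk (Tk k) (hTk k hk) D hD hbd⟩
  · have h8 : Tendsto (fun k : ℕ => 8 * TkAux.cK k) atTop (nhds 0) := by
      have := (tendsto_pow_atTop_nhds_zero_of_lt_one (by norm_num : (0:ℝ) ≤ 1/2)
        (by norm_num : (1/2:ℝ) < 1)).const_mul (8:ℝ)
      simpa [TkAux.cK] using this
    apply tendsto_of_tendsto_of_tendsto_of_le_of_le'
      (tendsto_const_nhds : Tendsto (fun _ : ℕ => (0:ℝ)) atTop (nhds 0)) h8
    · exact Filter.eventually_atTop.mpr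
        ⟨3, fun k hk => (TkAux.S_coneNorm_bounds hk (Tk k) (hTk k hk)).1⟩
    · exact Filter.eventually_atTop.mpr
        ⟨3, fun k hk => (TkAux.S_coneNorm_bounds hk (Tk k) (hTk k hk)).2⟩
  · intro hcon
    rw [TkAux.Thalf_rad] at hcon
    have hev : (fun k => coneSpecRadK (Tk k)) =ᶠ[atTop] (fun _ : ℕ => (0:ℝ)) :=
      Filter.eventually_atTop.mpr ⟨3, fun k hk => hrad0 k hk⟩
    have h0 : Tendsto (fun _ : ℕ => (0:ℝ)) atTop (nhds (1/2)) := Tendsto.congr' hev hcon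
    have := tendsto_nhds_unique h0 tendsto_const_nhds
    norm_num at this
end
end

section
/- Let C be a closed cone in a real Banach space X, let f : C → C be an order-preserving homogeneous map, and let x, y ∈ C with x ≠ 0 be such that y dominates x. If λ·x ≤ f(x) and f(y) ≤ μ·y for some λ, μ ≥ 0, then λ ≤ μ. -/
open Filter Topology Set

noncomputable section

variable {X : Type*} [NormedAddCommGroup X] [NormedSpace ℝ X] [CompleteSpace X]

/-- `y` dominates `x` in the cone `C`: there exists `β > 0` with `x ≤ β • y`. -/
def Dominates (C : Set X) (y x : X) : Prop := ∃ β : ℝ, 0 < β ∧ coneLE C x (β • y)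

lemma cone_zero_mem {C : Set X} (hC : IsClosedCone C) {x : X} (hx : x ∈ C) : (0 : X) ∈ C := by
  have := hC.2.2.1 0 le_rfl x hx
  simpa using this

lemma cone_add_mem {C : Set X} (hC : IsClosedCone C) {a b : X} (ha : a ∈ C) (hb : b ∈ C) :
    a + b ∈ C := by
  have h := hC.2.1 ha hb (by norm_num : (0:ℝ) ≤ (1/2 : ℝ)) (by norm_num : (0:ℝ) ≤ (1/2 : ℝ))
    (by norm_num)
  have h2 := hC.2.2.1 2 (by norm_num) _ h
  have : (2:ℝ) • ((1/2 : ℝ) • a + (1/2 : ℝ) • b) = a + b := by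
    rw [smul_add, smul_smul, smul_smul]; norm_num
  rwa [this] at h2

lemma cone_smul_mem {C : Set X} (hC : IsClosedCone C) {a : ℝ} (ha : 0 ≤ a) {x : X}
    (hx : x ∈ C) : a • x ∈ C := hC.2.2.1 a ha x hx

lemma coneLE_trans {C : Set X} (hC : IsClosedCone C) {a b c : X}
    (h1 : coneLE C a b) (h2 : coneLE C b c) : coneLE C a c := by
  have := cone_add_mem hC h2 h1
  unfold coneLE at *
  simpa using this

/-- Let `f : C → C` be an order-preserving homogeneous map on a closed cone `C`, and
let `x, y ∈ C` with `x ≠ 0` be such that `y` dominates `x`. If `λ • x ≤ f x` and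
`f y ≤ μ • y`, then `λ ≤ μ`. -/
theorem le_of_dominates
    (C : Set X) (hC : IsClosedCone C) (f : X → X)
    (hfC : Set.MapsTo f C C) (hfhom : IsHomog C f) (hford : IsOrdPres C f)
    (x y : X) (hx : x ∈ C) (hy : y ∈ C) (hx0 : x ≠ 0)
    (hdom : Dominates C y x)
    (lam mu : ℝ) (hlam : 0 ≤ lam) (hmu : 0 ≤ mu)
    (h1 : coneLE C (lam • x) (f x)) (h2 : coneLE C (f y) (mu • y)) :
    lam ≤ mu := by
  obtain ⟨β, hβ, hβle⟩ := hdom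
  -- main induction
  have key : ∀ k : ℕ, f^[k] x ∈ C ∧ f^[k] y ∈ C ∧
      coneLE C (lam ^ k • x) (f^[k] x) ∧
      coneLE C (f^[k] x) (β • f^[k] y) ∧
      coneLE C (f^[k] y) (mu ^ k • y) := by
    intro k
    induction k with
    | zero =>
      refine ⟨hx, hy, ?_, ?_, ?_⟩ <;> simp [coneLE]
      · exact cone_zero_mem hC hx
      · exact hβle
      · exact cone_zero_mem hC hy
    | succ k ih =>
      obtain ⟨hfx, hfy, hA, hB, hD⟩ := ih
      simp only [Function.iterate_succ_apply']
      have hlk : (0:ℝ) ≤ lam ^ k := pow_nonneg hlam k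
      have hmk : (0:ℝ) ≤ mu ^ k := pow_nonneg hmu k
      have hlkx : lam ^ k • x ∈ C := cone_smul_mem hC hlk hx
      have hmky : mu ^ k • y ∈ C := cone_smul_mem hC hmk hy
      have hβfy : β • f^[k] y ∈ C := cone_smul_mem hC hβ.le hfy
      refine ⟨hfC hfx, hfC hfy, ?_, ?_, ?_⟩
      · -- lam^(k+1) • x ≤ f^[k+1] x
        have s1 : coneLE C (f (lam ^ k • x)) (f (f^[k] x)) :=
          hford _ hlkx _ hfx hA
        rw [hfhom _ hlk _ hx] at s1
        have s2 : coneLE C (lam ^ (k+1) • x) (lam ^ k • f x) := by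
          have := cone_smul_mem hC hlk h1
          unfold coneLE at *
          rwa [smul_sub, smul_smul, ← pow_succ] at this
        exact coneLE_trans hC s2 s1
      · have s1 : coneLE C (f (f^[k] x)) (f (β • f^[k] y)) :=
          hford _ hfx _ hβfy hB
        rw [hfhom _ hβ.le _ hfy] at s1
        exact s1
      · have s1 : coneLE C (f (f^[k] y)) (f (mu ^ k • y)) :=
          hford _ hfy _ hmky hD
        rw [hfhom _ hmk _ hy] at s1
        have s2 : coneLE C (mu ^ k • f y) (mu ^ (k+1) • y) := by
          have := cone_smul_mem hC hmk h2
          unfold coneLE at *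
          rwa [smul_sub, smul_smul, ← pow_succ] at this
        exact coneLE_trans hC s1 s2
  -- combine
  have chain : ∀ k : ℕ, coneLE C (lam ^ k • x) ((β * mu ^ k) • y) := by
    intro k
    obtain ⟨hfx, hfy, hA, hB, hD⟩ := key k
    have s : coneLE C (β • f^[k] y) ((β * mu ^ k) • y) := by
      have := cone_smul_mem hC hβ.le hD
      unfold coneLE at *
      rwa [smul_sub, smul_smul] at this
    exact coneLE_trans hC (coneLE_trans hC hA hB) s
  -- now conclude
  by_contra hcon
  push_neg at hcon
  have hlam0 : 0 < lam := lt_of_le_of_lt hmu hcon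
  have hmem : ∀ k : ℕ, (β * (mu / lam) ^ k) • y - x ∈ C := by
    intro k
    have := cone_smul_mem hC (by positivity : (0:ℝ) ≤ (lam ^ k)⁻¹) (chain k)
    unfold coneLE at this
    rw [smul_sub, smul_smul, smul_smul] at this
    have e1 : (lam ^ k)⁻¹ * (β * mu ^ k) = β * (mu / lam) ^ k := by
      rw [div_pow]
      field_simp
    have e2 : (lam ^ k)⁻¹ * lam ^ k = 1 :=
      inv_mul_cancel₀ (by positivity)
    rw [e1, e2, one_smul] at this
    exact this
  have hlim : Filter.Tendsto (fun k : ℕ => (β * (mu / lam) ^ k) • y - x)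
      Filter.atTop (nhds (-x)) := by
    have h0 : Filter.Tendsto (fun k : ℕ => (mu / lam) ^ k) Filter.atTop (nhds 0) := by
      apply tendsto_pow_atTop_nhds_zero_of_lt_one
      · positivity
      · rw [div_lt_one hlam0]; exact hcon
    have : Filter.Tendsto (fun k : ℕ => (β * (mu / lam) ^ k) • y - x)
        Filter.atTop (nhds ((β * 0) • y - x)) := by
      apply Filter.Tendsto.sub_const
      exact Filter.Tendsto.smul_const ((h0.const_mul β)) y
    simpa using this
  have hmx : -x ∈ C := hC.1.mem_of_tendsto hlim (Filter.Eventually.of_forall hmem)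
  exact hx0 (hC.2.2.2 x hx hmx)
end
end

section
/- Let C be a closed cone with non-empty interior in a real Banach space X and let f : C → C be a continuous compact order-preserving homogeneous map. If f has an eigenvector in the interior of C, i.e., there exist v in the interior of C and λ ≥ 0 with f(v) = λv, then f has a continuous cone spectral radius. -/
open Filter Topology Set

noncomputable section

variable {X : Type*} [NormedAddCommGroup X] [NormedSpace ℝ X] [CompleteSpace X]

set_option linter.unusedSectionVars false
set_option linter.unusedVariables false
set_option maxHeartbeats 1000000

lemma aux_tendsto_zero (C : Set X) (hclosed : IsClosed C)
    (hpointed : ∀ x ∈ C, -x ∈ C → x = 0) (v : X)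
    (K : Set X) (hK : IsCompact K) (w : ℕ → X) (hwC : ∀ j, w j ∈ C) (hwK : ∀ j, w j ∈ K)
    (t : ℕ → ℝ) (ht : Tendsto t atTop (nhds 0)) (hord : ∀ j, t j • v - w j ∈ C) :
    Tendsto w atTop (nhds 0) := by
  apply tendsto_of_subseq_tendsto
  intro ns hns
  obtain ⟨a, haK, φ, hφ, hlim⟩ := hK.tendsto_subseq (x := fun n => w (ns n)) (fun n => hwK _)
  refine ⟨φ, ?_⟩
  have haC : a ∈ C := hclosed.mem_of_tendsto hlim (Eventually.of_forall fun n => hwC _)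
  have htc : Tendsto (fun n => t (ns (φ n))) atTop (nhds 0) :=
    ht.comp (hns.comp hφ.tendsto_atTop)
  have hlim2 : Tendsto (fun n => t (ns (φ n)) • v - w (ns (φ n))) atTop (nhds (-a)) := by
    have : Tendsto (fun n => t (ns (φ n)) • v) atTop (nhds ((0:ℝ) • v)) :=
      htc.smul_const v
    simpa using this.sub hlim
  have hna : -a ∈ C := hclosed.mem_of_tendsto hlim2 (Eventually.of_forall fun n => hord _)
  have : a = 0 := hpointed a haC hna
  simpa [this, Function.comp_def] using hlim

/-- Key lemma: eventual geometric bound on orbits. -/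
lemma aux_key (C : Set X) (hclosed : IsClosed C)
    (hscale : ∀ a : ℝ, 0 ≤ a → ∀ x ∈ C, a • x ∈ C)
    (hpointed : ∀ x ∈ C, -x ∈ C → x = 0)
    (hadd : ∀ x ∈ C, ∀ y ∈ C, x + y ∈ C)
    (v : X) (hvC : v ∈ C) (δ : ℝ) (hδ : 0 < δ)
    (hcmp : ∀ y : X, (2 * ‖y‖ / δ) • v - y ∈ C)
    (g : X → X) (hgC : Set.MapsTo g C C) (hgcomp : IsCompactMapOn C g)
    (hghom : IsHomog C g) (hgord : IsOrdPres C g)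
    (μ : ℝ) (hμ : 0 ≤ μ) (hgv : μ • v - g v ∈ C)
    (x : X) (hx : x ∈ C) (β : ℝ) (hβ : μ < β) :
    ∀ᶠ n in atTop, ‖g^[n] x‖ ≤ β ^ n := by
  classical
  have h0C : (0:X) ∈ C := by simpa using hscale 0 le_rfl v hvC
  have hβpos : 0 < β := lt_of_le_of_lt hμ hβ
  have hiterC : ∀ n, g^[n] x ∈ C := by
    intro n; induction n with
    | zero => simpa using hx
    | succ n ih => rw [Function.iterate_succ_apply']; exact hgC ih
  -- case μ = 0
  rcases eq_or_lt_of_le hμ with hμ0 | hμpos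
  · -- g y = 0 for all y ∈ C
    have hgv0 : g v = 0 := by
      refine hpointed _ (hgC hvC) ?_
      have := hgv; rw [← hμ0] at this; simpa using this
    have hgy : ∀ y ∈ C, g y = 0 := by
      intro y hy
      set c : ℝ := 2 * ‖y‖ / δ with hc
      have hcnn : 0 ≤ c := by positivity
      have h1 : (c • v) - y ∈ C := hcmp y
      have h2 : g (c • v) - g y ∈ C := hgord y hy (c • v) (hscale c hcnn v hvC) h1
      have h3 : g (c • v) = 0 := by rw [hghom c hcnn v hvC, hgv0, smul_zero]
      rw [h3] at h2
      refine hpointed _ (hgC hy) (by simpa using h2)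
    have hzero : ∀ n, 1 ≤ n → g^[n] x = 0 := by
      intro n hn
      induction n with
      | zero => omega
      | succ n ih =>
        rw [Function.iterate_succ_apply']
        rcases Nat.eq_or_lt_of_le hn with h | h
        · have : n = 0 := by omega
          subst this; simpa using hgy x hx
        · have hn1 : 1 ≤ n := by omega
          rw [ih hn1]; simpa using hgy 0 h0C
    filter_upwards [eventually_ge_atTop 1] with n hn
    rw [hzero n hn]; simp; positivity
  -- case μ > 0
  set q : ℝ := μ / β with hq
  have hq0 : 0 < q := div_pos hμpos hβpos
  have hq1 : q < 1 := (div_lt_one hβpos).2 hβ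
  set c : ℝ := 2 * ‖x‖ / δ with hc
  have hcnn : 0 ≤ c := by positivity
  set z : ℕ → X := fun n => (β⁻¹) ^ n • g^[n] x with hz
  have hzC : ∀ n, z n ∈ C := fun n => hscale _ (by positivity) _ (hiterC n)
  have hzrec : ∀ n, z (n + 1) = β⁻¹ • g (z n) := by
    intro n
    have h1 : g (z n) = (β⁻¹) ^ n • g^[n+1] x := by
      rw [hz]; simp only
      rw [hghom _ (by positivity) _ (hiterC n), Function.iterate_succ_apply']
    rw [h1, hz]; simp only
    rw [smul_smul, pow_succ]; ring_nf
  have horder : ∀ n, (c * q ^ n) • v - z n ∈ C := by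
    intro n
    induction n with
    | zero =>
      simpa [hz, hc] using hcmp x
    | succ n ih =>
      have hcoef : (0:ℝ) ≤ c * q ^ n := by positivity
      have h2 : g ((c * q ^ n) • v) - g (z n) ∈ C :=
        hgord (z n) (hzC n) _ (hscale _ hcoef v hvC) ih
      have h3 : g ((c * q ^ n) • v) = (c * q ^ n) • g v :=
        hghom _ hcoef v hvC
      have h4 : (c * q ^ n) • (μ • v - g v) ∈ C := hscale _ hcoef _ hgv
      have h2' : (c * q ^ n) • g v - g (z n) ∈ C := by rw [← h3]; exact h2
      have h5 : (c * q ^ n * μ) • v - g (z n) ∈ C := by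
        have h6 := hadd _ h4 _ h2'
        convert h6 using 1
        rw [smul_sub, smul_smul]
        abel
      have h6 : β⁻¹ • ((c * q ^ n * μ) • v - g (z n)) ∈ C :=
        hscale _ (by positivity) _ h5
      rw [hzrec n]
      convert h6 using 1
      rw [smul_sub, smul_smul]
      congr 2
      rw [hq, pow_succ]
      field_simp
  -- Claim A : (‖z n‖) is bounded
  have hbdd : ∃ R : ℝ, ∀ n, ‖z n‖ ≤ R := by
    by_contra hunb
    push_neg at hunb
    have hex : ∀ j : ℕ, ∃ n, (j:ℝ) + 1 + ‖x‖ < ‖z n‖ := by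
      intro j
      obtain ⟨n, hn⟩ := hunb ((j:ℝ) + 1 + ‖x‖)
      exact ⟨n, hn⟩
    set N : ℕ → ℕ := fun j => Nat.find (hex j) with hN
    have hNspec : ∀ j : ℕ, (j:ℝ) + 1 + ‖x‖ < ‖z (N j)‖ := fun j => Nat.find_spec (hex j)
    have hNmin : ∀ j, ∀ m < N j, ‖z m‖ ≤ (j:ℝ) + 1 + ‖x‖ := by
      intro j m hm
      have := Nat.find_min (hex j) hm
      linarith [not_lt.mp this]
    have hNpos : ∀ j, N j ≠ 0 := by
      intro j h
      have := hNspec j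
      rw [h] at this
      have hz0 : ‖z 0‖ = ‖x‖ := by simp [hz]
      rw [hz0] at this
      have : (0:ℝ) ≤ (j:ℝ) := Nat.cast_nonneg j
      linarith
    have hnormpos : ∀ j : ℕ, 0 < ‖z (N j)‖ := by
      intro j
      have h1 := hNspec j
      have h2 : (0:ℝ) ≤ (j:ℝ) := Nat.cast_nonneg j
      have h3 := norm_nonneg x
      linarith
    set w : ℕ → X := fun j => ‖z (N j)‖⁻¹ • z (N j) with hw
    have hwnorm : ∀ j, ‖w j‖ = 1 := by
      intro j
      rw [hw]; simp only [norm_smul, norm_inv, norm_norm]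
      exact inv_mul_cancel₀ (hnormpos j).ne'
    have hwC : ∀ j, w j ∈ C := fun j => hscale _ (by positivity) _ (hzC _)
    -- w j ∈ β⁻¹ • closure (g '' (C ∩ closedBall 0 1))
    have hK1 : IsCompact (closure (g '' (C ∩ Metric.closedBall 0 1))) :=
      hgcomp _ inter_subset_left (Metric.isBounded_closedBall.subset inter_subset_right)
    set K2 : Set X := (fun y => β⁻¹ • y) '' closure (g '' (C ∩ Metric.closedBall 0 1)) with hK2def
    have hK2 : IsCompact K2 := hK1.image (continuous_const_smul _)
    have hwK : ∀ j, w j ∈ K2 := by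
      intro j
      obtain ⟨m, hm⟩ := Nat.exists_eq_succ_of_ne_zero (hNpos j)
      set u : X := ‖z (N j)‖⁻¹ • z m with hu
      have huC : u ∈ C := hscale _ (by positivity) _ (hzC m)
      have hunorm : ‖u‖ ≤ 1 := by
        rw [hu, norm_smul, norm_inv, norm_norm]
        have h1 : ‖z m‖ ≤ (j:ℝ) + 1 + ‖x‖ := hNmin j m (by omega)
        have h2 := hNspec j
        have h3 := hnormpos j
        rw [inv_mul_le_iff₀ h3, mul_one]
        linarith
      have hwg : w j = β⁻¹ • g u := by
        rw [hw, hu]; simp only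
        rw [hghom _ (by positivity) _ (hzC m), hm, hzrec m, smul_comm]
      rw [hwg]
      exact ⟨g u, subset_closure ⟨u, ⟨huC, by simpa using hunorm⟩, rfl⟩, rfl⟩
    set t : ℕ → ℝ := fun j => (c * q ^ (N j)) * ‖z (N j)‖⁻¹ with ht
    have hord2 : ∀ j, t j • v - w j ∈ C := by
      intro j
      have hsc := hscale _ (by positivity : (0:ℝ) ≤ ‖z (N j)‖⁻¹) _ (horder (N j))
      rw [smul_sub, smul_smul] at hsc
      have heq : t j • v - w j = (‖z (N j)‖⁻¹ * (c * q ^ (N j))) • v - ‖z (N j)‖⁻¹ • z (N j) := by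
        rw [hw, ht]; simp only; rw [mul_comm]
      rw [heq]; exact hsc
    have htz : Tendsto t atTop (nhds 0) := by
      apply squeeze_zero (fun j => by positivity)
        (g := fun j : ℕ => c * (1 / ((j:ℝ) + 1)))
      · intro j
        rw [ht]; simp only
        have h1 : q ^ (N j) ≤ 1 := pow_le_one₀ hq0.le hq1.le
        have h2 : ‖z (N j)‖⁻¹ ≤ ((j:ℝ) + 1)⁻¹ := by
          apply inv_anti₀ (by positivity)
          have := hNspec j
          linarith [norm_nonneg x]
        calc c * q ^ (N j) * ‖z (N j)‖⁻¹ ≤ c * 1 * ((j:ℝ)+1)⁻¹ := by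
              apply mul_le_mul (mul_le_mul_of_nonneg_left h1 hcnn) h2 (by positivity)
                (by positivity)
          _ = c * (1 / ((j:ℝ) + 1)) := by ring
      · simpa using tendsto_one_div_add_atTop_nhds_zero_nat.const_mul c
    have hw0 := aux_tendsto_zero C hclosed hpointed v K2 hK2 w hwC hwK t htz hord2
    have hcontr : Tendsto (fun j => ‖w j‖) atTop (nhds 0) := by simpa using hw0.norm
    have hone : Tendsto (fun _ : ℕ => (1:ℝ)) atTop (nhds 0) :=
      hcontr.congr (fun j => hwnorm j)
    exact zero_ne_one (tendsto_nhds_unique hone tendsto_const_nhds)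
  -- Claim B : z n → 0
  obtain ⟨R, hR⟩ := hbdd
  have hRnn : 0 ≤ R := le_trans (norm_nonneg _) (hR 0)
  have hK1 : IsCompact (closure (g '' (C ∩ Metric.closedBall 0 R))) :=
    hgcomp _ inter_subset_left (Metric.isBounded_closedBall.subset inter_subset_right)
  set K2 : Set X := (fun y => β⁻¹ • y) '' closure (g '' (C ∩ Metric.closedBall 0 R)) with hK2def
  have hK2 : IsCompact K2 := hK1.image (continuous_const_smul _)
  have hwK : ∀ n, z (n+1) ∈ K2 := by
    intro n
    rw [hzrec n]
    exact ⟨g (z n), subset_closure ⟨z n, ⟨hzC n, by simpa using hR n⟩, rfl⟩, rfl⟩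
  have htz : Tendsto (fun n : ℕ => c * q ^ (n+1)) atTop (nhds 0) := by
    have : Tendsto (fun n : ℕ => q ^ n) atTop (nhds 0) :=
      tendsto_pow_atTop_nhds_zero_of_lt_one hq0.le hq1
    have := (this.const_mul c).comp (tendsto_add_atTop_nat 1)
    simpa [Function.comp_def] using this
  have hz0 : Tendsto (fun n => z (n+1)) atTop (nhds 0) :=
    aux_tendsto_zero C hclosed hpointed v K2 hK2 _ (fun n => hzC _) hwK _
      htz (fun n => horder (n+1))
  have hev : ∀ᶠ n in atTop, ‖z (n+1)‖ ≤ 1 := by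
    have h := hz0.norm
    simp only [norm_zero] at h
    exact (h.eventually_lt_const one_pos).mono (fun n h => h.le)
  obtain ⟨N₀, hN₀⟩ := eventually_atTop.1 hev
  rw [eventually_atTop]
  refine ⟨N₀ + 1, fun n hn => ?_⟩
  obtain ⟨m, rfl⟩ : ∃ m, n = m + 1 := ⟨n - 1, by omega⟩
  have hzn : ‖z (m+1)‖ ≤ 1 := hN₀ m (by omega)
  have hrepr : g^[m+1] x = β ^ (m+1) • z (m+1) := by
    rw [hz]; simp only
    rw [smul_smul, ← mul_pow, mul_inv_cancel₀ hβpos.ne', one_pow, one_smul]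
  rw [hrepr, norm_smul, Real.norm_eq_abs, abs_of_pos (pow_pos hβpos _)]
  nlinarith [pow_pos hβpos (m+1), norm_nonneg (z (m+1))]

-- limsup of k-th root from eventual geometric bound
lemma aux_limsup_root_le {h : ℕ → ℝ} {β : ℝ} (hβ : 0 < β)
    (hev : ∀ᶠ n in atTop, h n ≤ β ^ n) (hnn : ∀ n, 0 ≤ h n) :
    (∀ᶠ n in atTop, h n ^ ((n:ℝ)⁻¹) ≤ β) := by
  filter_upwards [hev, eventually_ge_atTop 1] with n h1 h2
  have hn0 : (n:ℝ) ≠ 0 := by positivity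
  calc h n ^ ((n:ℝ)⁻¹) ≤ (β ^ n) ^ ((n:ℝ)⁻¹) :=
        Real.rpow_le_rpow (hnn n) h1 (by positivity)
    _ = β := by
        rw [← Real.rpow_natCast β n, ← Real.rpow_mul hβ.le, mul_inv_cancel₀ hn0,
          Real.rpow_one]

lemma aux_limsup_le {u : ℕ → ℝ} {μ : ℝ} (hμ : 0 ≤ μ) (hnn : ∀ n, 0 ≤ u n)
    (hall : ∀ β, μ < β → ∀ᶠ n in atTop, u n ≤ β) :
    limsup u atTop ≤ μ := by
  by_contra hcon
  push_neg at hcon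
  set β := (μ + limsup u atTop) / 2 with hβ
  have h1 : μ < β := by rw [hβ]; linarith
  have h2 : β < limsup u atTop := by rw [hβ]; linarith
  have h3 : limsup u atTop ≤ β :=
    limsup_le_of_le (isCoboundedUnder_le_of_le atTop hnn) (hall β h1)
  linarith

lemma aux_bounds (C : Set X) (hclosed : IsClosed C)
    (hscale : ∀ a : ℝ, 0 ≤ a → ∀ x ∈ C, a • x ∈ C)
    (hpointed : ∀ x ∈ C, -x ∈ C → x = 0)
    (hadd : ∀ x ∈ C, ∀ y ∈ C, x + y ∈ C)
    (v : X) (hvC : v ∈ C) (hvne : v ≠ 0) (δ : ℝ) (hδ : 0 < δ)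
    (hball : ∀ y : X, ‖y‖ < δ → v - y ∈ C)
    (hcmp : ∀ y : X, (2 * ‖y‖ / δ) • v - y ∈ C)
    (g : X → X) (hgC : Set.MapsTo g C C) (hgcomp : IsCompactMapOn C g)
    (hghom : IsHomog C g) (hgord : IsOrdPres C g)
    (μ ν : ℝ) (hμ : 0 ≤ μ) (hup : μ • v - g v ∈ C) (hlo : g v - ν • v ∈ C) :
    0 ≤ coneSpecRad C g ∧ coneSpecRad C g ≤ μ ∧ (0 < ν → ν ≤ coneSpecRad C g) := by
  classical
  have h0C : (0:X) ∈ C := by simpa using hscale 0 le_rfl v hvC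
  have hg0 : g 0 = 0 := by
    have := hghom 0 le_rfl 0 h0C
    simpa using this
  have hiterC : ∀ x ∈ C, ∀ n : ℕ, g^[n] x ∈ C := by
    intro x hx n
    induction n with
    | zero => simpa using hx
    | succ n ih => rw [Function.iterate_succ_apply']; exact hgC ih
  set S := {r : ℝ | ∃ x ∈ C, r = limsup (fun k : ℕ => ‖g^[k] x‖ ^ ((k:ℝ)⁻¹)) atTop} with hS
  have hrw : coneSpecRad C g = sSup S := rfl
  have hmemle : ∀ r ∈ S, r ≤ μ := by
    rintro r ⟨x, hx, rfl⟩
    apply aux_limsup_le hμ (fun n => Real.rpow_nonneg (norm_nonneg _) _)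
    intro β hβ
    exact aux_limsup_root_le (lt_of_le_of_lt hμ hβ)
      (aux_key C hclosed hscale hpointed hadd v hvC δ hδ hcmp g hgC hgcomp hghom hgord
        μ hμ hup x hx β hβ) (fun n => norm_nonneg _)
  have hbdd : BddAbove S := ⟨μ, fun r hr => hmemle r hr⟩
  have hiter0 : ∀ n : ℕ, g^[n] (0:X) = 0 := by
    intro n
    induction n with
    | zero => simp
    | succ n ih => rw [Function.iterate_succ_apply', ih, hg0]
  have h0S : (0:ℝ) ∈ S := by
    refine ⟨0, h0C, ?_⟩
    have hev : ∀ᶠ n : ℕ in atTop, ‖g^[n] (0:X)‖ ^ ((n:ℝ)⁻¹) = (0:ℝ) := by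
      filter_upwards [eventually_ge_atTop 1] with n hn
      rw [hiter0 n, norm_zero, Real.zero_rpow (inv_ne_zero (Nat.cast_ne_zero.2 (by omega)))]
    rw [limsup_congr hev, limsup_const]
  refine ⟨hrw ▸ le_csSup hbdd h0S, hrw ▸ Real.sSup_le hmemle hμ, ?_⟩
  intro hν
  set c₀ : ℝ := min δ ‖v‖ with hc₀def
  have hc₀ : 0 < c₀ := lt_min hδ (norm_pos_iff.2 hvne)
  have hlow : ∀ (s : ℝ) (y : X), 0 < s → y ∈ C → y - s • v ∈ C → s * c₀ ≤ ‖y‖ := by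
    intro s y hs hyC hyv
    by_cases hcase : ‖y‖ < s * δ
    · have h1 : ‖s⁻¹ • y‖ < δ := by
        rw [norm_smul, Real.norm_eq_abs, abs_of_pos (inv_pos.2 hs), inv_mul_lt_iff₀ hs]
        linarith
      have h2 : v - s⁻¹ • y ∈ C := hball _ h1
      have h3 : s⁻¹ • y - v ∈ C := by
        have := hscale s⁻¹ (inv_pos.2 hs).le _ hyv
        rwa [smul_sub, smul_smul, inv_mul_cancel₀ hs.ne', one_smul] at this
      have h4 : v - s⁻¹ • y = 0 := hpointed _ h2 (by rw [neg_sub]; exact h3)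
      have h5 : y = s • v := by
        have h6 : s⁻¹ • y = v := by
          have := sub_eq_zero.1 h4
          exact this.symm
        rw [← h6, smul_smul, mul_inv_cancel₀ hs.ne', one_smul]
      rw [h5, norm_smul, Real.norm_eq_abs, abs_of_pos hs]
      have h7 : c₀ ≤ ‖v‖ := min_le_right _ _
      nlinarith
    · push_neg at hcase
      have h7 : c₀ ≤ δ := min_le_left _ _
      nlinarith
  have hiterlo : ∀ n : ℕ, g^[n] v - ν ^ n • v ∈ C := by
    intro n
    induction n with
    | zero => simp [h0C]
    | succ n ih =>
      have hνn : (0:ℝ) ≤ ν ^ n := pow_nonneg hν.le n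
      have hm : g (g^[n] v) - g (ν ^ n • v) ∈ C :=
        hgord _ (hscale _ hνn v hvC) _ (hiterC v hvC n) ih
      have hh : g (ν ^ n • v) = ν ^ n • g v := hghom _ hνn v hvC
      have h2 : ν ^ n • (g v - ν • v) ∈ C := hscale _ hνn _ hlo
      have h3 := hadd _ hm _ h2
      rw [Function.iterate_succ_apply']
      convert h3 using 1
      rw [hh, smul_sub, smul_smul, ← pow_succ]
      abel
  have hnormlo : ∀ n : ℕ, ν ^ n * c₀ ≤ ‖g^[n] v‖ := fun n =>
    hlow _ _ (pow_pos hν n) (hiterC v hvC n) (hiterlo n)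
  have heS : limsup (fun k : ℕ => ‖g^[k] v‖ ^ ((k:ℝ)⁻¹)) atTop ∈ S := ⟨v, hvC, rfl⟩
  have hbound : IsBoundedUnder (· ≤ ·) atTop (fun k : ℕ => ‖g^[k] v‖ ^ ((k:ℝ)⁻¹)) := by
    apply isBoundedUnder_of_eventually_le (a := μ + 1)
    exact aux_limsup_root_le (by linarith)
      (aux_key C hclosed hscale hpointed hadd v hvC δ hδ hcmp g hgC hgcomp hghom hgord
        μ hμ hup v hvC (μ+1) (by linarith)) (fun n => norm_nonneg _)
  have hroot : Tendsto (fun n : ℕ => ν * c₀ ^ ((n:ℝ)⁻¹)) atTop (𝓝 ν) := by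
    have h1 : Tendsto (fun n : ℕ => ((n:ℝ))⁻¹) atTop (𝓝 0) := tendsto_inv_atTop_nhds_zero_nat
    have h2 : Tendsto (fun n : ℕ => c₀ ^ ((n:ℝ)⁻¹)) atTop (𝓝 1) := by
      have h3 := (Real.continuousAt_const_rpow (a := c₀) hc₀.ne').tendsto.comp h1
      simpa [Real.rpow_zero, Function.comp_def] using h3
    have h4 := h2.const_mul ν
    simpa using h4
  have hlbd : ν ≤ limsup (fun k : ℕ => ‖g^[k] v‖ ^ ((k:ℝ)⁻¹)) atTop := by
    rw [← forall_lt_iff_le]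
    intro b hb
    obtain ⟨b', hb1, hb2⟩ := exists_between hb
    have hfreq : ∃ᶠ n : ℕ in atTop, b' ≤ ‖g^[n] v‖ ^ ((n:ℝ)⁻¹) := by
      apply Eventually.frequently
      have hev1 : ∀ᶠ n : ℕ in atTop, b' < ν * c₀ ^ ((n:ℝ)⁻¹) :=
        hroot.eventually (eventually_gt_nhds hb2)
      filter_upwards [hev1, eventually_ge_atTop 1] with n h1 h2
      have hn0 : (n:ℝ) ≠ 0 := Nat.cast_ne_zero.2 (by omega)
      have h3 : (ν ^ n * c₀) ^ ((n:ℝ)⁻¹) ≤ ‖g^[n] v‖ ^ ((n:ℝ)⁻¹) :=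
        Real.rpow_le_rpow (by positivity) (hnormlo n) (by positivity)
      have h4 : (ν ^ n * c₀) ^ ((n:ℝ)⁻¹) = ν * c₀ ^ ((n:ℝ)⁻¹) := by
        rw [Real.mul_rpow (by positivity) hc₀.le, ← Real.rpow_natCast ν n,
          ← Real.rpow_mul hν.le, mul_inv_cancel₀ hn0, Real.rpow_one]
      rw [h4] at h3
      linarith
    have := le_limsup_of_frequently_le hfreq hbound
    linarith
  calc ν ≤ limsup (fun k : ℕ => ‖g^[k] v‖ ^ ((k:ℝ)⁻¹)) atTop := hlbd
    _ ≤ coneSpecRad C g := hrw ▸ le_csSup hbdd heS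

/-- If `f : C → C` is a continuous compact order-preserving homogeneous map on a closed
cone `C` with non-empty interior and `f` has an eigenvector in the interior of `C`,
then `f` has a continuous cone spectral radius. -/
theorem hasContinuousConeSpecRad_of_interior_eigenvector
    (C : Set X) (hC : IsClosedCone C) (hint : (interior C).Nonempty)
    (f : X → X)
    (hfC : Set.MapsTo f C C) (hfcont : ContinuousOn f C)
    (hfcomp : IsCompactMapOn C f) (hfhom : IsHomog C f) (hford : IsOrdPres C f)
    (v : X) (hv : v ∈ interior C) (lam : ℝ) (hlam : 0 ≤ lam)
    (heig : f v = lam • v) :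
    HasContinuousConeSpecRad C f := by
  classical
  obtain ⟨hclosed, hconv, hscale, hpointed⟩ := hC
  have hvC : v ∈ C := interior_subset hv
  have h0C : (0:X) ∈ C := by simpa using hscale 0 le_rfl v hvC
  have hadd : ∀ x ∈ C, ∀ y ∈ C, x + y ∈ C := by
    intro x hx y hy
    have h1 : (1/2 : ℝ) • x + (1/2 : ℝ) • y ∈ C :=
      hconv hx hy (by norm_num) (by norm_num) (by norm_num)
    have h2 := hscale 2 (by norm_num) _ h1
    rw [smul_add, smul_smul, smul_smul] at h2
    norm_num at h2
    exact h2
  obtain ⟨δ, hδ, hball'⟩ := Metric.isOpen_iff.1 isOpen_interior v hv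
  have hball : ∀ y : X, ‖y‖ < δ → v - y ∈ C := by
    intro y hy
    apply interior_subset
    apply hball'
    rw [Metric.mem_ball, dist_eq_norm]
    simpa using hy
  have hcmp : ∀ y : X, (2 * ‖y‖ / δ) • v - y ∈ C := by
    intro y
    by_cases hy : y = 0
    · subst hy; simpa using h0C
    · have hny : 0 < ‖y‖ := norm_pos_iff.2 hy
      have h1 : ‖(δ/(2*‖y‖)) • y‖ < δ := by
        rw [norm_smul, Real.norm_eq_abs, abs_of_pos (by positivity)]
        have heq : δ/(2*‖y‖) * ‖y‖ = δ/2 := by field_simp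
        rw [heq]; linarith
      have h2 : v - (δ/(2*‖y‖)) • y ∈ C := hball _ h1
      have h3 := hscale (2*‖y‖/δ) (by positivity) _ h2
      rw [smul_sub, smul_smul] at h3
      have hmul : (2*‖y‖/δ) * (δ/(2*‖y‖)) = 1 := by field_simp
      rwa [hmul, one_smul] at h3
  intro fk hkC hkcont hkcomp hkhom hkord hconv2
  by_cases hv0 : v = 0
  · -- degenerate case: X is trivial
    have hneg : ∀ y : X, -y ∈ C := by
      intro y
      have := hcmp y
      rw [hv0, smul_zero, zero_sub] at this
      exact this
    have hallzero : ∀ x : X, x = 0 := by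
      intro x
      exact hpointed x (by simpa using hneg (-x)) (hneg x)
    have hrad : ∀ h : X → X, coneSpecRad C h = 0 := by
      intro h
      have hset : {r : ℝ | ∃ x ∈ C,
          r = limsup (fun k : ℕ => ‖h^[k] x‖ ^ ((k:ℝ)⁻¹)) atTop} = {0} := by
        ext r
        simp only [mem_setOf_eq, mem_singleton_iff]
        constructor
        · rintro ⟨x, hx, rfl⟩
          have hev : ∀ᶠ n : ℕ in atTop, ‖h^[n] x‖ ^ ((n:ℝ)⁻¹) = (0:ℝ) := by
            filter_upwards [eventually_ge_atTop 1] with n hn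
            rw [hallzero (h^[n] x), norm_zero,
              Real.zero_rpow (inv_ne_zero (Nat.cast_ne_zero.2 (by omega)))]
          rw [limsup_congr hev, limsup_const]
        · rintro rfl
          refine ⟨0, h0C, ?_⟩
          have hev : ∀ᶠ n : ℕ in atTop, ‖h^[n] (0:X)‖ ^ ((n:ℝ)⁻¹) = (0:ℝ) := by
            filter_upwards [eventually_ge_atTop 1] with n hn
            rw [hallzero (h^[n] (0:X)), norm_zero,
              Real.zero_rpow (inv_ne_zero (Nat.cast_ne_zero.2 (by omega)))]
          rw [limsup_congr hev, limsup_const]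
      unfold coneSpecRad
      rw [hset, csSup_singleton]
    simp only [hrad]
    exact tendsto_const_nhds
  · -- main case
    have hup_f : lam • v - f v ∈ C := by rw [heig, sub_self]; exact h0C
    have hlo_f : f v - lam • v ∈ C := by rw [heig, sub_self]; exact h0C
    obtain ⟨hr0, hrle, hrge⟩ := aux_bounds C hclosed hscale hpointed hadd v hvC hv0 δ hδ
      hball hcmp f hfC hfcomp hfhom hford lam lam hlam hup_f hlo_f
    have hrf : coneSpecRad C f = lam := by
      rcases eq_or_lt_of_le hlam with h | h
      · exact le_antisymm hrle (h ▸ hr0)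
      · exact le_antisymm hrle (hrge h)
    rw [hrf]
    set ε : ℕ → ℝ := fun k => coneNorm C (fun x => f x - fk k x) with hεdef
    have hbddnorm : ∀ k, ∀ y ∈ C, ‖y‖ ≤ 1 → ‖f y - fk k y‖ ≤ ε k := by
      intro k y hy hy1
      apply le_csSup
      · obtain ⟨Rf, hRf⟩ := Bornology.IsBounded.exists_norm_le
          (hfcomp (C ∩ Metric.closedBall 0 1) inter_subset_left
            (Metric.isBounded_closedBall.subset inter_subset_right)).isBounded
        obtain ⟨Rk, hRk⟩ := Bornology.IsBounded.exists_norm_le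
          (hkcomp k (C ∩ Metric.closedBall 0 1) inter_subset_left
            (Metric.isBounded_closedBall.subset inter_subset_right)).isBounded
        refine ⟨Rf + Rk, ?_⟩
        rintro r ⟨x, hx, hx1, rfl⟩
        have hxm : x ∈ C ∩ Metric.closedBall 0 1 := ⟨hx, by simpa using hx1⟩
        have h1 : ‖f x‖ ≤ Rf := hRf _ (subset_closure ⟨x, hxm, rfl⟩)
        have h2 : ‖fk k x‖ ≤ Rk := hRk _ (subset_closure ⟨x, hxm, rfl⟩)
        calc ‖f x - fk k x‖ ≤ ‖f x‖ + ‖fk k x‖ := norm_sub_le _ _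
          _ ≤ Rf + Rk := add_le_add h1 h2
      · exact ⟨y, hy, hy1, rfl⟩
    have hnv : 0 < ‖v‖ := norm_pos_iff.2 hv0
    have hdk : ∀ k, ‖f v - fk k v‖ ≤ ε k * ‖v‖ := by
      intro k
      set y := ‖v‖⁻¹ • v with hydef
      have hyC : y ∈ C := hscale _ (by positivity) _ hvC
      have hy1 : ‖y‖ ≤ 1 := by
        rw [hydef, norm_smul, norm_inv, norm_norm, inv_mul_cancel₀ hnv.ne']
      have h1 := hbddnorm k y hyC hy1
      have h2 : f y - fk k y = ‖v‖⁻¹ • (f v - fk k v) := by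
        rw [hydef, hfhom _ (by positivity) v hvC, hkhom k _ (by positivity) v hvC, smul_sub]
      rw [h2, norm_smul, norm_inv, norm_norm] at h1
      calc ‖f v - fk k v‖ = ‖v‖ * (‖v‖⁻¹ * ‖f v - fk k v‖) := by field_simp
        _ ≤ ‖v‖ * ε k := mul_le_mul_of_nonneg_left h1 hnv.le
        _ = ε k * ‖v‖ := mul_comm _ _
    have hε0 : ∀ k, 0 ≤ ε k := fun k =>
      le_trans (norm_nonneg _) (hbddnorm k 0 h0C (by simp))
    set γ : ℝ := 2 * ‖v‖ / δ with hγdef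
    have hγ : 0 ≤ γ := by positivity
    have hup : ∀ k, (lam + γ * ε k) • v - fk k v ∈ C := by
      intro k
      have h1 := hcmp (fk k v - f v)
      have hnormle : 2 * ‖fk k v - f v‖ / δ ≤ γ * ε k := by
        have h3 := hdk k
        rw [norm_sub_rev] at h3
        calc 2 * ‖fk k v - f v‖ / δ ≤ 2 * (ε k * ‖v‖) / δ := by gcongr
          _ = γ * ε k := by rw [hγdef]; ring
      have h2 : ((γ * ε k) - 2 * ‖fk k v - f v‖ / δ) • v ∈ C :=
        hscale _ (by linarith) v hvC
      have h4 := hadd _ h2 _ h1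
      convert h4 using 1
      rw [add_smul, ← heig, sub_smul]
      abel
    have hlo : ∀ k, fk k v - (lam - γ * ε k) • v ∈ C := by
      intro k
      have h1 := hcmp (f v - fk k v)
      have hnormle : 2 * ‖f v - fk k v‖ / δ ≤ γ * ε k := by
        have h3 := hdk k
        calc 2 * ‖f v - fk k v‖ / δ ≤ 2 * (ε k * ‖v‖) / δ := by gcongr
          _ = γ * ε k := by rw [hγdef]; ring
      have h2 : ((γ * ε k) - 2 * ‖f v - fk k v‖ / δ) • v ∈ C :=
        hscale _ (by linarith) v hvC
      have h4 := hadd _ h2 _ h1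
      convert h4 using 1
      rw [sub_smul, sub_smul, ← heig]
      abel
    have hbk : ∀ k, 0 ≤ coneSpecRad C (fk k) ∧ coneSpecRad C (fk k) ≤ lam + γ * ε k ∧
        (0 < lam - γ * ε k → lam - γ * ε k ≤ coneSpecRad C (fk k)) := fun k =>
      aux_bounds C hclosed hscale hpointed hadd v hvC hv0 δ hδ hball hcmp (fk k)
        (hkC k) (hkcomp k) (hkhom k) (hkord k) (lam + γ * ε k) (lam - γ * ε k)
        (add_nonneg hlam (mul_nonneg hγ (hε0 k))) (hup k) (hlo k)
    have hεt : Tendsto ε atTop (𝓝 0) := hconv2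
    have hμt : Tendsto (fun k => lam + γ * ε k) atTop (𝓝 lam) := by
      have h1 := (hεt.const_mul γ).const_add lam
      simpa using h1
    have hνt : Tendsto (fun k => max (lam - γ * ε k) 0) atTop (𝓝 lam) := by
      have h1 : Tendsto (fun k => lam - γ * ε k) atTop (𝓝 lam) := by
        have h2 := tendsto_const_nhds (x := lam) (f := atTop (α := ℕ)) |>.sub (hεt.const_mul γ)
        simpa using h2
      have h3 := h1.max (tendsto_const_nhds (x := (0:ℝ)))
      rwa [sup_eq_left.2 hlam] at h3
    apply tendsto_of_tendsto_of_tendsto_of_le_of_le hνt hμt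
    · intro k
      apply max_le
      · rcases le_or_gt (lam - γ * ε k) 0 with h | h
        · exact le_trans h (hbk k).1
        · exact (hbk k).2.2 h
      · exact (hbk k).1
    · intro k
      exact (hbk k).2.1
end
end

section
/- Let C be a closed cone in a real Banach space X and let f : C → C be an order-preserving homogeneous map. If x and y are eigenvectors of f in C lying in the same part of C, i.e., f(x) = λx, f(y) = μy with x, y ∈ C \ {0}, λ, μ ≥ 0, and x ∼_C y, then λ = μ. -/
open Filter Topology Set

noncomputable section

variable {X : Type*} [NormedAddCommGroup X] [NormedSpace ℝ X] [CompleteSpace X]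

/-- `x ∼_C y`: `x` and `y` lie in the same part of `C`. -/
def SamePart (C : Set X) (x y : X) : Prop := Dominates C y x ∧ Dominates C x y


lemma eig_le_aux (C : Set X) (hC : IsClosedCone C) (f : X → X)
    (hfhom : IsHomog C f) (hford : IsOrdPres C f)
    (x y : X) (hx : x ∈ C) (hy : y ∈ C) (hx0 : x ≠ 0)
    (lam mu : ℝ) (hlam : 0 ≤ lam) (hmu : 0 ≤ mu)
    (hfx : f x = lam • x) (hfy : f y = mu • y)
    (α : ℝ) (hα : 0 < α) (hyx : coneLE C y (α • x))
    (β : ℝ) (hβ : 0 < β) (hxy : coneLE C x (β • y)) : lam ≤ mu := by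
  have key : ∀ n : ℕ, coneLE C (lam ^ n • x) ((β * mu ^ n) • y) := by
    intro n
    induction n with
    | zero => simpa using hxy
    | succ n ih =>
      have hxc : lam ^ n • x ∈ C := hC.2.2.1 _ (pow_nonneg hlam n) x hx
      have hyc : (β * mu ^ n) • y ∈ C := hC.2.2.1 _ (by positivity) y hy
      have h := hford _ hxc _ hyc ih
      rw [hfhom _ (pow_nonneg hlam n) x hx, hfhom _ (by positivity) y hy, hfx, hfy,
        smul_smul, smul_smul] at h
      have e1 : lam ^ n * lam = lam ^ (n + 1) := (pow_succ lam n).symm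
      have e2 : β * mu ^ n * mu = β * mu ^ (n + 1) := by rw [pow_succ]; ring
      rwa [e1, e2] at h
  have key2 : ∀ n : ℕ, (β * mu ^ n * α - lam ^ n) • x ∈ C := by
    intro n
    have h1 : (β * mu ^ n) • (α • x) - (β * mu ^ n) • y ∈ C := by
      rw [← smul_sub]
      exact hC.2.2.1 _ (by positivity) _ hyx
    have h2 := cone_add_mem hC h1 (key n)
    have heq : (β * mu ^ n) • (α • x) - (β * mu ^ n) • y +
        ((β * mu ^ n) • y - lam ^ n • x) = (β * mu ^ n * α - lam ^ n) • x := by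
      rw [sub_smul, smul_smul]; abel
    rwa [heq] at h2
  by_contra hlt
  push_neg at hlt
  have hlam0 : 0 < lam := lt_of_le_of_lt hmu hlt
  obtain ⟨n, hn⟩ : ∃ n : ℕ, β * mu ^ n * α < lam ^ n := by
    rcases eq_or_lt_of_le hmu with hmu0 | hmu0
    · exact ⟨1, by rw [← hmu0]; simpa using by positivity⟩
    · obtain ⟨n, hn⟩ := pow_unbounded_of_one_lt (β * α) ((one_lt_div hmu0).2 hlt)
      refine ⟨n, ?_⟩
      have hmun : 0 < mu ^ n := pow_pos hmu0 n
      rw [div_pow, lt_div_iff₀ hmun] at hn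
      calc β * mu ^ n * α = β * α * mu ^ n := by ring
        _ < lam ^ n := hn
  set c : ℝ := β * mu ^ n * α - lam ^ n with hc
  have hcneg : c < 0 := sub_neg.2 hn
  have h1 : c • x ∈ C := key2 n
  have h2 : -(c • x) ∈ C := by
    rw [← neg_smul]
    exact hC.2.2.1 _ (by linarith) x hx
  have := hC.2.2.2 _ h1 h2
  rw [smul_eq_zero] at this
  rcases this with h | h
  · exact absurd h (ne_of_lt hcneg)
  · exact hx0 h

/-- If `f : C → C` is an order-preserving homogeneous map on a closed cone `C` and
`x, y ∈ C \ {0}` are eigenvectors of `f` lying in the same part of `C`, then the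
corresponding eigenvalues are equal. -/
theorem eigenvalues_eq_of_samePart
    (C : Set X) (hC : IsClosedCone C) (f : X → X)
    (hfC : Set.MapsTo f C C) (hfhom : IsHomog C f) (hford : IsOrdPres C f)
    (x y : X) (hx : x ∈ C) (hy : y ∈ C) (hx0 : x ≠ 0) (hy0 : y ≠ 0)
    (lam mu : ℝ) (hlam : 0 ≤ lam) (hmu : 0 ≤ mu)
    (hfx : f x = lam • x) (hfy : f y = mu • y)
    (hpart : SamePart C x y) :
    lam = mu := by
  obtain ⟨⟨β, hβ, hxy⟩, ⟨α, hα, hyx⟩⟩ := hpart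
  exact le_antisymm
    (eig_le_aux C hC f hfhom hford x y hx hy hx0 lam mu hlam hmu hfx hfy α hα hyx β hβ hxy)
    (eig_le_aux C hC f hfhom hford y x hy hx hy0 mu lam hmu hlam hfy hfx β hβ hxy α hα hyx)
end
end

section
/- Fix n ≥ 2, let A be the n×n diagonal matrix with diagonal (1, 0, …, 0), and define f on the cone Pos_n(ℝ) of real positive semidefinite symmetric n×n matrices by f(X) = (tr(XA)·X)^{1/2}, the positive semidefinite square root. Then f is a continuous order-preserving homogeneous map of Pos_n(ℝ) into itself, and its cone spectrum equals [0,1]: for every ρ ∈ [0,1] there exists X ∈ Pos_n(ℝ), X ≠ 0, with f(X) = ρX (in particular, for 0 ≤ θ ≤ 2π the rank-one matrix Z_θ with upper-left 2×2 block [[cos²θ, cosθsinθ],[cosθsinθ, sin²θ]] and zeros elsewhere satisfies f(Z_θ) = |cos θ| Z_θ), and no ρ > 1 is an eigenvalue of f on Pos_n(ℝ) \ {0}. -/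
open Matrix Filter Topology Set

noncomputable section

/-- The `n × n` diagonal matrix with diagonal `(1, 0, …, 0)`. -/
def Amat (n : ℕ) : Matrix (Fin n) (Fin n) ℝ :=
  Matrix.diagonal (fun i => if (i : ℕ) = 0 then (1 : ℝ) else 0)

section

open scoped ComplexOrder

/-- The positive semidefinite square root of a positive semidefinite matrix (the definition
of `Matrix.PosSemidef.sqrt` in the older Mathlib, since removed). -/
def Matrix.PosSemidef.sqrt {n 𝕜 : Type*} [Fintype n] [DecidableEq n] [RCLike 𝕜]
    {A : Matrix n n 𝕜} (hA : A.PosSemidef) : Matrix n n 𝕜 :=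
  hA.1.eigenvectorUnitary.1 * diagonal ((↑) ∘ (Real.sqrt ∘ hA.1.eigenvalues)) *
    (star hA.1.eigenvectorUnitary : Matrix n n 𝕜)

end

/-- The rank-one positive semidefinite matrix `Z_θ` with upper-left `2 × 2` block
`[[cos²θ, cosθ sinθ], [cosθ sinθ, sin²θ]]` and zeros elsewhere. -/
def Zmat (n : ℕ) (θ : ℝ) : Matrix (Fin n) (Fin n) ℝ := fun i j =>
  if (i : ℕ) = 0 ∧ (j : ℕ) = 0 then Real.cos θ ^ 2
  else if (i : ℕ) = 0 ∧ (j : ℕ) = 1 then Real.cos θ * Real.sin θ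
  else if (i : ℕ) = 1 ∧ (j : ℕ) = 0 then Real.cos θ * Real.sin θ
  else if (i : ℕ) = 1 ∧ (j : ℕ) = 1 then Real.sin θ ^ 2
  else 0

section

open scoped ComplexOrder MatrixOrder

namespace Matrix.PosSemidef

variable {m 𝕜 : Type*} [Fintype m] [DecidableEq m] [RCLike 𝕜] {A : Matrix m m 𝕜}

lemma sqrt_eq_cfcSqrt (hA : A.PosSemidef) : hA.sqrt = CFC.sqrt A := by
  rw [CFC.sqrt_eq_cfc, cfc_nnreal_eq_real _ A, hA.1.cfc_eq]
  simp only [IsHermitian.cfc, Matrix.PosSemidef.sqrt, Unitary.conjStarAlgAut_apply]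
  congr 3
  funext i
  simp [max_eq_left (hA.eigenvalues_nonneg i)]

lemma posSemidef_sqrt (hA : A.PosSemidef) : hA.sqrt.PosSemidef := by
  rw [sqrt_eq_cfcSqrt]
  exact (CFC.sqrt_nonneg A).posSemidef

lemma sqrt_mul_self (hA : A.PosSemidef) : hA.sqrt * hA.sqrt = A := by
  rw [sqrt_eq_cfcSqrt]
  exact CFC.sqrt_mul_sqrt_self A hA.nonneg

lemma sq_sqrt (hA : A.PosSemidef) : hA.sqrt ^ 2 = A := by
  rw [pow_two, sqrt_mul_self]

lemma eq_sqrt_of_sq_eq {B : Matrix m m 𝕜} (hB : B.PosSemidef) (hA : A.PosSemidef)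
    (hBA : B ^ 2 = A) : B = hA.sqrt := by
  rw [sqrt_eq_cfcSqrt, eq_comm, CFC.sqrt_eq_iff A B hA.nonneg hB.nonneg, ← pow_two, hBA]

end Matrix.PosSemidef

end

variable {n : ℕ}

lemma psd_quad {M : Matrix (Fin n) (Fin n) ℝ} (hM : M.PosSemidef) (x : Fin n → ℝ) :
    0 ≤ x ⬝ᵥ M *ᵥ x := by simpa using hM.dotProduct_mulVec_nonneg x

lemma herm_apply {M : Matrix (Fin n) (Fin n) ℝ} (hM : M.IsHermitian) (i j : Fin n) :
    M j i = M i j := by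
  have := congrFun (congrFun hM i) j
  simpa [Matrix.conjTranspose_apply] using this

lemma psd_diag_nonneg {M : Matrix (Fin n) (Fin n) ℝ} (hM : M.PosSemidef) (i : Fin n) :
    0 ≤ M i i := by
  simpa [single_dotProduct, Matrix.mulVec_single] using psd_quad hM (Pi.single i 1)

lemma psd_quad_two {M : Matrix (Fin n) (Fin n) ℝ} (hM : M.PosSemidef) (i j : Fin n) (c : ℝ) :
    0 ≤ M i i + 2 * c * M i j + c ^ 2 * M j j := by
  have h := psd_quad hM (Pi.single i 1 + Pi.single j c)
  simp only [Matrix.mulVec_add, Matrix.mulVec_single, add_dotProduct,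
    single_dotProduct, Pi.add_apply, dotProduct_add, Pi.smul_apply, op_smul_eq_mul,
    Matrix.col_apply] at h
  rw [herm_apply hM.1 i j] at h
  ring_nf at h ⊢
  linarith

lemma psd_abs_entry {M : Matrix (Fin n) (Fin n) ℝ} (hM : M.PosSemidef) (i j : Fin n) :
    |M i j| ≤ (M i i + M j j) / 2 := by
  have h1 := psd_quad_two hM i j 1
  have h2 := psd_quad_two hM i j (-1)
  rw [abs_le]
  constructor <;> nlinarith

lemma entry_tendsto {u : ℕ → Matrix (Fin n) (Fin n) ℝ} {L : Matrix (Fin n) (Fin n) ℝ}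
    (h : Tendsto u atTop (𝓝 L)) (i j : Fin n) :
    Tendsto (fun k => u k i j) atTop (𝓝 (L i j)) :=
  ((continuous_apply_apply i j).tendsto L).comp h

lemma quad_continuous (x : Fin n → ℝ) :
    Continuous fun M : Matrix (Fin n) (Fin n) ℝ => x ⬝ᵥ M *ᵥ x :=
  continuous_const.dotProduct (continuous_id.matrix_mulVec continuous_const)

set_option maxHeartbeats 2000000 in
lemma sqrt_tendsto {T : ℕ → Matrix (Fin n) (Fin n) ℝ} {L : Matrix (Fin n) (Fin n) ℝ}
    (hT : ∀ k, (T k).PosSemidef) (hL : L.PosSemidef)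
    (hlim : Tendsto T atTop (𝓝 L)) :
    Tendsto (fun k => (hT k).sqrt) atTop (𝓝 hL.sqrt) := by
  haveI : FirstCountableTopology (Matrix (Fin n) (Fin n) ℝ) :=
    inferInstanceAs (FirstCountableTopology (Fin n → Fin n → ℝ))
  -- uniform bound on T
  have hK : IsCompact (insert L (Set.range T)) := hlim.isCompact_insert_range
  obtain ⟨M0, -, hM0⟩ := hK.exists_isMaxOn ⟨L, Set.mem_insert _ _⟩
    ((continuous_id.matrix_trace).continuousOn)
  set C := Matrix.trace M0 with hC
  have hdiag : ∀ k i, T k i i ≤ C := by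
    intro k i
    have h1 : (T k).trace ≤ C := isMaxOn_iff.mp hM0 _ (Set.mem_insert_of_mem _ ⟨k, rfl⟩)
    have h2 : T k i i ≤ (T k).trace :=
      Finset.single_le_sum (fun j _ => psd_diag_nonneg (hT k) j) (Finset.mem_univ i)
    linarith
  set D := Real.sqrt C with hD
  -- bound on the square roots
  have hSbound : ∀ k i j, (hT k).sqrt i j ∈ Set.Icc (-D) D := by
    intro k i j
    set S := (hT k).sqrt with hSdef
    have hS : S.PosSemidef := (hT k).posSemidef_sqrt
    have hSS : S * S = T k := (hT k).sqrt_mul_self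
    have hdlt : ∀ a : Fin n, S a a ≤ D := by
      intro a
      have hsq : S a a ^ 2 ≤ T k a a := by
        have h3 : (S * S) a a = ∑ b, S a b * S b a := Matrix.mul_apply
        have h4 : ∀ b, S a b * S b a = S a b ^ 2 := fun b => by
          rw [herm_apply hS.1 a b]; ring
        have h5 : S a a ^ 2 ≤ ∑ b, S a b ^ 2 :=
          Finset.single_le_sum (f := fun b => S a b ^ 2) (fun b _ => sq_nonneg _)
            (Finset.mem_univ a)
        calc S a a ^ 2 ≤ ∑ b, S a b ^ 2 := h5
          _ = (S * S) a a := by rw [h3]; exact Finset.sum_congr rfl fun b _ => (h4 b).symm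
          _ = T k a a := by rw [hSS]
      have h6 : S a a ^ 2 ≤ C := le_trans hsq (hdiag k a)
      calc S a a = |S a a| := (abs_of_nonneg (psd_diag_nonneg hS a)).symm
        _ = Real.sqrt (S a a ^ 2) := (Real.sqrt_sq_eq_abs _).symm
        _ ≤ D := Real.sqrt_le_sqrt h6
    have habs : |S i j| ≤ D := by
      have := psd_abs_entry hS i j
      have di := hdlt i
      have dj := hdlt j
      linarith
    rw [Set.mem_Icc]
    exact abs_le.mp habs
  -- the compact box
  have hbox : IsCompact {M : Matrix (Fin n) (Fin n) ℝ | ∀ i j, M i j ∈ Set.Icc (-D) D} := by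
    have he : {M : Matrix (Fin n) (Fin n) ℝ | ∀ i j, M i j ∈ Set.Icc (-D) D} =
        Set.univ.pi (fun _ : Fin n => Set.univ.pi fun _ : Fin n => Set.Icc (-D) D) := by
      ext M
      constructor
      · exact fun h i _ j _ => h i j
      · exact fun h i j => h i (Set.mem_univ i) j (Set.mem_univ j)
    rw [he]
    exact isCompact_univ_pi fun _ => isCompact_univ_pi fun _ => isCompact_Icc
  -- subsequence argument
  refine tendsto_of_subseq_tendsto fun ns hns => ?_
  obtain ⟨W, hWbox, φ, hφ, hconv⟩ :=
    hbox.tendsto_subseq (x := fun k => (hT (ns k)).sqrt) (fun k => hSbound (ns k))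
  have hTlim : Tendsto (fun m => T (ns (φ m))) atTop (𝓝 L) :=
    hlim.comp (hns.comp hφ.tendsto_atTop)
  have hWW : W * W = L := by
    ext i j
    have h1 : Tendsto (fun m => ∑ b, (hT (ns (φ m))).sqrt i b * (hT (ns (φ m))).sqrt b j)
        atTop (𝓝 (∑ b, W i b * W b j)) :=
      tendsto_finset_sum _ fun b _ => (entry_tendsto hconv i b).mul (entry_tendsto hconv b j)
    have h2 : (fun m => ∑ b, (hT (ns (φ m))).sqrt i b * (hT (ns (φ m))).sqrt b j)
        = fun m => T (ns (φ m)) i j := by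
      funext m
      rw [← Matrix.mul_apply, (hT (ns (φ m))).sqrt_mul_self]
    rw [Matrix.mul_apply]
    exact tendsto_nhds_unique (h2 ▸ h1) (entry_tendsto hTlim i j)
  have hWpsd : W.PosSemidef := by
    refine Matrix.PosSemidef.of_dotProduct_mulVec_nonneg ?_ ?_
    · ext i j
      show star (W j i) = W i j
      rw [star_trivial]
      refine tendsto_nhds_unique ?_ (entry_tendsto hconv i j)
      refine (entry_tendsto hconv j i).congr fun m => ?_
      exact herm_apply ((hT (ns (φ m))).posSemidef_sqrt).1 i j
    · intro x
      show (0 : ℝ) ≤ star x ⬝ᵥ W *ᵥ x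
      rw [star_trivial]
      refine le_of_tendsto_of_tendsto tendsto_const_nhds
        (((quad_continuous x).tendsto W).comp hconv) ?_
      exact Filter.Eventually.of_forall fun m => psd_quad ((hT (ns (φ m))).posSemidef_sqrt) x
  have hWs : W = hL.sqrt := hWpsd.eq_sqrt_of_sq_eq hL (by rw [pow_two, hWW])
  exact ⟨φ, hWs ▸ hconv⟩

lemma sqrt_mono {A B : Matrix (Fin n) (Fin n) ℝ} (hA : A.PosSemidef) (hB : B.PosSemidef)
    (hAB : (B - A).PosSemidef) : (hB.sqrt - hA.sqrt).PosSemidef := by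
  set S := hB.sqrt with hSdef
  set T := hA.sqrt with hTdef
  have hS : S.PosSemidef := hB.posSemidef_sqrt
  have hT : T.PosSemidef := hA.posSemidef_sqrt
  have hH : (S - T).IsHermitian := hS.1.sub hT.1
  refine hH.posSemidef_iff_eigenvalues_nonneg.mpr fun i => ?_
  by_contra hlt
  push_neg at hlt
  simp only [Pi.zero_apply] at hlt
  set t := hH.eigenvalues i with htdef
  set v : Fin n → ℝ := ⇑(hH.eigenvectorBasis i) with hvdef
  have hv0 : v ≠ 0 := by
    intro h
    exact (hH.eigenvectorBasis.orthonormal.ne_zero i) (by ext k; exact congrFun h k)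
  have hv : (S - T) *ᵥ v = t • v := by
    simpa using hH.mulVec_eigenvectorBasis i
  have hvm : v ᵥ* (S - T) = t • v := by
    have hsymm : (S - T)ᵀ = S - T := by
      ext a b
      have := congrFun (congrFun hH b) a
      simpa [Matrix.conjTranspose_apply] using this.symm
    calc v ᵥ* (S - T) = v ᵥ* (S - T)ᵀᵀ := by rw [Matrix.transpose_transpose]
    _ = (S - T)ᵀ *ᵥ v := by rw [Matrix.vecMul_transpose]
    _ = t • v := by rw [hsymm, hv]
  have hBA : B - A = S * (S - T) + (S - T) * T := by
    have h1 : S * S = B := hB.sqrt_mul_self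
    have h2 : T * T = A := hA.sqrt_mul_self
    rw [← h1, ← h2]
    noncomm_ring
  have key : v ⬝ᵥ (B - A) *ᵥ v = t * (v ⬝ᵥ S *ᵥ v + v ⬝ᵥ T *ᵥ v) := by
    rw [hBA, Matrix.add_mulVec, dotProduct_add]
    have e1 : v ⬝ᵥ (S * (S - T)) *ᵥ v = t * (v ⬝ᵥ S *ᵥ v) := by
      rw [← Matrix.mulVec_mulVec, hv, Matrix.mulVec_smul, dotProduct_smul]
      simp [mul_comm]
    have e2 : v ⬝ᵥ ((S - T) * T) *ᵥ v = t * (v ⬝ᵥ T *ᵥ v) := by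
      rw [Matrix.dotProduct_mulVec, ← Matrix.vecMul_vecMul, hvm, Matrix.smul_vecMul,
        smul_dotProduct, ← Matrix.dotProduct_mulVec]
      simp [smul_eq_mul]
    rw [e1, e2]; ring
  have h0 : 0 ≤ t * (v ⬝ᵥ S *ᵥ v + v ⬝ᵥ T *ᵥ v) := key ▸ psd_quad hAB v
  have hqS : 0 ≤ v ⬝ᵥ S *ᵥ v := psd_quad hS v
  have hqT : 0 ≤ v ⬝ᵥ T *ᵥ v := psd_quad hT v
  have hqS0 : v ⬝ᵥ S *ᵥ v = 0 := by nlinarith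
  have hqT0 : v ⬝ᵥ T *ᵥ v = 0 := by nlinarith
  have hSv : S *ᵥ v = 0 := (hS.dotProduct_mulVec_zero_iff v).mp (by simpa using hqS0)
  have hTv : T *ᵥ v = 0 := (hT.dotProduct_mulVec_zero_iff v).mp (by simpa using hqT0)
  have : t • v = 0 := by rw [← hv, Matrix.sub_mulVec, hSv, hTv, sub_zero]
  rcases smul_eq_zero.mp this with h | h
  · exact absurd h (ne_of_lt hlt)
  · exact hv0 h

lemma sqrt_congr {M N : Matrix (Fin n) (Fin n) ℝ} (h : M = N) (hM : M.PosSemidef)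
    (hN : N.PosSemidef) : hM.sqrt = hN.sqrt := by subst h; rfl

lemma psd_smul {M : Matrix (Fin n) (Fin n) ℝ} (hM : M.PosSemidef) {c : ℝ} (hc : 0 ≤ c) :
    (c • M).PosSemidef := by
  refine Matrix.PosSemidef.of_dotProduct_mulVec_nonneg ?_ fun x => ?_
  · have ht : Mᵀ = M := by
      ext i j
      show M j i = M i j
      exact herm_apply hM.1 i j
    show (c • M)ᴴ = c • M
    rw [Matrix.conjTranspose_smul]
    simp only [star_trivial]
    rw [show Mᴴ = Mᵀ from Matrix.ext fun i j => star_trivial _, ht]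
  · simp only [Matrix.smul_mulVec, dotProduct_smul, smul_eq_mul]
    exact mul_nonneg hc (by simpa using hM.dotProduct_mulVec_nonneg x)

lemma sum_two (hn : 2 ≤ n) (g : Fin n → ℝ)
    (hg : ∀ k : Fin n, (k : ℕ) ≠ 0 → (k : ℕ) ≠ 1 → g k = 0) :
    ∑ k, g k = g ⟨0, by omega⟩ + g ⟨1, by omega⟩ := by
  have hne : (⟨0, by omega⟩ : Fin n) ≠ ⟨1, by omega⟩ := by
    simp [Fin.ext_iff]
  rw [← Finset.sum_pair hne]
  symm
  refine Finset.sum_subset (Finset.subset_univ _) ?_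
  intro k _ hk
  simp only [Finset.mem_insert, Finset.mem_singleton] at hk
  push_neg at hk
  refine hg k ?_ ?_
  · intro h; exact hk.1 (by simp [Fin.ext_iff, h])
  · intro h; exact hk.2 (by simp [Fin.ext_iff, h])

lemma trace_mul_Amat (hn : 0 < n) (X : Matrix (Fin n) (Fin n) ℝ) :
    (X * Amat n).trace = X ⟨0, hn⟩ ⟨0, hn⟩ := by
  rw [Matrix.trace]
  rw [Finset.sum_eq_single (⟨0, hn⟩ : Fin n)]
  · simp [Matrix.diag, Amat, Matrix.mul_diagonal]
  · intro b _ hb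
    have hb' : (b : ℕ) ≠ 0 := fun h => hb (by simp [Fin.ext_iff, h])
    simp [Matrix.diag, Amat, Matrix.mul_diagonal, hb']
  · intro h; exact absurd (Finset.mem_univ _) h

def wvec (n : ℕ) (θ : ℝ) : Fin n → ℝ := fun j =>
  if (j : ℕ) = 0 then Real.cos θ else if (j : ℕ) = 1 then Real.sin θ else 0

lemma Zmat_eq (θ : ℝ) : Zmat n θ = fun i j => wvec n θ i * wvec n θ j := by
  funext i j
  simp only [Zmat, wvec]
  by_cases hi0 : (i : ℕ) = 0 <;> by_cases hj0 : (j : ℕ) = 0 <;>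
    by_cases hi1 : (i : ℕ) = 1 <;> by_cases hj1 : (j : ℕ) = 1 <;>
    simp only [hi0, hj0, hi1, hj1, if_true, if_false, true_and, false_and, and_true,
      and_false, if_neg, one_ne_zero] <;> first | ring | omega

lemma Zmat_psd (θ : ℝ) : (Zmat n θ).PosSemidef := by
  rw [Zmat_eq]
  refine Matrix.PosSemidef.of_dotProduct_mulVec_nonneg ?_ ?_
  · show _ = _
    funext i j
    show star _ = _
    rw [star_trivial]
    exact mul_comm _ _
  · intro x
    have hx : star x ⬝ᵥ (fun i j => wvec n θ i * wvec n θ j) *ᵥ x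
        = (∑ a, x a * wvec n θ a) * (∑ b, wvec n θ b * x b) := by
      rw [Finset.sum_mul_sum]
      simp only [star_trivial, dotProduct, Matrix.mulVec, Finset.mul_sum]
      refine Finset.sum_congr rfl fun a _ => Finset.sum_congr rfl fun b _ => ?_
      show x a * ((fun i j => wvec n θ i * wvec n θ j) a b * x b) = _
      ring
    rw [hx]
    have : (∑ a, x a * wvec n θ a) = (∑ b, wvec n θ b * x b) :=
      Finset.sum_congr rfl fun a _ => mul_comm _ _
    rw [this]
    exact mul_self_nonneg _

lemma wvec_sumsq (hn : 2 ≤ n) (θ : ℝ) : ∑ k, wvec n θ k * wvec n θ k = 1 := by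
  rw [sum_two hn _ (fun k h0 h1 => by simp [wvec, h0, h1])]
  simp only [wvec]
  norm_num
  nlinarith [Real.cos_sq_add_sin_sq θ]

lemma Zmat_mul_self (hn : 2 ≤ n) (θ : ℝ) : Zmat n θ * Zmat n θ = Zmat n θ := by
  rw [Zmat_eq]
  ext i j
  show (∑ b, (wvec n θ i * wvec n θ b) * (wvec n θ b * wvec n θ j)) = wvec n θ i * wvec n θ j
  have : ∀ b, (wvec n θ i * wvec n θ b) * (wvec n θ b * wvec n θ j)
      = (wvec n θ i * wvec n θ j) * (wvec n θ b * wvec n θ b) := fun b => by ring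
  rw [Finset.sum_congr rfl fun b _ => this b, ← Finset.mul_sum, wvec_sumsq hn, mul_one]

/-- Let `n ≥ 2` and let `f` be the map on the cone of positive semidefinite symmetric
real `n × n` matrices given by `f(X) = (tr(XA)·X)^{1/2}` (the positive semidefinite
square root), where `A = diag(1, 0, …, 0)`. Then `f` is a continuous order-preserving
homogeneous map of the cone into itself, its cone spectrum equals `[0,1]`
(in particular `f(Z_θ) = |cos θ| Z_θ` for `0 ≤ θ ≤ 2π`), and no `ρ > 1` is an
eigenvalue of `f` on the nonzero positive semidefinite matrices. -/
theorem posSemidef_sqrt_spectrum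
    (n : ℕ) (hn : 2 ≤ n)
    (f : Matrix (Fin n) (Fin n) ℝ → Matrix (Fin n) (Fin n) ℝ)
    (hf : ∀ X : Matrix (Fin n) (Fin n) ℝ,
      ∀ h : (((X * Amat n).trace) • X).PosSemidef, f X = h.sqrt) :
    Set.MapsTo f {X | X.PosSemidef} {X | X.PosSemidef} ∧
      ContinuousOn f {X | X.PosSemidef} ∧
      (∀ a : ℝ, 0 ≤ a → ∀ X : Matrix (Fin n) (Fin n) ℝ, X.PosSemidef →
        f (a • X) = a • f X) ∧
      (∀ X Y : Matrix (Fin n) (Fin n) ℝ, X.PosSemidef → Y.PosSemidef →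
        (Y - X).PosSemidef → (f Y - f X).PosSemidef) ∧
      {ρ : ℝ | 0 ≤ ρ ∧ ∃ X : Matrix (Fin n) (Fin n) ℝ,
        X.PosSemidef ∧ X ≠ 0 ∧ f X = ρ • X} = Set.Icc 0 1 ∧
      (∀ θ : ℝ, 0 ≤ θ → θ ≤ 2 * Real.pi →
        f (Zmat n θ) = |Real.cos θ| • Zmat n θ) ∧
      (∀ ρ : ℝ, 1 < ρ → ¬∃ X : Matrix (Fin n) (Fin n) ℝ,
        X.PosSemidef ∧ X ≠ 0 ∧ f X = ρ • X) := by
  have hn0 : 0 < n := by omega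
  set i0 : Fin n := ⟨0, hn0⟩ with hi0def
  have htr : ∀ X : Matrix (Fin n) (Fin n) ℝ, (X * Amat n).trace = X i0 i0 :=
    fun X => trace_mul_Amat hn0 X
  have htr0 : ∀ X : Matrix (Fin n) (Fin n) ℝ, X.PosSemidef → 0 ≤ (X * Amat n).trace :=
    fun X hX => (htr X) ▸ psd_diag_nonneg hX i0
  have hpsdT : ∀ X : Matrix (Fin n) (Fin n) ℝ, X.PosSemidef →
      (((X * Amat n).trace) • X).PosSemidef := fun X hX => psd_smul hX (htr0 X hX)
  -- the eigenvector computation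
  have hZ : ∀ θ : ℝ, f (Zmat n θ) = |Real.cos θ| • Zmat n θ := by
    intro θ
    have hZpsd := Zmat_psd (n := n) θ
    have h1 : (((Zmat n θ * Amat n).trace) • Zmat n θ).PosSemidef := hpsdT _ hZpsd
    have htrZ : (Zmat n θ * Amat n).trace = Real.cos θ ^ 2 := by
      rw [htr]; simp [Zmat, hi0def]
    have h2 : ((Real.cos θ ^ 2) • Zmat n θ).PosSemidef := psd_smul hZpsd (sq_nonneg _)
    have h3 : (|Real.cos θ| • Zmat n θ).PosSemidef := psd_smul hZpsd (abs_nonneg _)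
    have h4 : (|Real.cos θ| • Zmat n θ) ^ 2 = (Real.cos θ ^ 2) • Zmat n θ := by
      rw [smul_pow, sq_abs, show Zmat n θ ^ 2 = Zmat n θ * Zmat n θ from pow_two _,
        Zmat_mul_self hn]
    rw [hf _ h1, sqrt_congr (by rw [htrZ]) h1 h2, ← h3.eq_sqrt_of_sq_eq h2 h4]
  -- no eigenvalue bigger than one
  have hbig : ∀ ρ : ℝ, 1 < ρ → ¬∃ X : Matrix (Fin n) (Fin n) ℝ,
      X.PosSemidef ∧ X ≠ 0 ∧ f X = ρ • X := by
    intro ρ hρ h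
    obtain ⟨X, hX, hX0, hfX⟩ := h
    have h1 := hpsdT X hX
    have e : h1.sqrt = ρ • X := (hf X h1).symm.trans hfX
    have hms := h1.sqrt_mul_self
    rw [e] at hms
    by_cases hc : X i0 i0 = 0
    · have hz : (((X * Amat n).trace) • X) = (0 : Matrix (Fin n) (Fin n) ℝ) := by
        rw [htr, hc, zero_smul]
      have h0 : (0 : Matrix (Fin n) (Fin n) ℝ) = h1.sqrt :=
        Matrix.PosSemidef.zero.eq_sqrt_of_sq_eq h1 (by rw [hz]; simp [pow_two])
      rw [e] at h0
      rcases smul_eq_zero.mp h0.symm with h | h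
      · exact absurd h (by positivity)
      · exact hX0 h
    · have hcpos : 0 < X i0 i0 := lt_of_le_of_ne (psd_diag_nonneg hX i0) (Ne.symm hc)
      have h00 := congrFun (congrFun hms i0) i0
      have hl : ((ρ • X) * (ρ • X)) i0 i0 = ρ ^ 2 * ∑ b, X i0 b ^ 2 := by
        rw [Matrix.mul_apply, Finset.mul_sum]
        refine Finset.sum_congr rfl fun b _ => ?_
        show (ρ • X) i0 b * (ρ • X) b i0 = _
        simp only [Matrix.smul_apply, smul_eq_mul]
        rw [herm_apply hX.1 i0 b]
        ring
      have hr : (((X * Amat n).trace) • X) i0 i0 = X i0 i0 * X i0 i0 := by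
        show (X * Amat n).trace • X i0 i0 = _
        rw [htr, smul_eq_mul]
      rw [hl, hr] at h00
      have hge : X i0 i0 ^ 2 ≤ ∑ b, X i0 b ^ 2 :=
        Finset.single_le_sum (f := fun b => X i0 b ^ 2) (fun b _ => sq_nonneg _)
          (Finset.mem_univ i0)
      have h7 : ρ ^ 2 * (X i0 i0 ^ 2) ≤ ρ ^ 2 * ∑ b, X i0 b ^ 2 :=
        mul_le_mul_of_nonneg_left hge (by positivity)
      rw [h00] at h7
      have hgt : (1 : ℝ) < ρ ^ 2 := by nlinarith
      nlinarith [mul_pos (mul_pos hcpos hcpos) (sub_pos.mpr hgt)]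
  refine ⟨?_, ?_, ?_, ?_, ?_, fun θ _ _ => hZ θ, hbig⟩
  · -- maps to
    intro X hX
    show (f X).PosSemidef
    rw [hf X (hpsdT X hX)]
    exact (hpsdT X hX).posSemidef_sqrt
  · -- continuity
    haveI : FirstCountableTopology (Matrix (Fin n) (Fin n) ℝ) :=
      inferInstanceAs (FirstCountableTopology (Fin n → Fin n → ℝ))
    intro X hX
    have hXp : X.PosSemidef := hX
    have hL : (((X * Amat n).trace) • X).PosSemidef := hpsdT X hXp
    show Tendsto f (𝓝[{M : Matrix (Fin n) (Fin n) ℝ | M.PosSemidef}] X) (𝓝 (f X))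
    rw [Filter.tendsto_iff_seq_tendsto]
    intro u hu
    have huP : ∀ᶠ k in atTop, (u k).PosSemidef := hu self_mem_nhdsWithin
    have huX : Tendsto u atTop (𝓝 X) := hu.mono_right nhdsWithin_le_nhds
    classical
    set v : ℕ → Matrix (Fin n) (Fin n) ℝ := fun k => if (u k).PosSemidef then u k else X
      with hv
    have hvP : ∀ k, (v k).PosSemidef := by
      intro k; rw [hv]; dsimp only; split_ifs with h; exacts [h, hXp]
    have hveq : ∀ᶠ k in atTop, v k = u k := huP.mono fun k hk => by rw [hv]; simp [hk]
    have hvX : Tendsto v atTop (𝓝 X) := huX.congr' (hveq.mono fun k h => h.symm)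
    have hTk : ∀ k, (((v k * Amat n).trace) • v k).PosSemidef := fun k => hpsdT _ (hvP k)
    have hcont : Continuous (fun M : Matrix (Fin n) (Fin n) ℝ => ((M * Amat n).trace) • M) :=
      ((continuous_id.matrix_mul continuous_const).matrix_trace).smul continuous_id
    have hTlim : Tendsto (fun k => ((v k * Amat n).trace) • v k) atTop
        (𝓝 (((X * Amat n).trace) • X)) := (hcont.tendsto X).comp hvX
    have happ := sqrt_tendsto hTk hL hTlim
    rw [hf X hL]
    refine happ.congr' (hveq.mono fun k hk => ?_)
    show ((hTk k).sqrt) = (f ∘ u) k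
    show ((hTk k).sqrt) = f (u k)
    rw [← hk, hf (v k) (hTk k)]
  · -- homogeneity
    intro a ha X hX
    have hX' := hpsdT X hX
    have haX : (a • X).PosSemidef := psd_smul hX ha
    have h1 : (((a • X) * Amat n).trace • (a • X)).PosSemidef := hpsdT _ haX
    have h2 : ((a ^ 2) • (((X * Amat n).trace) • X)).PosSemidef := psd_smul hX' (sq_nonneg a)
    have htra : ((a • X) * Amat n).trace = a * (X * Amat n).trace := by
      rw [Matrix.smul_mul, Matrix.trace_smul, smul_eq_mul]
    rw [hf _ h1, hf X hX']
    rw [sqrt_congr (show (((a • X) * Amat n).trace • (a • X))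
        = (a ^ 2) • (((X * Amat n).trace) • X) by
      rw [htra, smul_smul, smul_smul]; congr 1; ring) h1 h2]
    exact ((psd_smul hX'.posSemidef_sqrt ha).eq_sqrt_of_sq_eq h2
      (by rw [smul_pow, hX'.sq_sqrt])).symm
  · -- order preserving
    intro X Y hX hY hYX
    have h1 := hpsdT X hX
    have h2 := hpsdT Y hY
    rw [hf X h1, hf Y h2]
    have hc : 0 ≤ (X * Amat n).trace := htr0 X hX
    have hd : (X * Amat n).trace ≤ (Y * Amat n).trace := by
      rw [htr, htr]
      have h5 := psd_diag_nonneg hYX i0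
      simp only [Matrix.sub_apply] at h5
      linarith
    have heq : ((Y * Amat n).trace • Y) - ((X * Amat n).trace • X)
        = (X * Amat n).trace • (Y - X) + ((Y * Amat n).trace - (X * Amat n).trace) • Y := by
      rw [smul_sub, sub_smul]; abel
    exact sqrt_mono h1 h2
      (heq ▸ (psd_smul hYX hc).add (psd_smul hY (by linarith)))
  · -- the spectrum
    ext ρ
    simp only [Set.mem_setOf_eq, Set.mem_Icc]
    constructor
    · rintro ⟨hρ0, X, hX, hX0, hfX⟩
      refine ⟨hρ0, ?_⟩
      by_contra h
      push_neg at h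
      exact hbig ρ h ⟨X, hX, hX0, hfX⟩
    · rintro ⟨h0, h1⟩
      refine ⟨h0, Zmat n (Real.arccos ρ), Zmat_psd _, ?_, ?_⟩
      · intro hzero
        have h00 := congrFun (congrFun hzero i0) i0
        have h11 := congrFun (congrFun hzero (⟨1, by omega⟩ : Fin n)) ⟨1, by omega⟩
        simp [Zmat, hi0def] at h00 h11
        nlinarith [Real.sin_sq_add_cos_sq (Real.arccos ρ)]
      · rw [hZ, Real.cos_arccos (by linarith) (by linarith), abs_of_nonneg h0]
end
end
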